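/- arXiv:1805.02756 — 4 statements merged into one kernel-verified Lean document; each statement's English description precedes it below -/
import Mathlib

section
/- Let f : ℝ⁷ → ℂ be a function of compact support. Then Σ over (x₁,x₂,x₃,z₁,z₂,z₃,z₄) ∈ (ℤ∖{0})³ × ℤ_{>0}⁴ satisfying gcd(z₁,z₂) = gcd(z₁,z₃) = gcd(z₂,z₃) = 1 and gcd(x₁, z₂z₃z₄) = gcd(x₂, z₁z₃z₄) = gcd(x₃, z₁z₂z₄) = 1 of f(x₁,z₁,x₂,z₂,x₃,z₃,z₄) equals Σ over e = (e₁,e₂,e₃) ∈ ℤ_{>0}³, ℓ = (ℓ₁₂,ℓ₁₃,ℓ₂₃) ∈ ℤ_{>0}³, d = (d₁₂,d₁₃,d₂₁,d₂₃,d₃₁,d₃₂) ∈ ℤ_{>0}⁶ of μ(e,d,ℓ) · Σ over (x₁,x₂,x₃,z₁,z₂,z₃,z₄) ∈ (ℤ∖{0})³ × ℤ_{>0}⁴ of f(b₁x₁, c₁z₁, b₂x₂, c₂z₂, b₃x₃, c₃z₃, c₄z₄), where all sums have only finitely many nonzero terms. -/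
open scoped BigOperators

namespace Statement10

/-- Index `(e₁, e₂, e₃, ℓ₁₂, ℓ₁₃, ℓ₂₃, d₁₂, d₁₃, d₂₁, d₂₃, d₃₁, d₃₂)` of positive
integers, grouped as `e × ℓ × d`. -/
abbrev Idx := (ℕ+ × ℕ+ × ℕ+) × (ℕ+ × ℕ+ × ℕ+) × (ℕ+ × ℕ+ × ℕ+ × ℕ+ × ℕ+ × ℕ+)

/-- `b₁ = [e₁, d₁₂, d₁₃]`. -/
def B1 : Idx → ℕ := fun ((e₁, _, _), _, (d₁₂, d₁₃, _, _, _, _)) =>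
  Nat.lcm (Nat.lcm e₁ d₁₂) d₁₃
/-- `b₂ = [e₂, d₂₁, d₂₃]`. -/
def B2 : Idx → ℕ := fun ((_, e₂, _), _, (_, _, d₂₁, d₂₃, _, _)) =>
  Nat.lcm (Nat.lcm e₂ d₂₁) d₂₃
/-- `b₃ = [e₃, d₃₁, d₃₂]`. -/
def B3 : Idx → ℕ := fun ((_, _, e₃), _, (_, _, _, _, d₃₁, d₃₂)) =>
  Nat.lcm (Nat.lcm e₃ d₃₁) d₃₂
/-- `c₁ = [d₂₁, d₃₁, ℓ₁₂, ℓ₁₃]`. -/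
def C1 : Idx → ℕ := fun (_, (l₁₂, l₁₃, _), (_, _, d₂₁, _, d₃₁, _)) =>
  Nat.lcm (Nat.lcm (Nat.lcm d₂₁ d₃₁) l₁₂) l₁₃
/-- `c₂ = [d₁₂, d₃₂, ℓ₁₂, ℓ₂₃]`. -/
def C2 : Idx → ℕ := fun (_, (l₁₂, _, l₂₃), (d₁₂, _, _, _, _, d₃₂)) =>
  Nat.lcm (Nat.lcm (Nat.lcm d₁₂ d₃₂) l₁₂) l₂₃
/-- `c₃ = [d₁₃, d₂₃, ℓ₁₃, ℓ₂₃]`. -/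
def C3 : Idx → ℕ := fun (_, (_, l₁₃, l₂₃), (_, d₁₃, _, d₂₃, _, _)) =>
  Nat.lcm (Nat.lcm (Nat.lcm d₁₃ d₂₃) l₁₃) l₂₃
/-- `c₄ = [e₁, e₂, e₃]`. -/
def C4 : Idx → ℕ := fun ((e₁, e₂, e₃), _, _) => Nat.lcm (Nat.lcm e₁ e₂) e₃

/-- `μ(e, d, ℓ) = μ(ℓ₁₂)μ(ℓ₁₃)μ(ℓ₂₃) ∏ᵢ μ(eᵢ) ∏_{i≠j} μ(d_{ij})`. -/
def muIdx : Idx → ℤ := fun ((e₁, e₂, e₃), (l₁₂, l₁₃, l₂₃), (d₁₂, d₁₃, d₂₁, d₂₃, d₃₁, d₃₂)) =>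
  ArithmeticFunction.moebius l₁₂ * ArithmeticFunction.moebius l₁₃ *
    ArithmeticFunction.moebius l₂₃ *
  (ArithmeticFunction.moebius e₁ * ArithmeticFunction.moebius e₂ *
    ArithmeticFunction.moebius e₃) *
  (ArithmeticFunction.moebius d₁₂ * ArithmeticFunction.moebius d₁₃ *
    ArithmeticFunction.moebius d₂₁ * ArithmeticFunction.moebius d₂₃ *
    ArithmeticFunction.moebius d₃₁ * ArithmeticFunction.moebius d₃₂)

/-- Tuples `((x₁,x₂,x₃),(z₁,z₂,z₃,z₄))` with `xᵢ ≠ 0` and `zⱼ > 0`. -/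
def Tset : Set ((ℤ × ℤ × ℤ) × (ℤ × ℤ × ℤ × ℤ)) :=
  {v | v.1.1 ≠ 0 ∧ v.1.2.1 ≠ 0 ∧ v.1.2.2 ≠ 0 ∧
    0 < v.2.1 ∧ 0 < v.2.2.1 ∧ 0 < v.2.2.2.1 ∧ 0 < v.2.2.2.2}

/-- Tuples in `Tset` which moreover satisfy the coprimality conditions. -/
def Sset : Set ((ℤ × ℤ × ℤ) × (ℤ × ℤ × ℤ × ℤ)) :=
  {v | v ∈ Tset ∧
    Int.gcd v.2.1 v.2.2.1 = 1 ∧ Int.gcd v.2.1 v.2.2.2.1 = 1 ∧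
    Int.gcd v.2.2.1 v.2.2.2.1 = 1 ∧
    Int.gcd v.1.1 (v.2.2.1 * v.2.2.2.1 * v.2.2.2.2) = 1 ∧
    Int.gcd v.1.2.1 (v.2.1 * v.2.2.2.1 * v.2.2.2.2) = 1 ∧
    Int.gcd v.1.2.2 (v.2.1 * v.2.2.1 * v.2.2.2.2) = 1}

/-- Evaluation `f(x₁, z₁, x₂, z₂, x₃, z₃, z₄)`. -/
def ev (f : ℝ × ℝ × ℝ × ℝ × ℝ × ℝ × ℝ → ℂ)
    (v : (ℤ × ℤ × ℤ) × (ℤ × ℤ × ℤ × ℤ)) : ℂ :=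
  f ((v.1.1 : ℝ), (v.2.1 : ℝ), (v.1.2.1 : ℝ), (v.2.2.1 : ℝ), (v.1.2.2 : ℝ),
    (v.2.2.2.1 : ℝ), (v.2.2.2.2 : ℝ))

/-- Evaluation `f(b₁x₁, c₁z₁, b₂x₂, c₂z₂, b₃x₃, c₃z₃, c₄z₄)`. -/
def evScaled (f : ℝ × ℝ × ℝ × ℝ × ℝ × ℝ × ℝ → ℂ) (w : Idx)
    (v : (ℤ × ℤ × ℤ) × (ℤ × ℤ × ℤ × ℤ)) : ℂ :=
  f ((B1 w : ℝ) * (v.1.1 : ℝ), (C1 w : ℝ) * (v.2.1 : ℝ),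
    (B2 w : ℝ) * (v.1.2.1 : ℝ), (C2 w : ℝ) * (v.2.2.1 : ℝ),
    (B3 w : ℝ) * (v.1.2.2 : ℝ), (C3 w : ℝ) * (v.2.2.2.1 : ℝ),
    (C4 w : ℝ) * (v.2.2.2.2 : ℝ))


/-! ### Auxiliary machinery -/

open Finset in
theorem moeb_div_sum (n : ℕ) :
    ∑ d ∈ n.divisors, (ArithmeticFunction.moebius d : ℤ) = if n = 1 then 1 else 0 := by
  have h2 : (ArithmeticFunction.moebius * ArithmeticFunction.zeta : ArithmeticFunction ℤ) n
      = (1 : ArithmeticFunction ℤ) n := by rw [ArithmeticFunction.moebius_mul_coe_zeta]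
  rw [ArithmeticFunction.coe_mul_zeta_apply] at h2
  rw [h2, ArithmeticFunction.one_apply]

abbrev VV := (ℤ × ℤ × ℤ) × (ℤ × ℤ × ℤ × ℤ)

/-- The divisibility condition defining the fibers. -/
def DvdC (w : Idx) (u : VV) : Prop :=
  ((B1 w : ℤ) ∣ u.1.1) ∧ ((B2 w : ℤ) ∣ u.1.2.1) ∧ ((B3 w : ℤ) ∣ u.1.2.2) ∧
  ((C1 w : ℤ) ∣ u.2.1) ∧ ((C2 w : ℤ) ∣ u.2.2.1) ∧ ((C3 w : ℤ) ∣ u.2.2.2.1) ∧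
  ((C4 w : ℤ) ∣ u.2.2.2.2)

def Ebox (K : ℕ+) : Finset ℕ+ := Finset.Icc 1 K

def Wbox (K : ℕ+) : Finset Idx :=
  (Ebox K ×ˢ Ebox K ×ˢ Ebox K) ×ˢ (Ebox K ×ˢ Ebox K ×ˢ Ebox K) ×ˢ
    (Ebox K ×ˢ Ebox K ×ˢ Ebox K ×ˢ Ebox K ×ˢ Ebox K ×ˢ Ebox K)

noncomputable def IZbox (K : ℕ) : Finset ℤ := Finset.Icc (-(K : ℤ)) K

noncomputable def Vbox (K : ℕ) : Finset VV :=
  (IZbox K ×ˢ IZbox K ×ˢ IZbox K) ×ˢ (IZbox K ×ˢ IZbox K ×ˢ IZbox K ×ˢ IZbox K)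

def phi (w : Idx) (v : VV) : VV :=
  (((B1 w : ℤ) * v.1.1, (B2 w : ℤ) * v.1.2.1, (B3 w : ℤ) * v.1.2.2),
   ((C1 w : ℤ) * v.2.1, (C2 w : ℤ) * v.2.2.1, (C3 w : ℤ) * v.2.2.2.1,
    (C4 w : ℤ) * v.2.2.2.2))

def psi (w : Idx) (u : VV) : VV :=
  ((u.1.1 / (B1 w : ℤ), u.1.2.1 / (B2 w : ℤ), u.1.2.2 / (B3 w : ℤ)),
   (u.2.1 / (C1 w : ℤ), u.2.2.1 / (C2 w : ℤ), u.2.2.2.1 / (C3 w : ℤ),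
    u.2.2.2.2 / (C4 w : ℤ)))

theorem evScaled_eq (f : ℝ × ℝ × ℝ × ℝ × ℝ × ℝ × ℝ → ℂ) (w : Idx) (v : VV) :
    evScaled f w v = ev f (phi w v) := by
  simp only [evScaled, ev, phi]
  push_cast
  rfl

theorem natAbs_cast_mul (n : ℕ) (x : ℤ) : ((n : ℤ) * x).natAbs = n * x.natAbs := by
  rw [Int.natAbs_mul, Int.natAbs_natCast]

theorem mem_IZbox {K : ℕ} {m : ℤ} : m ∈ IZbox K ↔ m.natAbs ≤ K := by
  simp only [IZbox, Finset.mem_Icc]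
  omega

theorem mem_Vbox {K : ℕ} {v : VV} : v ∈ Vbox K ↔
    ((v.1.1.natAbs ≤ K ∧ v.1.2.1.natAbs ≤ K ∧ v.1.2.2.natAbs ≤ K) ∧
     (v.2.1.natAbs ≤ K ∧ v.2.2.1.natAbs ≤ K ∧ v.2.2.2.1.natAbs ≤ K ∧
      v.2.2.2.2.natAbs ≤ K)) := by
  simp only [Vbox, Finset.mem_product, mem_IZbox]

theorem mem_Ebox {M : ℕ+} {t : ℕ+} : t ∈ Ebox M ↔ (t : ℕ) ≤ (M : ℕ) := by
  simp only [Ebox, Finset.mem_Icc, ← PNat.coe_le_coe]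
  constructor
  · exact fun h => h.2
  · exact fun h => ⟨PNat.one_le t, h⟩

theorem mem_Wbox {M : ℕ+} {w : Idx} : w ∈ Wbox M ↔
    (((w.1.1 : ℕ) ≤ (M : ℕ) ∧ (w.1.2.1 : ℕ) ≤ (M : ℕ) ∧ (w.1.2.2 : ℕ) ≤ (M : ℕ)) ∧
     ((w.2.1.1 : ℕ) ≤ (M : ℕ) ∧ (w.2.1.2.1 : ℕ) ≤ (M : ℕ) ∧ (w.2.1.2.2 : ℕ) ≤ (M : ℕ)) ∧
     ((w.2.2.1 : ℕ) ≤ (M : ℕ) ∧ (w.2.2.2.1 : ℕ) ≤ (M : ℕ) ∧ (w.2.2.2.2.1 : ℕ) ≤ (M : ℕ) ∧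
      (w.2.2.2.2.2.1 : ℕ) ≤ (M : ℕ) ∧ (w.2.2.2.2.2.2.1 : ℕ) ≤ (M : ℕ) ∧
      (w.2.2.2.2.2.2.2 : ℕ) ≤ (M : ℕ))) := by
  simp only [Wbox, Finset.mem_product, mem_Ebox]

theorem lcm_pos' {a b : ℕ} (ha : 0 < a) (hb : 0 < b) : 0 < Nat.lcm a b :=
  Nat.pos_of_ne_zero (Nat.lcm_ne_zero ha.ne' hb.ne')

theorem BCpos (w : Idx) : 0 < B1 w ∧ 0 < B2 w ∧ 0 < B3 w ∧ 0 < C1 w ∧ 0 < C2 w ∧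
    0 < C3 w ∧ 0 < C4 w := by
  obtain ⟨⟨e1, e2, e3⟩, ⟨l12, l13, l23⟩, ⟨d12, d13, d21, d23, d31, d32⟩⟩ := w
  exact ⟨lcm_pos' (lcm_pos' e1.2 d12.2) d13.2, lcm_pos' (lcm_pos' e2.2 d21.2) d23.2,
    lcm_pos' (lcm_pos' e3.2 d31.2) d32.2,
    lcm_pos' (lcm_pos' (lcm_pos' d21.2 d31.2) l12.2) l13.2,
    lcm_pos' (lcm_pos' (lcm_pos' d12.2 d32.2) l12.2) l23.2,
    lcm_pos' (lcm_pos' (lcm_pos' d13.2 d23.2) l13.2) l23.2,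
    lcm_pos' (lcm_pos' e1.2 e2.2) e3.2⟩

theorem lcm3_dvd (a b c : ℕ) : Nat.lcm (Nat.lcm a b) c ∣ a * b * c :=
  Nat.lcm_dvd (Nat.lcm_dvd ((dvd_mul_right a b).trans (dvd_mul_right _ c))
    ((dvd_mul_left b a).trans (dvd_mul_right _ c))) (dvd_mul_left c _)

theorem lcm4_dvd (a b c d : ℕ) :
    Nat.lcm (Nat.lcm (Nat.lcm a b) c) d ∣ a * b * c * d :=
  Nat.lcm_dvd ((lcm3_dvd a b c).trans (dvd_mul_right _ d)) (dvd_mul_left d _)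

theorem mem_Wbox_of_le {M : ℕ+} {w : Idx} (h1 : B1 w ≤ (M : ℕ)) (h2 : B2 w ≤ (M : ℕ))
    (h3 : B3 w ≤ (M : ℕ)) (h4 : C1 w ≤ (M : ℕ)) (h5 : C2 w ≤ (M : ℕ))
    (h6 : C3 w ≤ (M : ℕ)) (h7 : C4 w ≤ (M : ℕ)) : w ∈ Wbox M := by
  have hp := BCpos w
  obtain ⟨⟨e1, e2, e3⟩, ⟨l12, l13, l23⟩, ⟨d12, d13, d21, d23, d31, d32⟩⟩ := w
  simp only [B1, B2, B3, C1, C2, C3, C4] at h1 h2 h3 h4 h5 h6 h7 hp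
  refine mem_Wbox.mpr ⟨⟨?_, ?_, ?_⟩, ⟨?_, ?_, ?_⟩, ⟨?_, ?_, ?_, ?_, ?_, ?_⟩⟩
  · exact le_trans (Nat.le_of_dvd hp.1 ((Nat.dvd_lcm_left _ _).trans (Nat.dvd_lcm_left _ _))) h1
  · exact le_trans (Nat.le_of_dvd hp.2.1 ((Nat.dvd_lcm_left _ _).trans (Nat.dvd_lcm_left _ _))) h2
  · exact le_trans (Nat.le_of_dvd hp.2.2.1 ((Nat.dvd_lcm_left _ _).trans (Nat.dvd_lcm_left _ _))) h3
  · exact le_trans (Nat.le_of_dvd hp.2.2.2.1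
      ((Nat.dvd_lcm_right _ _).trans (Nat.dvd_lcm_left _ _))) h4
  · exact le_trans (Nat.le_of_dvd hp.2.2.2.1 (Nat.dvd_lcm_right _ _)) h4
  · exact le_trans (Nat.le_of_dvd hp.2.2.2.2.1 (Nat.dvd_lcm_right _ _)) h5
  · exact le_trans (Nat.le_of_dvd hp.1
      ((Nat.dvd_lcm_right _ _).trans (Nat.dvd_lcm_left _ _))) h1
  · exact le_trans (Nat.le_of_dvd hp.1 (Nat.dvd_lcm_right _ _)) h1
  · exact le_trans (Nat.le_of_dvd hp.2.1
      ((Nat.dvd_lcm_right _ _).trans (Nat.dvd_lcm_left _ _))) h2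
  · exact le_trans (Nat.le_of_dvd hp.2.1 (Nat.dvd_lcm_right _ _)) h2
  · exact le_trans (Nat.le_of_dvd hp.2.2.1
      ((Nat.dvd_lcm_right _ _).trans (Nat.dvd_lcm_left _ _))) h3
  · exact le_trans (Nat.le_of_dvd hp.2.2.1 (Nat.dvd_lcm_right _ _)) h3

theorem BCle {M : ℕ+} {w : Idx} (hw : w ∈ Wbox M) :
    B1 w ≤ (M : ℕ) * M * M ∧ B2 w ≤ (M : ℕ) * M * M ∧ B3 w ≤ (M : ℕ) * M * M ∧
    C1 w ≤ (M : ℕ) * M * M * M ∧ C2 w ≤ (M : ℕ) * M * M * M ∧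
    C3 w ≤ (M : ℕ) * M * M * M ∧ C4 w ≤ (M : ℕ) * M * M := by
  rw [mem_Wbox] at hw
  obtain ⟨⟨he1, he2, he3⟩, ⟨hl12, hl13, hl23⟩, hd12, hd13, hd21, hd23, hd31, hd32⟩ := hw
  have hp := BCpos w
  obtain ⟨⟨e1, e2, e3⟩, ⟨l12, l13, l23⟩, ⟨d12, d13, d21, d23, d31, d32⟩⟩ := w
  simp only [B1, B2, B3, C1, C2, C3, C4] at *
  have h3 : ∀ a b c : ℕ+, (a : ℕ) ≤ M → (b : ℕ) ≤ M → (c : ℕ) ≤ M →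
      Nat.lcm (Nat.lcm (a : ℕ) b) c ≤ (M : ℕ) * M * M := by
    intro a b c ha hb hc
    exact le_trans (Nat.le_of_dvd (by positivity) (lcm3_dvd _ _ _))
      (Nat.mul_le_mul (Nat.mul_le_mul ha hb) hc)
  have h4 : ∀ a b c d : ℕ+, (a : ℕ) ≤ M → (b : ℕ) ≤ M → (c : ℕ) ≤ M → (d : ℕ) ≤ M →
      Nat.lcm (Nat.lcm (Nat.lcm (a : ℕ) b) c) d ≤ (M : ℕ) * M * M * M := by
    intro a b c d ha hb hc hd
    exact le_trans (Nat.le_of_dvd (by positivity) (lcm4_dvd _ _ _ _))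
      (Nat.mul_le_mul (Nat.mul_le_mul (Nat.mul_le_mul ha hb) hc) hd)
  exact ⟨h3 _ _ _ he1 hd12 hd13, h3 _ _ _ he2 hd21 hd23, h3 _ _ _ he3 hd31 hd32,
    h4 _ _ _ _ hd21 hd31 hl12 hl13, h4 _ _ _ _ hd12 hd32 hl12 hl23,
    h4 _ _ _ _ hd13 hd23 hl13 hl23, h3 _ _ _ he1 he2 he3⟩

theorem pos_of_cast_mul_pos {n : ℕ} {q : ℤ} (h : 0 < (n : ℤ) * q) : 0 < q := by
  rcases le_or_gt q 0 with hq | hq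
  · exfalso
    have : (n : ℤ) * q ≤ 0 := mul_nonpos_of_nonneg_of_nonpos (Int.natCast_nonneg n) hq
    omega
  · exact hq

theorem phi_psi {w : Idx} {u : VV} (h : DvdC w u) : phi w (psi w u) = u := by
  obtain ⟨h1, h2, h3, h4, h5, h6, h7⟩ := h
  simp only [phi, psi]
  exact Prod.ext_iff.mpr ⟨Prod.ext_iff.mpr ⟨Int.mul_ediv_cancel' h1,
    Prod.ext_iff.mpr ⟨Int.mul_ediv_cancel' h2, Int.mul_ediv_cancel' h3⟩⟩,
    Prod.ext_iff.mpr ⟨Int.mul_ediv_cancel' h4, Prod.ext_iff.mpr ⟨Int.mul_ediv_cancel' h5,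
      Prod.ext_iff.mpr ⟨Int.mul_ediv_cancel' h6, Int.mul_ediv_cancel' h7⟩⟩⟩⟩

theorem psi_phi {w : Idx} {v : VV} : psi w (phi w v) = v := by
  have hp := BCpos w
  have n1 : (B1 w : ℤ) ≠ 0 := Int.natCast_ne_zero.mpr hp.1.ne'
  have n2 : (B2 w : ℤ) ≠ 0 := Int.natCast_ne_zero.mpr hp.2.1.ne'
  have n3 : (B3 w : ℤ) ≠ 0 := Int.natCast_ne_zero.mpr hp.2.2.1.ne'
  have n4 : (C1 w : ℤ) ≠ 0 := Int.natCast_ne_zero.mpr hp.2.2.2.1.ne'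
  have n5 : (C2 w : ℤ) ≠ 0 := Int.natCast_ne_zero.mpr hp.2.2.2.2.1.ne'
  have n6 : (C3 w : ℤ) ≠ 0 := Int.natCast_ne_zero.mpr hp.2.2.2.2.2.1.ne'
  have n7 : (C4 w : ℤ) ≠ 0 := Int.natCast_ne_zero.mpr hp.2.2.2.2.2.2.ne'
  simp only [phi, psi]
  exact Prod.ext_iff.mpr ⟨Prod.ext_iff.mpr ⟨Int.mul_ediv_cancel_left _ n1,
    Prod.ext_iff.mpr ⟨Int.mul_ediv_cancel_left _ n2, Int.mul_ediv_cancel_left _ n3⟩⟩,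
    Prod.ext_iff.mpr ⟨Int.mul_ediv_cancel_left _ n4,
      Prod.ext_iff.mpr ⟨Int.mul_ediv_cancel_left _ n5,
        Prod.ext_iff.mpr ⟨Int.mul_ediv_cancel_left _ n6, Int.mul_ediv_cancel_left _ n7⟩⟩⟩⟩

open Finset

theorem sumE (K : ℕ+) (n : ℕ) (hn : 0 < n) (hnK : n ≤ (K : ℕ)) :
    ∑ t ∈ Ebox K, (if (t : ℕ) ∣ n then (ArithmeticFunction.moebius (t : ℕ) : ℤ) else 0)
      = if n = 1 then 1 else 0 := by
  classical
  rw [Ebox, ← Finset.sum_filter, ← moeb_div_sum n]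
  refine Finset.sum_bij' (fun t _ => (t : ℕ)) (fun m hm => ⟨m, Nat.pos_of_mem_divisors hm⟩)
    ?_ ?_ ?_ ?_ ?_
  · intro t ht
    rw [Finset.mem_filter] at ht
    exact Nat.mem_divisors.2 ⟨ht.2, hn.ne'⟩
  · intro m hm
    rw [Nat.mem_divisors] at hm
    refine Finset.mem_filter.mpr (And.imp_left Finset.mem_Icc.mpr ?_)
    refine ⟨⟨PNat.one_le _, ?_⟩, hm.1⟩
    show (⟨m, _⟩ : ℕ+) ≤ K
    refine (PNat.coe_le_coe ⟨m, _⟩ K).mp ?_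
    exact le_trans (Nat.le_of_dvd hn hm.1) hnK
  · intro t ht; rfl
  · intro m hm; rfl
  · intro t ht; rfl

theorem step {α β : Type*} (A : Finset α) (B : Finset β) (F : α → ℤ) (G : β → ℤ) :
    ∑ x ∈ A ×ˢ B, F x.1 * G x.2 = (∑ a ∈ A, F a) * (∑ b ∈ B, G b) := by
  rw [Finset.sum_mul_sum, Finset.sum_product]

theorem sum3 {α β γ : Type*} (A : Finset α) (B : Finset β) (C : Finset γ)
    (g1 : α → ℤ) (g2 : β → ℤ) (g3 : γ → ℤ) :
    ∑ w ∈ A ×ˢ B ×ˢ C, g1 w.1 * (g2 w.2.1 * g3 w.2.2)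
      = (∑ t ∈ A, g1 t) * ((∑ t ∈ B, g2 t) * (∑ t ∈ C, g3 t)) := by
  rw [← step B C g2 g3]
  exact step A (B ×ˢ C) g1 (fun y => g2 y.1 * g3 y.2)

theorem sum6 (A : Finset ℕ+) (g1 g2 g3 g4 g5 g6 : ℕ+ → ℤ) :
    ∑ w ∈ A ×ˢ A ×ˢ A ×ˢ A ×ˢ A ×ˢ A,
      g1 w.1 * (g2 w.2.1 * (g3 w.2.2.1 * (g4 w.2.2.2.1 * (g5 w.2.2.2.2.1 * g6 w.2.2.2.2.2))))
      = (∑ t ∈ A, g1 t) * ((∑ t ∈ A, g2 t) * ((∑ t ∈ A, g3 t) * ((∑ t ∈ A, g4 t) *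
        ((∑ t ∈ A, g5 t) * (∑ t ∈ A, g6 t))))) := by
  have h56 : ∑ w ∈ A ×ˢ A, g5 w.1 * g6 w.2 = (∑ t ∈ A, g5 t) * (∑ t ∈ A, g6 t) :=
    step A A g5 g6
  have h456 : ∑ w ∈ A ×ˢ A ×ˢ A, g4 w.1 * (g5 w.2.1 * g6 w.2.2)
      = (∑ t ∈ A, g4 t) * ((∑ t ∈ A, g5 t) * (∑ t ∈ A, g6 t)) := by
    rw [← h56]; exact step A (A ×ˢ A) g4 (fun y => g5 y.1 * g6 y.2)
  have h3456 : ∑ w ∈ A ×ˢ A ×ˢ A ×ˢ A, g3 w.1 * (g4 w.2.1 * (g5 w.2.2.1 * g6 w.2.2.2))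
      = (∑ t ∈ A, g3 t) * ((∑ t ∈ A, g4 t) * ((∑ t ∈ A, g5 t) * (∑ t ∈ A, g6 t))) := by
    rw [← h456]; exact step A (A ×ˢ A ×ˢ A) g3 (fun y => g4 y.1 * (g5 y.2.1 * g6 y.2.2))
  have h23456 : ∑ w ∈ A ×ˢ A ×ˢ A ×ˢ A ×ˢ A,
      g2 w.1 * (g3 w.2.1 * (g4 w.2.2.1 * (g5 w.2.2.2.1 * g6 w.2.2.2.2)))
      = (∑ t ∈ A, g2 t) * ((∑ t ∈ A, g3 t) * ((∑ t ∈ A, g4 t) *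
        ((∑ t ∈ A, g5 t) * (∑ t ∈ A, g6 t)))) := by
    rw [← h3456]
    exact step A (A ×ˢ A ×ˢ A ×ˢ A) g2 (fun y => g3 y.1 * (g4 y.2.1 * (g5 y.2.2.1 * g6 y.2.2.2)))
  rw [← h23456]
  exact step A (A ×ˢ A ×ˢ A ×ˢ A ×ˢ A) g1
    (fun y => g2 y.1 * (g3 y.2.1 * (g4 y.2.2.1 * (g5 y.2.2.2.1 * g6 y.2.2.2.2))))

set_option maxHeartbeats 1000000 in
open Classical in
theorem keySum (K : ℕ+) (u : VV)
    (hx1 : u.1.1 ≠ 0) (hx2 : u.1.2.1 ≠ 0) (hx3 : u.1.2.2 ≠ 0)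
    (hz1 : 0 < u.2.1) (hz2 : 0 < u.2.2.1) (hz3 : 0 < u.2.2.2.1) (hz4 : 0 < u.2.2.2.2)
    (hb1 : u.1.1.natAbs ≤ (K : ℕ)) (hb2 : u.1.2.1.natAbs ≤ (K : ℕ))
    (hb3 : u.1.2.2.natAbs ≤ (K : ℕ)) (hb4 : u.2.1.natAbs ≤ (K : ℕ))
    (hb5 : u.2.2.1.natAbs ≤ (K : ℕ)) (hb6 : u.2.2.2.1.natAbs ≤ (K : ℕ))
    (hb7 : u.2.2.2.2.natAbs ≤ (K : ℕ)) :
    ∑ w ∈ (Wbox K).filter (fun w => DvdC w u), muIdx w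
      = if (Int.gcd u.2.1 u.2.2.1 = 1 ∧ Int.gcd u.2.1 u.2.2.2.1 = 1 ∧
          Int.gcd u.2.2.1 u.2.2.2.1 = 1 ∧
          Int.gcd u.1.1 (u.2.2.1 * u.2.2.2.1 * u.2.2.2.2) = 1 ∧
          Int.gcd u.1.2.1 (u.2.1 * u.2.2.2.1 * u.2.2.2.2) = 1 ∧
          Int.gcd u.1.2.2 (u.2.1 * u.2.2.1 * u.2.2.2.2) = 1) then 1 else 0 := by
  obtain ⟨⟨X1, X2, X3⟩, Z1, Z2, Z3, Z4⟩ := u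
  simp only at hx1 hx2 hx3 hz1 hz2 hz3 hz4 hb1 hb2 hb3 hb4 hb5 hb6 hb7 ⊢
  have ha1 : 0 < X1.natAbs := Int.natAbs_pos.mpr hx1
  have ha2 : 0 < X2.natAbs := Int.natAbs_pos.mpr hx2
  have ha3 : 0 < X3.natAbs := Int.natAbs_pos.mpr hx3
  have hv1 : 0 < Z1.natAbs := Int.natAbs_pos.mpr hz1.ne'
  have hv2 : 0 < Z2.natAbs := Int.natAbs_pos.mpr hz2.ne'
  have hv3 : 0 < Z3.natAbs := Int.natAbs_pos.mpr hz3.ne'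
  have hv4 : 0 < Z4.natAbs := Int.natAbs_pos.mpr hz4.ne'
  have key_iff : ∀ w : Idx, DvdC w ((X1, X2, X3), (Z1, Z2, Z3, Z4)) ↔
      (((w.1.1 : ℕ) ∣ Nat.gcd X1.natAbs Z4.natAbs ∧
        ((w.1.2.1 : ℕ) ∣ Nat.gcd X2.natAbs Z4.natAbs ∧
         (w.1.2.2 : ℕ) ∣ Nat.gcd X3.natAbs Z4.natAbs)) ∧
       (((w.2.1.1 : ℕ) ∣ Nat.gcd Z1.natAbs Z2.natAbs ∧
         ((w.2.1.2.1 : ℕ) ∣ Nat.gcd Z1.natAbs Z3.natAbs ∧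
          (w.2.1.2.2 : ℕ) ∣ Nat.gcd Z2.natAbs Z3.natAbs)) ∧
        ((w.2.2.1 : ℕ) ∣ Nat.gcd X1.natAbs Z2.natAbs ∧
         ((w.2.2.2.1 : ℕ) ∣ Nat.gcd X1.natAbs Z3.natAbs ∧
          ((w.2.2.2.2.1 : ℕ) ∣ Nat.gcd X2.natAbs Z1.natAbs ∧
           ((w.2.2.2.2.2.1 : ℕ) ∣ Nat.gcd X2.natAbs Z3.natAbs ∧
            ((w.2.2.2.2.2.2.1 : ℕ) ∣ Nat.gcd X3.natAbs Z1.natAbs ∧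
             (w.2.2.2.2.2.2.2 : ℕ) ∣ Nat.gcd X3.natAbs Z2.natAbs))))))) := by
    rintro ⟨⟨e1, e2, e3⟩, ⟨l12, l13, l23⟩, ⟨d12, d13, d21, d23, d31, d32⟩⟩
    simp only [DvdC, B1, B2, B3, C1, C2, C3, C4, Int.natCast_dvd, Nat.lcm_dvd_iff,
      Nat.dvd_gcd_iff]
    tauto
  have hpoint : ∀ w ∈ Wbox K, (if DvdC w ((X1, X2, X3), (Z1, Z2, Z3, Z4)) then muIdx w else 0) =
      ((if (w.1.1 : ℕ) ∣ Nat.gcd X1.natAbs Z4.natAbs then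
          (ArithmeticFunction.moebius (w.1.1 : ℕ) : ℤ) else 0) *
       ((if (w.1.2.1 : ℕ) ∣ Nat.gcd X2.natAbs Z4.natAbs then
          (ArithmeticFunction.moebius (w.1.2.1 : ℕ) : ℤ) else 0) *
        (if (w.1.2.2 : ℕ) ∣ Nat.gcd X3.natAbs Z4.natAbs then
          (ArithmeticFunction.moebius (w.1.2.2 : ℕ) : ℤ) else 0))) *
      (((if (w.2.1.1 : ℕ) ∣ Nat.gcd Z1.natAbs Z2.natAbs then
          (ArithmeticFunction.moebius (w.2.1.1 : ℕ) : ℤ) else 0) *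
        ((if (w.2.1.2.1 : ℕ) ∣ Nat.gcd Z1.natAbs Z3.natAbs then
          (ArithmeticFunction.moebius (w.2.1.2.1 : ℕ) : ℤ) else 0) *
         (if (w.2.1.2.2 : ℕ) ∣ Nat.gcd Z2.natAbs Z3.natAbs then
          (ArithmeticFunction.moebius (w.2.1.2.2 : ℕ) : ℤ) else 0))) *
       ((if (w.2.2.1 : ℕ) ∣ Nat.gcd X1.natAbs Z2.natAbs then
          (ArithmeticFunction.moebius (w.2.2.1 : ℕ) : ℤ) else 0) *
        ((if (w.2.2.2.1 : ℕ) ∣ Nat.gcd X1.natAbs Z3.natAbs then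
          (ArithmeticFunction.moebius (w.2.2.2.1 : ℕ) : ℤ) else 0) *
         ((if (w.2.2.2.2.1 : ℕ) ∣ Nat.gcd X2.natAbs Z1.natAbs then
          (ArithmeticFunction.moebius (w.2.2.2.2.1 : ℕ) : ℤ) else 0) *
          ((if (w.2.2.2.2.2.1 : ℕ) ∣ Nat.gcd X2.natAbs Z3.natAbs then
          (ArithmeticFunction.moebius (w.2.2.2.2.2.1 : ℕ) : ℤ) else 0) *
           ((if (w.2.2.2.2.2.2.1 : ℕ) ∣ Nat.gcd X3.natAbs Z1.natAbs then
          (ArithmeticFunction.moebius (w.2.2.2.2.2.2.1 : ℕ) : ℤ) else 0) *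
            (if (w.2.2.2.2.2.2.2 : ℕ) ∣ Nat.gcd X3.natAbs Z2.natAbs then
          (ArithmeticFunction.moebius (w.2.2.2.2.2.2.2 : ℕ) : ℤ) else 0))))))) := by
    intro w _
    rw [show ∀ a b c d e f g h i j k l : ℤ,
      (a * (b * c)) * ((d * (e * f)) * (g * (h * (i * (j * (k * l))))))
        = (a * (b * c)) * ((d * (e * f)) * (g * (h * (i * (j * (k * l)))))) from fun _ _ _ _ _ _ _ _ _ _ _ _ => rfl]
    simp only [ite_zero_mul_ite_zero]
    refine if_congr (key_iff w) ?_ rfl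
    obtain ⟨⟨e1, e2, e3⟩, ⟨l12, l13, l23⟩, ⟨d12, d13, d21, d23, d31, d32⟩⟩ := w
    simp only [muIdx]
    ring
  rw [Finset.sum_filter, Finset.sum_congr rfl hpoint]
  have hgpos : ∀ m n : ℤ, 0 < m.natAbs → 0 < Nat.gcd m.natAbs n.natAbs :=
    fun m n h => Nat.gcd_pos_of_pos_left _ h
  have hgle : ∀ m n : ℤ, 0 < n.natAbs → n.natAbs ≤ (K : ℕ) →
      Nat.gcd m.natAbs n.natAbs ≤ (K : ℕ) :=
    fun m n h h' => le_trans (Nat.le_of_dvd h (Nat.gcd_dvd_right _ _)) h'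
  calc
    _ = (∑ x ∈ Ebox K ×ˢ Ebox K ×ˢ Ebox K,
          (if (x.1 : ℕ) ∣ Nat.gcd X1.natAbs Z4.natAbs then
            (ArithmeticFunction.moebius (x.1 : ℕ) : ℤ) else 0) *
          ((if (x.2.1 : ℕ) ∣ Nat.gcd X2.natAbs Z4.natAbs then
            (ArithmeticFunction.moebius (x.2.1 : ℕ) : ℤ) else 0) *
           (if (x.2.2 : ℕ) ∣ Nat.gcd X3.natAbs Z4.natAbs then
            (ArithmeticFunction.moebius (x.2.2 : ℕ) : ℤ) else 0))) *
        ((∑ x ∈ Ebox K ×ˢ Ebox K ×ˢ Ebox K,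
          (if (x.1 : ℕ) ∣ Nat.gcd Z1.natAbs Z2.natAbs then
            (ArithmeticFunction.moebius (x.1 : ℕ) : ℤ) else 0) *
          ((if (x.2.1 : ℕ) ∣ Nat.gcd Z1.natAbs Z3.natAbs then
            (ArithmeticFunction.moebius (x.2.1 : ℕ) : ℤ) else 0) *
           (if (x.2.2 : ℕ) ∣ Nat.gcd Z2.natAbs Z3.natAbs then
            (ArithmeticFunction.moebius (x.2.2 : ℕ) : ℤ) else 0))) *
         (∑ x ∈ Ebox K ×ˢ Ebox K ×ˢ Ebox K ×ˢ Ebox K ×ˢ Ebox K ×ˢ Ebox K,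
          (if (x.1 : ℕ) ∣ Nat.gcd X1.natAbs Z2.natAbs then
            (ArithmeticFunction.moebius (x.1 : ℕ) : ℤ) else 0) *
          ((if (x.2.1 : ℕ) ∣ Nat.gcd X1.natAbs Z3.natAbs then
            (ArithmeticFunction.moebius (x.2.1 : ℕ) : ℤ) else 0) *
           ((if (x.2.2.1 : ℕ) ∣ Nat.gcd X2.natAbs Z1.natAbs then
            (ArithmeticFunction.moebius (x.2.2.1 : ℕ) : ℤ) else 0) *
            ((if (x.2.2.2.1 : ℕ) ∣ Nat.gcd X2.natAbs Z3.natAbs then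
            (ArithmeticFunction.moebius (x.2.2.2.1 : ℕ) : ℤ) else 0) *
             ((if (x.2.2.2.2.1 : ℕ) ∣ Nat.gcd X3.natAbs Z1.natAbs then
            (ArithmeticFunction.moebius (x.2.2.2.2.1 : ℕ) : ℤ) else 0) *
              (if (x.2.2.2.2.2 : ℕ) ∣ Nat.gcd X3.natAbs Z2.natAbs then
            (ArithmeticFunction.moebius (x.2.2.2.2.2 : ℕ) : ℤ) else 0))))))) :=
      sum3 (Ebox K ×ˢ Ebox K ×ˢ Ebox K) (Ebox K ×ˢ Ebox K ×ˢ Ebox K) (Ebox K ×ˢ Ebox K ×ˢ Ebox K ×ˢ Ebox K ×ˢ Ebox K ×ˢ Ebox K)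
        (fun x : ℕ+ × ℕ+ × ℕ+ => ((fun t : ℕ+ => if (t : ℕ) ∣ Nat.gcd X1.natAbs Z4.natAbs then (ArithmeticFunction.moebius (t : ℕ) : ℤ) else 0) x.1) * (((fun t : ℕ+ => if (t : ℕ) ∣ Nat.gcd X2.natAbs Z4.natAbs then (ArithmeticFunction.moebius (t : ℕ) : ℤ) else 0) x.2.1) * ((fun t : ℕ+ => if (t : ℕ) ∣ Nat.gcd X3.natAbs Z4.natAbs then (ArithmeticFunction.moebius (t : ℕ) : ℤ) else 0) x.2.2)))
        (fun x : ℕ+ × ℕ+ × ℕ+ => ((fun t : ℕ+ => if (t : ℕ) ∣ Nat.gcd Z1.natAbs Z2.natAbs then (ArithmeticFunction.moebius (t : ℕ) : ℤ) else 0) x.1) * (((fun t : ℕ+ => if (t : ℕ) ∣ Nat.gcd Z1.natAbs Z3.natAbs then (ArithmeticFunction.moebius (t : ℕ) : ℤ) else 0) x.2.1) * ((fun t : ℕ+ => if (t : ℕ) ∣ Nat.gcd Z2.natAbs Z3.natAbs then (ArithmeticFunction.moebius (t : ℕ) : ℤ) else 0) x.2.2)))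
        (fun x : ℕ+ × ℕ+ × ℕ+ × ℕ+ × ℕ+ × ℕ+ => ((fun t : ℕ+ => if (t : ℕ) ∣ Nat.gcd X1.natAbs Z2.natAbs then (ArithmeticFunction.moebius (t : ℕ) : ℤ) else 0) x.1) * (((fun t : ℕ+ => if (t : ℕ) ∣ Nat.gcd X1.natAbs Z3.natAbs then (ArithmeticFunction.moebius (t : ℕ) : ℤ) else 0) x.2.1) * (((fun t : ℕ+ => if (t : ℕ) ∣ Nat.gcd X2.natAbs Z1.natAbs then (ArithmeticFunction.moebius (t : ℕ) : ℤ) else 0) x.2.2.1) * (((fun t : ℕ+ => if (t : ℕ) ∣ Nat.gcd X2.natAbs Z3.natAbs then (ArithmeticFunction.moebius (t : ℕ) : ℤ) else 0) x.2.2.2.1) * (((fun t : ℕ+ => if (t : ℕ) ∣ Nat.gcd X3.natAbs Z1.natAbs then (ArithmeticFunction.moebius (t : ℕ) : ℤ) else 0) x.2.2.2.2.1) * ((fun t : ℕ+ => if (t : ℕ) ∣ Nat.gcd X3.natAbs Z2.natAbs then (ArithmeticFunction.moebius (t : ℕ) : ℤ) else 0) x.2.2.2.2.2))))))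
    _ = ((∑ t ∈ Ebox K, if (t : ℕ) ∣ Nat.gcd X1.natAbs Z4.natAbs then
            (ArithmeticFunction.moebius (t : ℕ) : ℤ) else 0) *
         ((∑ t ∈ Ebox K, if (t : ℕ) ∣ Nat.gcd X2.natAbs Z4.natAbs then
            (ArithmeticFunction.moebius (t : ℕ) : ℤ) else 0) *
          (∑ t ∈ Ebox K, if (t : ℕ) ∣ Nat.gcd X3.natAbs Z4.natAbs then
            (ArithmeticFunction.moebius (t : ℕ) : ℤ) else 0))) *
        (((∑ t ∈ Ebox K, if (t : ℕ) ∣ Nat.gcd Z1.natAbs Z2.natAbs then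
            (ArithmeticFunction.moebius (t : ℕ) : ℤ) else 0) *
          ((∑ t ∈ Ebox K, if (t : ℕ) ∣ Nat.gcd Z1.natAbs Z3.natAbs then
            (ArithmeticFunction.moebius (t : ℕ) : ℤ) else 0) *
           (∑ t ∈ Ebox K, if (t : ℕ) ∣ Nat.gcd Z2.natAbs Z3.natAbs then
            (ArithmeticFunction.moebius (t : ℕ) : ℤ) else 0))) *
         ((∑ t ∈ Ebox K, if (t : ℕ) ∣ Nat.gcd X1.natAbs Z2.natAbs then
            (ArithmeticFunction.moebius (t : ℕ) : ℤ) else 0) *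
          ((∑ t ∈ Ebox K, if (t : ℕ) ∣ Nat.gcd X1.natAbs Z3.natAbs then
            (ArithmeticFunction.moebius (t : ℕ) : ℤ) else 0) *
           ((∑ t ∈ Ebox K, if (t : ℕ) ∣ Nat.gcd X2.natAbs Z1.natAbs then
            (ArithmeticFunction.moebius (t : ℕ) : ℤ) else 0) *
            ((∑ t ∈ Ebox K, if (t : ℕ) ∣ Nat.gcd X2.natAbs Z3.natAbs then
            (ArithmeticFunction.moebius (t : ℕ) : ℤ) else 0) *
             ((∑ t ∈ Ebox K, if (t : ℕ) ∣ Nat.gcd X3.natAbs Z1.natAbs then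
            (ArithmeticFunction.moebius (t : ℕ) : ℤ) else 0) *
              (∑ t ∈ Ebox K, if (t : ℕ) ∣ Nat.gcd X3.natAbs Z2.natAbs then
            (ArithmeticFunction.moebius (t : ℕ) : ℤ) else 0))))))) := by
      exact congrArg₂ (fun a b : ℤ => a * b)
        (sum3 (Ebox K) (Ebox K) (Ebox K) (fun t : ℕ+ => if (t : ℕ) ∣ Nat.gcd X1.natAbs Z4.natAbs then (ArithmeticFunction.moebius (t : ℕ) : ℤ) else 0) (fun t : ℕ+ => if (t : ℕ) ∣ Nat.gcd X2.natAbs Z4.natAbs then (ArithmeticFunction.moebius (t : ℕ) : ℤ) else 0) (fun t : ℕ+ => if (t : ℕ) ∣ Nat.gcd X3.natAbs Z4.natAbs then (ArithmeticFunction.moebius (t : ℕ) : ℤ) else 0))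
        (congrArg₂ (fun a b : ℤ => a * b)
          (sum3 (Ebox K) (Ebox K) (Ebox K) (fun t : ℕ+ => if (t : ℕ) ∣ Nat.gcd Z1.natAbs Z2.natAbs then (ArithmeticFunction.moebius (t : ℕ) : ℤ) else 0) (fun t : ℕ+ => if (t : ℕ) ∣ Nat.gcd Z1.natAbs Z3.natAbs then (ArithmeticFunction.moebius (t : ℕ) : ℤ) else 0) (fun t : ℕ+ => if (t : ℕ) ∣ Nat.gcd Z2.natAbs Z3.natAbs then (ArithmeticFunction.moebius (t : ℕ) : ℤ) else 0))
          (sum6 (Ebox K) (fun t : ℕ+ => if (t : ℕ) ∣ Nat.gcd X1.natAbs Z2.natAbs then (ArithmeticFunction.moebius (t : ℕ) : ℤ) else 0) (fun t : ℕ+ => if (t : ℕ) ∣ Nat.gcd X1.natAbs Z3.natAbs then (ArithmeticFunction.moebius (t : ℕ) : ℤ) else 0) (fun t : ℕ+ => if (t : ℕ) ∣ Nat.gcd X2.natAbs Z1.natAbs then (ArithmeticFunction.moebius (t : ℕ) : ℤ) else 0) (fun t : ℕ+ => if (t : ℕ) ∣ Nat.gcd X2.natAbs Z3.natAbs then (ArithmeticFunction.moebius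 (t : ℕ) : ℤ) else 0) (fun t : ℕ+ => if (t : ℕ) ∣ Nat.gcd X3.natAbs Z1.natAbs then (ArithmeticFunction.moebius (t : ℕ) : ℤ) else 0) (fun t : ℕ+ => if (t : ℕ) ∣ Nat.gcd X3.natAbs Z2.natAbs then (ArithmeticFunction.moebius (t : ℕ) : ℤ) else 0)))
    _ = if (Int.gcd Z1 Z2 = 1 ∧ Int.gcd Z1 Z3 = 1 ∧ Int.gcd Z2 Z3 = 1 ∧
          Int.gcd X1 (Z2 * Z3 * Z4) = 1 ∧ Int.gcd X2 (Z1 * Z3 * Z4) = 1 ∧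
          Int.gcd X3 (Z1 * Z2 * Z4) = 1) then 1 else 0 := by
      rw [sumE K _ (hgpos X1 Z4 ha1) (hgle X1 Z4 hv4 hb7),
        sumE K _ (hgpos X2 Z4 ha2) (hgle X2 Z4 hv4 hb7),
        sumE K _ (hgpos X3 Z4 ha3) (hgle X3 Z4 hv4 hb7),
        sumE K _ (hgpos Z1 Z2 hv1) (hgle Z1 Z2 hv2 hb5),
        sumE K _ (hgpos Z1 Z3 hv1) (hgle Z1 Z3 hv3 hb6),
        sumE K _ (hgpos Z2 Z3 hv2) (hgle Z2 Z3 hv3 hb6),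
        sumE K _ (hgpos X1 Z2 ha1) (hgle X1 Z2 hv2 hb5),
        sumE K _ (hgpos X1 Z3 ha1) (hgle X1 Z3 hv3 hb6),
        sumE K _ (hgpos X2 Z1 ha2) (hgle X2 Z1 hv1 hb4),
        sumE K _ (hgpos X2 Z3 ha2) (hgle X2 Z3 hv3 hb6),
        sumE K _ (hgpos X3 Z1 ha3) (hgle X3 Z1 hv1 hb4),
        sumE K _ (hgpos X3 Z2 ha3) (hgle X3 Z2 hv2 hb5)]
      simp only [ite_zero_mul_ite_zero, mul_one, one_mul]
      refine if_congr ?_ rfl rfl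
      simp only [Int.gcd, Int.natAbs_mul, ← Nat.coprime_iff_gcd_eq_one,
        Nat.coprime_mul_iff_right]
      tauto


theorem dvdC_phi (w : Idx) (v : VV) : DvdC w (phi w v) :=
  ⟨dvd_mul_right _ _, dvd_mul_right _ _, dvd_mul_right _ _, dvd_mul_right _ _,
   dvd_mul_right _ _, dvd_mul_right _ _, dvd_mul_right _ _⟩

set_option maxHeartbeats 2000000 in
theorem statement10 (f : ℝ × ℝ × ℝ × ℝ × ℝ × ℝ × ℝ → ℂ) (hf : HasCompactSupport f) :
    {v ∈ Sset | ev f v ≠ 0}.Finite ∧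
    (∀ w : Idx, {v ∈ Tset | evScaled f w v ≠ 0}.Finite) ∧
    {w : Idx | (muIdx w : ℂ) * ∑ᶠ v ∈ Tset, evScaled f w v ≠ 0}.Finite ∧
    ∑ᶠ v ∈ Sset, ev f v = ∑ᶠ w : Idx, (muIdx w : ℂ) * ∑ᶠ v ∈ Tset, evScaled f w v := by
  classical
  obtain ⟨R, hR⟩ := hf.isBounded.subset_closedBall 0
  set K : ℕ := ⌈R⌉₊ with hKdef
  have hRK : R ≤ (K : ℝ) := Nat.le_ceil R
  have hbd : ∀ p : ℝ × ℝ × ℝ × ℝ × ℝ × ℝ × ℝ, f p ≠ 0 →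
      |p.1| ≤ (K : ℝ) ∧ |p.2.1| ≤ (K : ℝ) ∧ |p.2.2.1| ≤ (K : ℝ) ∧ |p.2.2.2.1| ≤ (K : ℝ) ∧
      |p.2.2.2.2.1| ≤ (K : ℝ) ∧ |p.2.2.2.2.2.1| ≤ (K : ℝ) ∧ |p.2.2.2.2.2.2| ≤ (K : ℝ) := by
    intro p hp
    have hps : p ∈ tsupport f := subset_tsupport f (Function.mem_support.mpr hp)
    have hn : ‖p‖ ≤ (K : ℝ) := by
      have h := hR hps
      rw [Metric.mem_closedBall, dist_zero_right] at h
      exact h.trans hRK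
    exact ⟨(norm_fst_le p).trans hn,
      ((norm_fst_le p.2).trans (norm_snd_le p)).trans hn,
      ((norm_fst_le p.2.2).trans ((norm_snd_le p.2).trans (norm_snd_le p))).trans hn,
      ((norm_fst_le p.2.2.2).trans ((norm_snd_le p.2.2).trans
        ((norm_snd_le p.2).trans (norm_snd_le p)))).trans hn,
      ((norm_fst_le p.2.2.2.2).trans ((norm_snd_le p.2.2.2).trans ((norm_snd_le p.2.2).trans
        ((norm_snd_le p.2).trans (norm_snd_le p))))).trans hn,
      ((norm_fst_le p.2.2.2.2.2).trans ((norm_snd_le p.2.2.2.2).trans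
        ((norm_snd_le p.2.2.2).trans ((norm_snd_le p.2.2).trans
        ((norm_snd_le p.2).trans (norm_snd_le p)))))).trans hn,
      ((norm_snd_le p.2.2.2.2.2).trans ((norm_snd_le p.2.2.2.2).trans
        ((norm_snd_le p.2.2.2).trans ((norm_snd_le p.2.2).trans
        ((norm_snd_le p.2).trans (norm_snd_le p)))))).trans hn⟩
  have hZbd : ∀ m : ℤ, |(m : ℝ)| ≤ (K : ℝ) → m.natAbs ≤ K := by
    intro m hm
    have h : ((m.natAbs : ℕ) : ℝ) ≤ (K : ℝ) := by
      rw [Nat.cast_natAbs, Int.cast_abs]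
      exact hm
    exact_mod_cast h
  have hev : ∀ v : VV, ev f v ≠ 0 →
      ((v.1.1.natAbs ≤ K ∧ v.1.2.1.natAbs ≤ K ∧ v.1.2.2.natAbs ≤ K) ∧
       (v.2.1.natAbs ≤ K ∧ v.2.2.1.natAbs ≤ K ∧ v.2.2.2.1.natAbs ≤ K ∧
        v.2.2.2.2.natAbs ≤ K)) := by
    intro v hv
    have h := hbd ((v.1.1 : ℝ), (v.2.1 : ℝ), (v.1.2.1 : ℝ), (v.2.2.1 : ℝ), (v.1.2.2 : ℝ),
      (v.2.2.2.1 : ℝ), (v.2.2.2.2 : ℝ)) hv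
    exact ⟨⟨hZbd _ h.1, hZbd _ h.2.2.1, hZbd _ h.2.2.2.2.1⟩,
      hZbd _ h.2.1, hZbd _ h.2.2.2.1, hZbd _ h.2.2.2.2.2.1, hZbd _ h.2.2.2.2.2.2⟩
  have hmemV : ∀ v : VV, ev f v ≠ 0 → v ∈ Vbox K := fun v hv => mem_Vbox.mpr (hev v hv)
  have hscaled : ∀ (w : Idx) (v : VV), evScaled f w v ≠ 0 →
      ((B1 w * v.1.1.natAbs ≤ K ∧ B2 w * v.1.2.1.natAbs ≤ K ∧ B3 w * v.1.2.2.natAbs ≤ K) ∧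
       (C1 w * v.2.1.natAbs ≤ K ∧ C2 w * v.2.2.1.natAbs ≤ K ∧
        C3 w * v.2.2.2.1.natAbs ≤ K ∧ C4 w * v.2.2.2.2.natAbs ≤ K)) := by
    intro w v h
    have h2 := hev (phi w v) (by rwa [← evScaled_eq])
    simpa only [phi, natAbs_cast_mul] using h2
  have hVmem : ∀ (w : Idx) (v : VV), evScaled f w v ≠ 0 → v ∈ Vbox K := by
    intro w v h
    have hs := hscaled w v h
    have hp := BCpos w
    exact mem_Vbox.mpr
      ⟨⟨le_trans (Nat.le_mul_of_pos_left _ hp.1) hs.1.1,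
        le_trans (Nat.le_mul_of_pos_left _ hp.2.1) hs.1.2.1,
        le_trans (Nat.le_mul_of_pos_left _ hp.2.2.1) hs.1.2.2⟩,
       le_trans (Nat.le_mul_of_pos_left _ hp.2.2.2.1) hs.2.1,
       le_trans (Nat.le_mul_of_pos_left _ hp.2.2.2.2.1) hs.2.2.1,
       le_trans (Nat.le_mul_of_pos_left _ hp.2.2.2.2.2.1) hs.2.2.2.1,
       le_trans (Nat.le_mul_of_pos_left _ hp.2.2.2.2.2.2) hs.2.2.2.2⟩
  set K' : ℕ+ := ⟨K + 1, Nat.succ_pos K⟩ with hK'def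
  have hKK' : ∀ {n : ℕ}, n ≤ K → n ≤ (K' : ℕ) := fun h => h.trans (Nat.le_succ K)
  -- membership of w in Wbox K' from a nonvanishing scaled term
  have hWmem : ∀ (w : Idx) (v : VV), v ∈ Tset → evScaled f w v ≠ 0 → w ∈ Wbox K' := by
    intro w v hvT h
    have hs := hscaled w v h
    have hT : v.1.1 ≠ 0 ∧ v.1.2.1 ≠ 0 ∧ v.1.2.2 ≠ 0 ∧ 0 < v.2.1 ∧ 0 < v.2.2.1 ∧
        0 < v.2.2.2.1 ∧ 0 < v.2.2.2.2 := hvT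
    have p1 : 0 < v.1.1.natAbs := Int.natAbs_pos.mpr hT.1
    have p2 : 0 < v.1.2.1.natAbs := Int.natAbs_pos.mpr hT.2.1
    have p3 : 0 < v.1.2.2.natAbs := Int.natAbs_pos.mpr hT.2.2.1
    have p4 : 0 < v.2.1.natAbs := Int.natAbs_pos.mpr hT.2.2.2.1.ne'
    have p5 : 0 < v.2.2.1.natAbs := Int.natAbs_pos.mpr hT.2.2.2.2.1.ne'
    have p6 : 0 < v.2.2.2.1.natAbs := Int.natAbs_pos.mpr hT.2.2.2.2.2.1.ne'
    have p7 : 0 < v.2.2.2.2.natAbs := Int.natAbs_pos.mpr hT.2.2.2.2.2.2.ne'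
    exact mem_Wbox_of_le
      (hKK' (le_trans (Nat.le_mul_of_pos_right _ p1) hs.1.1))
      (hKK' (le_trans (Nat.le_mul_of_pos_right _ p2) hs.1.2.1))
      (hKK' (le_trans (Nat.le_mul_of_pos_right _ p3) hs.1.2.2))
      (hKK' (le_trans (Nat.le_mul_of_pos_right _ p4) hs.2.1))
      (hKK' (le_trans (Nat.le_mul_of_pos_right _ p5) hs.2.2.1))
      (hKK' (le_trans (Nat.le_mul_of_pos_right _ p6) hs.2.2.2.1))
      (hKK' (le_trans (Nat.le_mul_of_pos_right _ p7) hs.2.2.2.2))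
  refine ⟨?_, ?_, ?_, ?_⟩
  · -- finiteness of the S-sum index set
    refine Set.Finite.subset (Vbox K).finite_toSet ?_
    intro v hv
    exact Finset.mem_coe.mpr (hmemV v hv.2)
  · -- finiteness for each w
    intro w
    refine Set.Finite.subset (Vbox K).finite_toSet ?_
    intro v hv
    exact Finset.mem_coe.mpr (hVmem w v hv.2)
  · -- finiteness of the w-set
    refine Set.Finite.subset (Wbox K').finite_toSet ?_
    intro w hw
    have h2 : ∑ᶠ v ∈ Tset, evScaled f w v ≠ 0 := fun h => hw (by rw [h, mul_zero])
    have h3 : ¬ ∀ v ∈ Tset, evScaled f w v = 0 :=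
      fun hall => h2 (finsum_mem_eq_zero_of_forall_eq_zero hall)
    push_neg at h3
    obtain ⟨v, hvT, hvne⟩ := h3
    exact Finset.mem_coe.mpr (hWmem w v hvT hvne)
  · -- the identity
    set VS : Finset VV := (Vbox K).filter (· ∈ Sset) with hVSdef
    set VT : Finset VV := (Vbox K).filter (· ∈ Tset) with hVTdef
    set WF : Finset Idx := Wbox K' with hWFdef
    set Lb : ℕ := (K + 1) * (K + 1) * (K + 1) * (K + 1) * (K + 1) with hLbdef
    set UB : Finset VV := (Vbox Lb).filter (· ∈ Tset) with hUBdef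
    have hKLb : K ≤ Lb := by
      rw [hLbdef]
      exact (Nat.le_succ K).trans (Nat.le_mul_of_pos_left _ (by positivity))
    have hLHS : ∑ᶠ v ∈ Sset, ev f v = ∑ v ∈ VS, ev f v := by
      refine finsum_mem_eq_sum_of_subset _ ?_ ?_
      · intro v hv
        exact Finset.mem_coe.mpr (Finset.mem_filter.mpr ⟨hmemV v hv.2, hv.1⟩)
      · intro v hv
        exact (Finset.mem_filter.mp (Finset.mem_coe.mp hv)).2
    have hinner : ∀ w : Idx, ∑ᶠ v ∈ Tset, evScaled f w v = ∑ v ∈ VT, evScaled f w v := by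
      intro w
      refine finsum_mem_eq_sum_of_subset _ ?_ ?_
      · intro v hv
        exact Finset.mem_coe.mpr (Finset.mem_filter.mpr ⟨hVmem w v hv.2, hv.1⟩)
      · intro v hv
        exact (Finset.mem_filter.mp (Finset.mem_coe.mp hv)).2
    have hsupp : Function.support
        (fun w : Idx => (muIdx w : ℂ) * ∑ᶠ v ∈ Tset, evScaled f w v) ⊆ ↑WF := by
      intro w hw
      have h2 : ∑ᶠ v ∈ Tset, evScaled f w v ≠ 0 := fun h => hw (by simp [h])
      have h3 : ¬ ∀ v ∈ Tset, evScaled f w v = 0 :=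
        fun hall => h2 (finsum_mem_eq_zero_of_forall_eq_zero hall)
      push_neg at h3
      obtain ⟨v, hvT, hvne⟩ := h3
      exact Finset.mem_coe.mpr (hWmem w v hvT hvne)
    rw [hLHS, finsum_eq_sum_of_support_subset _ hsupp]
    have hmaps : ∀ p ∈ WF ×ˢ VT, phi p.1 p.2 ∈ UB := by
      rintro ⟨w, v⟩ hp
      rw [Finset.mem_product] at hp
      obtain ⟨hw, hv⟩ := hp
      rw [Finset.mem_filter] at hv
      have hvb := mem_Vbox.mp hv.1
      have hble := BCle (hWFdef ▸ hw)
      have hT : v.1.1 ≠ 0 ∧ v.1.2.1 ≠ 0 ∧ v.1.2.2 ≠ 0 ∧ 0 < v.2.1 ∧ 0 < v.2.2.1 ∧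
          0 < v.2.2.2.1 ∧ 0 < v.2.2.2.2 := hv.2
      have hp' := BCpos w
      have hK'c : (K' : ℕ) = K + 1 := rfl
      have hbndB : ∀ a b : ℕ, a ≤ (K' : ℕ) * K' * K' → b ≤ K → a * b ≤ Lb := by
        intro a b ha hb
        rw [hK'c] at ha
        calc a * b ≤ ((K+1)*(K+1)*(K+1)) * (K+1) :=
              Nat.mul_le_mul ha (hb.trans (Nat.le_succ K))
          _ ≤ Lb := by rw [hLbdef]; exact Nat.le_mul_of_pos_right _ (Nat.succ_pos K)
      have hbndC : ∀ a b : ℕ, a ≤ (K' : ℕ) * K' * K' * K' → b ≤ K → a * b ≤ Lb := by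
        intro a b ha hb
        rw [hK'c] at ha
        calc a * b ≤ ((K+1)*(K+1)*(K+1)*(K+1)) * (K+1) :=
              Nat.mul_le_mul ha (hb.trans (Nat.le_succ K))
          _ = Lb := rfl
      rw [Finset.mem_filter]
      constructor
      · refine mem_Vbox.mpr ?_
        refine ⟨⟨?_, ?_, ?_⟩, ?_, ?_, ?_, ?_⟩ <;>
          simp only [phi, natAbs_cast_mul]
        · exact hbndB _ _ hble.1 hvb.1.1
        · exact hbndB _ _ hble.2.1 hvb.1.2.1
        · exact hbndB _ _ hble.2.2.1 hvb.1.2.2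
        · exact hbndC _ _ hble.2.2.2.1 hvb.2.1
        · exact hbndC _ _ hble.2.2.2.2.1 hvb.2.2.1
        · exact hbndC _ _ hble.2.2.2.2.2.1 hvb.2.2.2.1
        · exact hbndB _ _ hble.2.2.2.2.2.2 hvb.2.2.2.2
      · show phi w v ∈ Tset
        exact ⟨mul_ne_zero (Int.natCast_ne_zero.mpr hp'.1.ne') hT.1,
          mul_ne_zero (Int.natCast_ne_zero.mpr hp'.2.1.ne') hT.2.1,
          mul_ne_zero (Int.natCast_ne_zero.mpr hp'.2.2.1.ne') hT.2.2.1,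
          mul_pos (Int.natCast_pos.mpr hp'.2.2.2.1) hT.2.2.2.1,
          mul_pos (Int.natCast_pos.mpr hp'.2.2.2.2.1) hT.2.2.2.2.1,
          mul_pos (Int.natCast_pos.mpr hp'.2.2.2.2.2.1) hT.2.2.2.2.2.1,
          mul_pos (Int.natCast_pos.mpr hp'.2.2.2.2.2.2) hT.2.2.2.2.2.2⟩
    have hperu : ∀ u ∈ UB,
        (∑ p ∈ (WF ×ˢ VT).filter (fun p => phi p.1 p.2 = u),
          (muIdx p.1 : ℂ) * evScaled f p.1 p.2)
        = if u ∈ Sset then ev f u else 0 := by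
      intro u hu
      rw [Finset.mem_filter] at hu
      have huT : u.1.1 ≠ 0 ∧ u.1.2.1 ≠ 0 ∧ u.1.2.2 ≠ 0 ∧ 0 < u.2.1 ∧ 0 < u.2.2.1 ∧
          0 < u.2.2.2.1 ∧ 0 < u.2.2.2.2 := hu.2
      have hstep1 : (∑ p ∈ (WF ×ˢ VT).filter (fun p => phi p.1 p.2 = u),
          (muIdx p.1 : ℂ) * evScaled f p.1 p.2)
          = (∑ p ∈ (WF ×ˢ VT).filter (fun p => phi p.1 p.2 = u), (muIdx p.1 : ℂ)) *
            ev f u := by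
        rw [Finset.sum_mul]
        refine Finset.sum_congr rfl ?_
        intro p hp
        rw [evScaled_eq, (Finset.mem_filter.mp hp).2]
      rw [hstep1]
      by_cases hz : ev f u = 0
      · rw [hz, mul_zero]
        split_ifs <;> rfl
      · have hub := hev u hz
        have hbij : (∑ p ∈ (WF ×ˢ VT).filter (fun p => phi p.1 p.2 = u), muIdx p.1)
            = ∑ w ∈ WF.filter (fun w => DvdC w u), muIdx w := by
          refine Finset.sum_bij' (fun p _ => p.1) (fun w _ => (w, psi w u)) ?_ ?_ ?_ ?_ ?_
          · intro p hp
            rw [Finset.mem_filter] at hp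
            obtain ⟨hpW, hphi⟩ := hp
            rw [Finset.mem_product] at hpW
            refine Finset.mem_filter.mpr ⟨hpW.1, ?_⟩
            exact hphi ▸ dvdC_phi p.1 p.2
          · intro w hw
            rw [Finset.mem_filter] at hw
            obtain ⟨hwW, hdvd⟩ := hw
            have hpp := phi_psi hdvd
            have hp' := BCpos w
            -- divisibility of components of psi w u
            have hq1 : psi w u ∈ Tset := by
              refine ⟨?_, ?_, ?_, ?_, ?_, ?_, ?_⟩
              · intro h0
                apply huT.1
                have hc1 : (B1 w : ℤ) * (psi w u).1.1 = u.1.1 :=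
                  congrArg (fun x => x.1.1) hpp
                rw [← hc1, h0, mul_zero]
              · intro h0
                apply huT.2.1
                have hc2 : (B2 w : ℤ) * (psi w u).1.2.1 = u.1.2.1 :=
                  congrArg (fun x => x.1.2.1) hpp
                rw [← hc2, h0, mul_zero]
              · intro h0
                apply huT.2.2.1
                have hc3 : (B3 w : ℤ) * (psi w u).1.2.2 = u.1.2.2 :=
                  congrArg (fun x => x.1.2.2) hpp
                rw [← hc3, h0, mul_zero]
              · refine pos_of_cast_mul_pos (n := C1 w) ?_
                have : (C1 w : ℤ) * (psi w u).2.1 = u.2.1 := congrArg (fun x => x.2.1) hpp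
                rw [this]
                exact huT.2.2.2.1
              · refine pos_of_cast_mul_pos (n := C2 w) ?_
                have : (C2 w : ℤ) * (psi w u).2.2.1 = u.2.2.1 :=
                  congrArg (fun x => x.2.2.1) hpp
                rw [this]
                exact huT.2.2.2.2.1
              · refine pos_of_cast_mul_pos (n := C3 w) ?_
                have : (C3 w : ℤ) * (psi w u).2.2.2.1 = u.2.2.2.1 :=
                  congrArg (fun x => x.2.2.2.1) hpp
                rw [this]
                exact huT.2.2.2.2.2.1
              · refine pos_of_cast_mul_pos (n := C4 w) ?_
                have : (C4 w : ℤ) * (psi w u).2.2.2.2 = u.2.2.2.2 :=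
                  congrArg (fun x => x.2.2.2.2) hpp
                rw [this]
                exact huT.2.2.2.2.2.2
            have hqb : psi w u ∈ Vbox K := by
              have hd : ∀ a b : ℤ, a ≠ 0 → a.natAbs ≤ K → b ∣ a → b.natAbs ≤ K := by
                intro a b ha hab hdvd'
                exact le_trans (Nat.le_of_dvd (Int.natAbs_pos.mpr ha)
                  (Int.natAbs_dvd_natAbs.mpr hdvd')) hab
              refine mem_Vbox.mpr ⟨⟨?_, ?_, ?_⟩, ?_, ?_, ?_, ?_⟩
              · exact hd _ _ huT.1 hub.1.1 ((congrArg (fun x => x.1.1) hpp) ▸ dvd_mul_left _ _)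
              · exact hd _ _ huT.2.1 hub.1.2.1 ((congrArg (fun x => x.1.2.1) hpp) ▸ dvd_mul_left _ _)
              · exact hd _ _ huT.2.2.1 hub.1.2.2 ((congrArg (fun x => x.1.2.2) hpp) ▸ dvd_mul_left _ _)
              · exact hd _ _ huT.2.2.2.1.ne' hub.2.1
                  ((congrArg (fun x => x.2.1) hpp) ▸ dvd_mul_left _ _)
              · exact hd _ _ huT.2.2.2.2.1.ne' hub.2.2.1
                  ((congrArg (fun x => x.2.2.1) hpp) ▸ dvd_mul_left _ _)
              · exact hd _ _ huT.2.2.2.2.2.1.ne' hub.2.2.2.1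
                  ((congrArg (fun x => x.2.2.2.1) hpp) ▸ dvd_mul_left _ _)
              · exact hd _ _ huT.2.2.2.2.2.2.ne' hub.2.2.2.2
                  ((congrArg (fun x => x.2.2.2.2) hpp) ▸ dvd_mul_left _ _)
            refine Finset.mem_filter.mpr ⟨Finset.mem_product.mpr ⟨hwW, ?_⟩, hpp⟩
            exact Finset.mem_filter.mpr ⟨hqb, hq1⟩
          · rintro ⟨w, v⟩ hp
            rw [Finset.mem_filter] at hp
            have hphi := hp.2
            show (w, psi w u) = (w, v)
            rw [← hphi, psi_phi]
          · intro w hw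
            rfl
          · intro p hp
            rfl
        have hcast : (∑ p ∈ (WF ×ˢ VT).filter (fun p => phi p.1 p.2 = u), (muIdx p.1 : ℂ))
            = ((∑ w ∈ WF.filter (fun w => DvdC w u), muIdx w : ℤ) : ℂ) := by
          rw [← hbij]
          push_cast
          rfl
        have hkey := keySum K' u huT.1 huT.2.1 huT.2.2.1 huT.2.2.2.1 huT.2.2.2.2.1
          huT.2.2.2.2.2.1 huT.2.2.2.2.2.2
          (hKK' hub.1.1) (hKK' hub.1.2.1) (hKK' hub.1.2.2) (hKK' hub.2.1)
          (hKK' hub.2.2.1) (hKK' hub.2.2.2.1) (hKK' hub.2.2.2.2)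
        rw [hcast, hkey]
        have hSiff : u ∈ Sset ↔ (Int.gcd u.2.1 u.2.2.1 = 1 ∧ Int.gcd u.2.1 u.2.2.2.1 = 1 ∧
            Int.gcd u.2.2.1 u.2.2.2.1 = 1 ∧
            Int.gcd u.1.1 (u.2.2.1 * u.2.2.2.1 * u.2.2.2.2) = 1 ∧
            Int.gcd u.1.2.1 (u.2.1 * u.2.2.2.1 * u.2.2.2.2) = 1 ∧
            Int.gcd u.1.2.2 (u.2.1 * u.2.2.1 * u.2.2.2.2) = 1) :=
          ⟨fun h => h.2, fun h => ⟨hu.2, h⟩⟩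
        rw [show (if u ∈ Sset then ev f u else 0)
            = if (Int.gcd u.2.1 u.2.2.1 = 1 ∧ Int.gcd u.2.1 u.2.2.2.1 = 1 ∧
            Int.gcd u.2.2.1 u.2.2.2.1 = 1 ∧
            Int.gcd u.1.1 (u.2.2.1 * u.2.2.2.1 * u.2.2.2.2) = 1 ∧
            Int.gcd u.1.2.1 (u.2.1 * u.2.2.2.1 * u.2.2.2.2) = 1 ∧
            Int.gcd u.1.2.2 (u.2.1 * u.2.2.1 * u.2.2.2.2) = 1) then ev f u else 0
          from if_congr hSiff rfl rfl]
        split_ifs with hcc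
        · simp
        · simp
    calc ∑ v ∈ VS, ev f v
        = ∑ u ∈ UB.filter (· ∈ Sset), ev f u := by
          refine Finset.sum_subset ?_ ?_
          · intro v hv
            rw [Finset.mem_filter] at hv ⊢
            refine ⟨Finset.mem_filter.mpr ⟨?_, hv.2.1⟩, hv.2⟩
            have hb := mem_Vbox.mp hv.1
            exact mem_Vbox.mpr ⟨⟨hb.1.1.trans hKLb, hb.1.2.1.trans hKLb,
              hb.1.2.2.trans hKLb⟩, hb.2.1.trans hKLb, hb.2.2.1.trans hKLb,
              hb.2.2.2.1.trans hKLb, hb.2.2.2.2.trans hKLb⟩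
          · intro x hx hnx
            by_contra hne
            apply hnx
            rw [Finset.mem_filter] at hx
            exact Finset.mem_filter.mpr ⟨hmemV x hne, hx.2⟩
      _ = ∑ u ∈ UB, (if u ∈ Sset then ev f u else 0) := by rw [Finset.sum_filter]
      _ = ∑ u ∈ UB, ∑ p ∈ (WF ×ˢ VT).filter (fun p => phi p.1 p.2 = u),
            (muIdx p.1 : ℂ) * evScaled f p.1 p.2 :=
          (Finset.sum_congr rfl hperu).symm
      _ = ∑ p ∈ WF ×ˢ VT, (muIdx p.1 : ℂ) * evScaled f p.1 p.2 :=
          Finset.sum_fiberwise_of_maps_to hmaps _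
      _ = ∑ w ∈ WF, ∑ v ∈ VT, (muIdx w : ℂ) * evScaled f w v := Finset.sum_product _ _ _
      _ = ∑ w ∈ WF, (muIdx w : ℂ) * ∑ v ∈ VT, evScaled f w v := by
          refine Finset.sum_congr rfl ?_
          intro w _
          rw [Finset.mul_sum]
      _ = ∑ w ∈ WF, (muIdx w : ℂ) * ∑ᶠ v ∈ Tset, evScaled f w v := by
          refine Finset.sum_congr rfl ?_
          intro w _
          rw [hinner w]

end Statement10
end

section
/- For every ε > 0 there exists a constant C_ε > 0 with the following property. Let u₁,u₂,u₃,w₁,w₂,w₃,w₄,κ be real numbers satisfying: uᵢ ≥ κ, wᵢ ≥ κ and uᵢ + w₄ − 1 − ε ≥ κ for all i ∈ {1,2,3}; w₄ ≥ 0; κ ≥ 0; uᵢ + w_j − κ > 1 + ε for all i,j ∈ {1,2,3} with i ≠ j; and wᵢ + w_j − κ > 1 + ε for all 1 ≤ i < j ≤ 3. Then Σ over e,ℓ ∈ ℤ_{>0}³ and d ∈ ℤ_{>0}⁶ of max(b₁c₁, b₂c₂, b₃c₃)^κ / (b₁^{u₁} b₂^{u₂} b₃^{u₃} c₁^{w₁}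 c₂^{w₂} c₃^{w₃} c₄^{w₄}) ≤ C_ε. -/
namespace Statement11

/-- Index `(e₁, e₂, e₃, ℓ₁₂, ℓ₁₃, ℓ₂₃, d₁₂, d₁₃, d₂₁, d₂₃, d₃₁, d₃₂)` of positive
integers, grouped as `e × ℓ × d`. -/
abbrev Idx := (ℕ+ × ℕ+ × ℕ+) × (ℕ+ × ℕ+ × ℕ+) × (ℕ+ × ℕ+ × ℕ+ × ℕ+ × ℕ+ × ℕ+)

/-- `b₁ = [e₁, d₁₂, d₁₃]`. -/
def B1 : Idx → ℕ := fun ((e₁, _, _), _, (d₁₂, d₁₃, _, _, _, _)) =>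
  Nat.lcm (Nat.lcm e₁ d₁₂) d₁₃
/-- `b₂ = [e₂, d₂₁, d₂₃]`. -/
def B2 : Idx → ℕ := fun ((_, e₂, _), _, (_, _, d₂₁, d₂₃, _, _)) =>
  Nat.lcm (Nat.lcm e₂ d₂₁) d₂₃
/-- `b₃ = [e₃, d₃₁, d₃₂]`. -/
def B3 : Idx → ℕ := fun ((_, _, e₃), _, (_, _, _, _, d₃₁, d₃₂)) =>
  Nat.lcm (Nat.lcm e₃ d₃₁) d₃₂
/-- `c₁ = [d₂₁, d₃₁, ℓ₁₂, ℓ₁₃]`. -/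
def C1 : Idx → ℕ := fun (_, (l₁₂, l₁₃, _), (_, _, d₂₁, _, d₃₁, _)) =>
  Nat.lcm (Nat.lcm (Nat.lcm d₂₁ d₃₁) l₁₂) l₁₃
/-- `c₂ = [d₁₂, d₃₂, ℓ₁₂, ℓ₂₃]`. -/
def C2 : Idx → ℕ := fun (_, (l₁₂, _, l₂₃), (d₁₂, _, _, _, _, d₃₂)) =>
  Nat.lcm (Nat.lcm (Nat.lcm d₁₂ d₃₂) l₁₂) l₂₃
/-- `c₃ = [d₁₃, d₂₃, ℓ₁₃, ℓ₂₃]`. -/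
def C3 : Idx → ℕ := fun (_, (_, l₁₃, l₂₃), (_, d₁₃, _, d₂₃, _, _)) =>
  Nat.lcm (Nat.lcm (Nat.lcm d₁₃ d₂₃) l₁₃) l₂₃
/-- `c₄ = [e₁, e₂, e₃]`. -/
def C4 : Idx → ℕ := fun ((e₁, e₂, e₃), _, _) => Nat.lcm (Nat.lcm e₁ e₂) e₃

/-- The summand `max(b₁c₁, b₂c₂, b₃c₃)^κ / (b₁^{u₁}b₂^{u₂}b₃^{u₃}c₁^{w₁}c₂^{w₂}c₃^{w₃}c₄^{w₄})`. -/
noncomputable def term (u₁ u₂ u₃ w₁ w₂ w₃ w₄ κ : ℝ) (w : Idx) : ℝ :=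
  ((max (B1 w * C1 w) (max (B2 w * C2 w) (B3 w * C3 w)) : ℕ) : ℝ) ^ κ /
    ((B1 w : ℝ) ^ u₁ * (B2 w : ℝ) ^ u₂ * (B3 w : ℝ) ^ u₃ * (C1 w : ℝ) ^ w₁ *
      (C2 w : ℝ) ^ w₂ * (C3 w : ℝ) ^ w₃ * (C4 w : ℝ) ^ w₄)

open Finset in


lemma card_divisors_le_rpow (δ : ℝ) (hδ : 0 < δ) :
    ∃ K : ℝ, 0 < K ∧ ∀ n : ℕ, n ≠ 0 → (n.divisors.card : ℝ) ≤ K * (n : ℝ) ^ δ := by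
  set c : ℝ := (2 : ℝ) ^ δ - 1 with hc
  have h2δ : (1 : ℝ) < (2 : ℝ) ^ δ := by
    have := Real.rpow_lt_rpow_of_exponent_lt (x := 2) (by norm_num) hδ
    simpa using this
  have hcpos : 0 < c := by simp [hc]; linarith
  set M : ℝ := max 1 (1 / c) with hM
  have hM1 : (1 : ℝ) ≤ M := le_max_left _ _
  have hMc : 1 ≤ M * c := by
    have : (1 / c) * c ≤ M * c := mul_le_mul_of_nonneg_right (le_max_right _ _) hcpos.le
    rwa [one_div_mul_cancel hcpos.ne'] at this
  obtain ⟨Q, hQ⟩ := exists_nat_ge ((2 : ℝ) ^ (1 / δ))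
  refine ⟨M ^ Q, pow_pos (lt_of_lt_of_le one_pos hM1) Q, fun n hn => ?_⟩
  have hτ : (n.divisors.card : ℝ) = ∏ p ∈ n.primeFactors, ((n.factorization p + 1 : ℕ) : ℝ) := by
    rw [Nat.card_divisors hn]; push_cast; rfl
  -- pointwise bound
  have key : ∀ p ∈ n.primeFactors,
      ((n.factorization p + 1 : ℕ) : ℝ) ≤
        (if p < Q then M else 1) * ((p : ℝ) ^ (n.factorization p)) ^ δ := by
    intro p hp
    have hprime : p.Prime := Nat.prime_of_mem_primeFactors hp
    have hp2 : (2 : ℝ) ≤ (p : ℝ) := by exact_mod_cast hprime.two_le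
    have hppos : (0 : ℝ) < p := by linarith
    set k := n.factorization p with hk
    have hpow : ((p : ℝ) ^ k) ^ δ = ((p : ℝ) ^ δ) ^ k := by
      rw [← Real.rpow_natCast (p : ℝ) k, ← Real.rpow_mul hppos.le, mul_comm,
        Real.rpow_mul hppos.le, Real.rpow_natCast]
    rw [hpow]
    have haδ : (2 : ℝ) ^ δ ≤ (p : ℝ) ^ δ := Real.rpow_le_rpow (by norm_num) hp2 hδ.le
    by_cases hpQ : p < Q
    · simp only [if_pos hpQ]
      have h1 : (1 : ℝ) + k * c ≤ ((p : ℝ) ^ δ) ^ k := by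
        calc (1 : ℝ) + k * c ≤ (1 + c) ^ k := one_add_mul_le_pow (by linarith) k
        _ ≤ ((p : ℝ) ^ δ) ^ k := by
            apply pow_le_pow_left₀ (by linarith) (by simp [hc]; linarith)
      have hknn : (0 : ℝ) ≤ (k : ℝ) := Nat.cast_nonneg k
      push_cast
      nlinarith [mul_le_mul_of_nonneg_left h1 (le_trans zero_le_one hM1)]
    · simp only [if_neg hpQ]
      have hQp : ((2 : ℝ) ^ (1 / δ)) ≤ (p : ℝ) := le_trans hQ (by exact_mod_cast Nat.le_of_not_lt hpQ)
      have h2 : (2 : ℝ) ≤ (p : ℝ) ^ δ := by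
        calc (2 : ℝ) = ((2 : ℝ) ^ (1 / δ)) ^ δ := by
              rw [← Real.rpow_mul (by norm_num : (0:ℝ) ≤ 2), one_div_mul_cancel hδ.ne',
                Real.rpow_one]
        _ ≤ (p : ℝ) ^ δ := Real.rpow_le_rpow (Real.rpow_nonneg (by norm_num) _) hQp hδ.le
      have h3 : ((k : ℝ) + 1) ≤ 2 ^ k := by
        exact_mod_cast Nat.succ_le_of_lt (Nat.lt_two_pow_self (n := k))
      have h4 : (2 : ℝ) ^ k ≤ ((p : ℝ) ^ δ) ^ k :=
        pow_le_pow_left₀ (by norm_num) h2 k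
      push_cast
      linarith
  calc (n.divisors.card : ℝ)
      ≤ ∏ p ∈ n.primeFactors, ((if p < Q then M else 1) * ((p : ℝ) ^ (n.factorization p)) ^ δ) := by
        rw [hτ]
        exact Finset.prod_le_prod (fun p _ => by positivity) key
    _ = (∏ p ∈ n.primeFactors, (if p < Q then M else 1)) *
        ∏ p ∈ n.primeFactors, ((p : ℝ) ^ (n.factorization p)) ^ δ := Finset.prod_mul_distrib
    _ ≤ M ^ Q * (n : ℝ) ^ δ := by
        have hB : ∏ p ∈ n.primeFactors, ((p : ℝ) ^ (n.factorization p)) ^ δ = (n : ℝ) ^ δ := by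
          rw [Real.finset_prod_rpow _ _ (fun p _ => by positivity)]
          congr 1
          have : ∏ p ∈ n.primeFactors, p ^ n.factorization p = n := by
            rw [← Nat.support_factorization]
            exact Nat.factorization_prod_pow_eq_self hn
          have h' : ((∏ p ∈ n.primeFactors, p ^ n.factorization p : ℕ) : ℝ) = (n : ℝ) := by
            exact_mod_cast congrArg (fun m : ℕ => (m : ℝ)) this
          rw [← h']
          push_cast
          rfl
        have hA : (∏ p ∈ n.primeFactors, (if p < Q then M else 1)) ≤ M ^ Q := by
          rw [Finset.prod_ite, Finset.prod_const, Finset.prod_const, one_pow, mul_one]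
          apply pow_le_pow_right₀ hM1
          calc (n.primeFactors.filter (fun p => p < Q)).card
              ≤ (Finset.range Q).card := Finset.card_le_card (fun p hp => by
                simp only [Finset.mem_filter] at hp
                exact Finset.mem_range.mpr hp.2)
            _ = Q := Finset.card_range Q
        rw [hB]
        exact mul_le_mul_of_nonneg_right hA (by positivity)


lemma fmax {A B : ℕ} (hA : A ≠ 0) (hB : B ≠ 0) (k : ℕ) :
    (((Nat.lcm A B).factorization k : ℕ) : ℝ) =
      max ((A.factorization k : ℕ) : ℝ) ((B.factorization k : ℕ) : ℝ) := by
  rw [Nat.factorization_lcm hA hB, Finsupp.sup_apply]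
  simp [Nat.cast_max]

lemma step {s R : ℝ} {A B : ℕ} (hA : A ≠ 0) (hB : B ≠ 0) {k : ℕ}
    (h1 : s * ((A.factorization k : ℕ) : ℝ) ≤ R)
    (h2 : s * ((B.factorization k : ℕ) : ℝ) ≤ R) :
    s * (((Nat.lcm A B).factorization k : ℕ) : ℝ) ≤ R := by
  rw [fmax hA hB k]
  rcases max_cases ((A.factorization k : ℕ) : ℝ) ((B.factorization k : ℕ) : ℝ) with
    ⟨h, -⟩ | ⟨h, -⟩ <;> rw [h] <;> assumption

lemma leaf {s m xa xb fa fb R : ℝ} (hs : s ≤ xa + xb) (ha : 0 ≤ xa) (hb : 0 ≤ xb)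
    (hm : 0 ≤ m) (hfa : m ≤ fa) (hfb : m ≤ fb) (hR : xa * fa + xb * fb ≤ R) : s * m ≤ R := by
  nlinarith [mul_le_mul_of_nonneg_left hfa ha, mul_le_mul_of_nonneg_left hfb hb,
    mul_le_mul_of_nonneg_right hs hm]

lemma fle {A B : ℕ} (hA : A ≠ 0) (hB : B ≠ 0) (h : A ∣ B) (k : ℕ) :
    ((A.factorization k : ℕ) : ℝ) ≤ ((B.factorization k : ℕ) : ℝ) := by
  exact_mod_cast Finsupp.le_def.mp ((Nat.factorization_le_iff_dvd hA hB).mpr h) k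

lemma log_eq {m N : ℕ} (hm : m ≠ 0) (hN : N ≠ 0) (h : m ∣ N) :
    Real.log m = ∑ q ∈ N.primeFactors, ((m.factorization q : ℕ) : ℝ) * Real.log q := by
  have hsub : m.primeFactors ⊆ N.primeFactors := Nat.primeFactors_mono h hN
  have hprod : ∏ q ∈ N.primeFactors, q ^ m.factorization q = m := by
    rw [← Finset.prod_subset hsub (fun x _ hx => ?_)]
    · calc ∏ q ∈ m.primeFactors, q ^ m.factorization q
          = m.factorization.prod (· ^ ·) := by rw [← Nat.support_factorization]; rfl
        _ = m := Nat.factorization_prod_pow_eq_self hm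
    · have h0 : m.factorization x = 0 :=
        Finsupp.notMem_support_iff.mp (by rw [Nat.support_factorization]; exact hx)
      simp [h0]
  have hcast : (m : ℝ) = ∏ q ∈ N.primeFactors, (q : ℝ) ^ m.factorization q := by
    have h2 := congrArg (fun z : ℕ => (z : ℝ)) hprod
    push_cast at h2
    exact h2.symm
  rw [hcast, Real.log_prod (fun q hq => by
    have := (Nat.prime_of_mem_primeFactors hq).pos
    positivity)]
  simp [Real.log_pow]

lemma pt {s f g1 g2 g3 g4 g5 g6 g7 x1 x2 x3 x4 x5 x6 x7 l : ℝ} (hl : 0 ≤ l)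
    (h : s * f ≤ x1 * g1 + x2 * g2 + x3 * g3 + x4 * g4 + x5 * g5 + x6 * g6 + x7 * g7) :
    s * (f * l) ≤ x1 * (g1 * l) + x2 * (g2 * l) + x3 * (g3 * l) + x4 * (g4 * l) +
      x5 * (g5 * l) + x6 * (g6 * l) + x7 * (g7 * l) := by
  nlinarith [mul_le_mul_of_nonneg_right h hl]
set_option maxHeartbeats 4000000 in
lemma core (s x1 x2 x3 y1 y2 y3 y4 : ℝ) (hs0 : 0 ≤ s)
    (hx1 : 0 ≤ x1) (hx2 : 0 ≤ x2) (hx3 : 0 ≤ x3)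
    (hy1 : 0 ≤ y1) (hy2 : 0 ≤ y2) (hy3 : 0 ≤ y3) (hy4 : 0 ≤ y4)
    (he1 : s ≤ x1 + y4) (he2 : s ≤ x2 + y4) (he3 : s ≤ x3 + y4)
    (hp : s ≤ x1 + y2) (hq : s ≤ x1 + y3) (hr : s ≤ x2 + y1) (hss : s ≤ x2 + y3)
    (ht : s ≤ x3 + y1) (hv : s ≤ x3 + y2)
    (ha : s ≤ y1 + y2) (hbb : s ≤ y1 + y3) (hcc : s ≤ y2 + y3)
    (E1 E2 E3 A B C P Qd R S T V : ℕ)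
    (nE1 : E1 ≠ 0) (nE2 : E2 ≠ 0) (nE3 : E3 ≠ 0) (nA : A ≠ 0) (nB : B ≠ 0) (nC : C ≠ 0)
    (nP : P ≠ 0) (nQd : Qd ≠ 0) (nR : R ≠ 0) (nS : S ≠ 0) (nT : T ≠ 0) (nV : V ≠ 0) :
    ((Nat.lcm (Nat.lcm (Nat.lcm E1 P) Qd) (Nat.lcm (Nat.lcm (Nat.lcm E2 R) S) (Nat.lcm (Nat.lcm (Nat.lcm E3 T) V) (Nat.lcm (Nat.lcm (Nat.lcm (Nat.lcm R T) A) B) (Nat.lcm (Nat.lcm (Nat.lcm (Nat.lcm P V) A) C) (Nat.lcm (Nat.lcm (Nat.lcm (Nat.lcm Qd S) B) C) (Nat.lcm (Nat.lcm E1 E2) E3))))))) : ℝ) ^ s ≤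
      ((Nat.lcm (Nat.lcm E1 P) Qd : ℕ) : ℝ) ^ x1 * ((Nat.lcm (Nat.lcm E2 R) S : ℕ) : ℝ) ^ x2 * ((Nat.lcm (Nat.lcm E3 T) V : ℕ) : ℝ) ^ x3 * ((Nat.lcm (Nat.lcm (Nat.lcm R T) A) B : ℕ) : ℝ) ^ y1 * ((Nat.lcm (Nat.lcm (Nat.lcm P V) A) C : ℕ) : ℝ) ^ y2 * ((Nat.lcm (Nat.lcm (Nat.lcm Qd S) B) C : ℕ) : ℝ) ^ y3 * ((Nat.lcm (Nat.lcm E1 E2) E3 : ℕ) : ℝ) ^ y4 := by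
  set b1 : ℕ := Nat.lcm (Nat.lcm E1 P) Qd with hb1def
  set b2 : ℕ := Nat.lcm (Nat.lcm E2 R) S with hb2def
  set b3 : ℕ := Nat.lcm (Nat.lcm E3 T) V with hb3def
  set c1 : ℕ := Nat.lcm (Nat.lcm (Nat.lcm R T) A) B with hc1def
  set c2 : ℕ := Nat.lcm (Nat.lcm (Nat.lcm P V) A) C with hc2def
  set c3 : ℕ := Nat.lcm (Nat.lcm (Nat.lcm Qd S) B) C with hc3def
  set c4 : ℕ := Nat.lcm (Nat.lcm E1 E2) E3 with hc4def
  set LT : ℕ := Nat.lcm b1 (Nat.lcm b2 (Nat.lcm b3 (Nat.lcm c1 (Nat.lcm c2 (Nat.lcm c3 c4))))) with hLTdef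
  have nb1 : b1 ≠ 0 := Nat.lcm_ne_zero (Nat.lcm_ne_zero nE1 nP) nQd
  have nb2 : b2 ≠ 0 := Nat.lcm_ne_zero (Nat.lcm_ne_zero nE2 nR) nS
  have nb3 : b3 ≠ 0 := Nat.lcm_ne_zero (Nat.lcm_ne_zero nE3 nT) nV
  have nc1 : c1 ≠ 0 := Nat.lcm_ne_zero (Nat.lcm_ne_zero (Nat.lcm_ne_zero nR nT) nA) nB
  have nc2 : c2 ≠ 0 := Nat.lcm_ne_zero (Nat.lcm_ne_zero (Nat.lcm_ne_zero nP nV) nA) nC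
  have nc3 : c3 ≠ 0 := Nat.lcm_ne_zero (Nat.lcm_ne_zero (Nat.lcm_ne_zero nQd nS) nB) nC
  have nc4 : c4 ≠ 0 := Nat.lcm_ne_zero (Nat.lcm_ne_zero nE1 nE2) nE3
  have nr5 : Nat.lcm c3 c4 ≠ 0 := Nat.lcm_ne_zero nc3 nc4
  have nr4 : Nat.lcm c2 (Nat.lcm c3 c4) ≠ 0 := Nat.lcm_ne_zero nc2 nr5
  have nr3 : Nat.lcm c1 (Nat.lcm c2 (Nat.lcm c3 c4)) ≠ 0 := Nat.lcm_ne_zero nc1 nr4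
  have nr2 : Nat.lcm b3 (Nat.lcm c1 (Nat.lcm c2 (Nat.lcm c3 c4))) ≠ 0 := Nat.lcm_ne_zero nb3 nr3
  have nr1 : Nat.lcm b2 (Nat.lcm b3 (Nat.lcm c1 (Nat.lcm c2 (Nat.lcm c3 c4)))) ≠ 0 := Nat.lcm_ne_zero nb2 nr2
  have nLT : LT ≠ 0 := Nat.lcm_ne_zero nb1 nr1
  have dE1b1 : E1 ∣ b1 := (Nat.dvd_lcm_left E1 P).trans (Nat.dvd_lcm_left _ Qd)
  have dPb1 : P ∣ b1 := (Nat.dvd_lcm_right E1 P).trans (Nat.dvd_lcm_left _ Qd)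
  have dQdb1 : Qd ∣ b1 := Nat.dvd_lcm_right _ _
  have dE2b2 : E2 ∣ b2 := (Nat.dvd_lcm_left E2 R).trans (Nat.dvd_lcm_left _ S)
  have dRb2 : R ∣ b2 := (Nat.dvd_lcm_right E2 R).trans (Nat.dvd_lcm_left _ S)
  have dSb2 : S ∣ b2 := Nat.dvd_lcm_right _ _
  have dE3b3 : E3 ∣ b3 := (Nat.dvd_lcm_left E3 T).trans (Nat.dvd_lcm_left _ V)
  have dTb3 : T ∣ b3 := (Nat.dvd_lcm_right E3 T).trans (Nat.dvd_lcm_left _ V)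
  have dVb3 : V ∣ b3 := Nat.dvd_lcm_right _ _
  have dRc1 : R ∣ c1 := ((Nat.dvd_lcm_left R T).trans (Nat.dvd_lcm_left _ A)).trans (Nat.dvd_lcm_left _ B)
  have dTc1 : T ∣ c1 := ((Nat.dvd_lcm_right R T).trans (Nat.dvd_lcm_left _ A)).trans (Nat.dvd_lcm_left _ B)
  have dAc1 : A ∣ c1 := (Nat.dvd_lcm_right _ A).trans (Nat.dvd_lcm_left _ B)
  have dBc1 : B ∣ c1 := Nat.dvd_lcm_right _ _
  have dPc2 : P ∣ c2 := ((Nat.dvd_lcm_left P V).trans (Nat.dvd_lcm_left _ A)).trans (Nat.dvd_lcm_left _ C)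
  have dVc2 : V ∣ c2 := ((Nat.dvd_lcm_right P V).trans (Nat.dvd_lcm_left _ A)).trans (Nat.dvd_lcm_left _ C)
  have dAc2 : A ∣ c2 := (Nat.dvd_lcm_right _ A).trans (Nat.dvd_lcm_left _ C)
  have dCc2 : C ∣ c2 := Nat.dvd_lcm_right _ _
  have dQdc3 : Qd ∣ c3 := ((Nat.dvd_lcm_left Qd S).trans (Nat.dvd_lcm_left _ B)).trans (Nat.dvd_lcm_left _ C)
  have dSc3 : S ∣ c3 := ((Nat.dvd_lcm_right Qd S).trans (Nat.dvd_lcm_left _ B)).trans (Nat.dvd_lcm_left _ C)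
  have dBc3 : B ∣ c3 := (Nat.dvd_lcm_right _ B).trans (Nat.dvd_lcm_left _ C)
  have dCc3 : C ∣ c3 := Nat.dvd_lcm_right _ _
  have dE1c4 : E1 ∣ c4 := (Nat.dvd_lcm_left E1 E2).trans (Nat.dvd_lcm_left _ E3)
  have dE2c4 : E2 ∣ c4 := (Nat.dvd_lcm_right E1 E2).trans (Nat.dvd_lcm_left _ E3)
  have dE3c4 : E3 ∣ c4 := Nat.dvd_lcm_right _ _
  have db1 : b1 ∣ LT := Nat.dvd_lcm_left _ _
  have db2 : b2 ∣ LT := (Nat.dvd_lcm_left _ _).trans (Nat.dvd_lcm_right _ _)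
  have db3 : b3 ∣ LT := ((Nat.dvd_lcm_left _ _).trans (Nat.dvd_lcm_right _ _)).trans (Nat.dvd_lcm_right _ _)
  have dc1 : c1 ∣ LT := (((Nat.dvd_lcm_left _ _).trans (Nat.dvd_lcm_right _ _)).trans (Nat.dvd_lcm_right _ _)).trans (Nat.dvd_lcm_right _ _)
  have dc2 : c2 ∣ LT := ((((Nat.dvd_lcm_left _ _).trans (Nat.dvd_lcm_right _ _)).trans (Nat.dvd_lcm_right _ _)).trans (Nat.dvd_lcm_right _ _)).trans (Nat.dvd_lcm_right _ _)
  have dc3 : c3 ∣ LT := (((((Nat.dvd_lcm_left _ _).trans (Nat.dvd_lcm_right _ _)).trans (Nat.dvd_lcm_right _ _)).trans (Nat.dvd_lcm_right _ _)).trans (Nat.dvd_lcm_right _ _)).trans (Nat.dvd_lcm_right _ _)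
  have dc4 : c4 ∣ LT := (((((Nat.dvd_lcm_right _ _).trans (Nat.dvd_lcm_right _ _)).trans (Nat.dvd_lcm_right _ _)).trans (Nat.dvd_lcm_right _ _)).trans (Nat.dvd_lcm_right _ _)).trans (Nat.dvd_lcm_right _ _)
  have key : ∀ k : ℕ, s * ((LT.factorization k : ℕ) : ℝ) ≤ x1 * (((b1).factorization k : ℕ) : ℝ) + x2 * (((b2).factorization k : ℕ) : ℝ) + x3 * (((b3).factorization k : ℕ) : ℝ) + y1 * (((c1).factorization k : ℕ) : ℝ) + y2 * (((c2).factorization k : ℕ) : ℝ) + y3 * (((c3).factorization k : ℕ) : ℝ) + y4 * (((c4).factorization k : ℕ) : ℝ) := by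
    intro k
    have F1 : (0:ℝ) ≤ x1 * (((b1).factorization k : ℕ) : ℝ) := mul_nonneg hx1 (Nat.cast_nonneg _)
    have F2 : (0:ℝ) ≤ x2 * (((b2).factorization k : ℕ) : ℝ) := mul_nonneg hx2 (Nat.cast_nonneg _)
    have F3 : (0:ℝ) ≤ x3 * (((b3).factorization k : ℕ) : ℝ) := mul_nonneg hx3 (Nat.cast_nonneg _)
    have F4 : (0:ℝ) ≤ y1 * (((c1).factorization k : ℕ) : ℝ) := mul_nonneg hy1 (Nat.cast_nonneg _)
    have F5 : (0:ℝ) ≤ y2 * (((c2).factorization k : ℕ) : ℝ) := mul_nonneg hy2 (Nat.cast_nonneg _)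
    have F6 : (0:ℝ) ≤ y3 * (((c3).factorization k : ℕ) : ℝ) := mul_nonneg hy3 (Nat.cast_nonneg _)
    have F7 : (0:ℝ) ≤ y4 * (((c4).factorization k : ℕ) : ℝ) := mul_nonneg hy4 (Nat.cast_nonneg _)
    refine step nb1 nr1 ?_ (step nb2 nr2 ?_ (step nb3 nr3 ?_ (step nc1 nr4 ?_ (step nc2 nr5 ?_ (step nc3 nc4 ?_ ?_)))))
    · -- pool b1
      refine step (Nat.lcm_ne_zero nE1 nP) nQd (step nE1 nP ?_ ?_) ?_
      · exact leaf he1 hx1 hy4 (Nat.cast_nonneg _) (fle nE1 nb1 dE1b1 k) (fle nE1 nc4 dE1c4 k) (by linarith [F1, F2, F3, F4, F5, F6, F7])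
      · exact leaf hp hx1 hy2 (Nat.cast_nonneg _) (fle nP nb1 dPb1 k) (fle nP nc2 dPc2 k) (by linarith [F1, F2, F3, F4, F5, F6, F7])
      · exact leaf hq hx1 hy3 (Nat.cast_nonneg _) (fle nQd nb1 dQdb1 k) (fle nQd nc3 dQdc3 k) (by linarith [F1, F2, F3, F4, F5, F6, F7])
    · -- pool b2
      refine step (Nat.lcm_ne_zero nE2 nR) nS (step nE2 nR ?_ ?_) ?_
      · exact leaf he2 hx2 hy4 (Nat.cast_nonneg _) (fle nE2 nb2 dE2b2 k) (fle nE2 nc4 dE2c4 k) (by linarith [F1, F2, F3, F4, F5, F6, F7])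
      · exact leaf hr hx2 hy1 (Nat.cast_nonneg _) (fle nR nb2 dRb2 k) (fle nR nc1 dRc1 k) (by linarith [F1, F2, F3, F4, F5, F6, F7])
      · exact leaf hss hx2 hy3 (Nat.cast_nonneg _) (fle nS nb2 dSb2 k) (fle nS nc3 dSc3 k) (by linarith [F1, F2, F3, F4, F5, F6, F7])
    · -- pool b3
      refine step (Nat.lcm_ne_zero nE3 nT) nV (step nE3 nT ?_ ?_) ?_
      · exact leaf he3 hx3 hy4 (Nat.cast_nonneg _) (fle nE3 nb3 dE3b3 k) (fle nE3 nc4 dE3c4 k) (by linarith [F1, F2, F3, F4, F5, F6, F7])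
      · exact leaf ht hx3 hy1 (Nat.cast_nonneg _) (fle nT nb3 dTb3 k) (fle nT nc1 dTc1 k) (by linarith [F1, F2, F3, F4, F5, F6, F7])
      · exact leaf hv hx3 hy2 (Nat.cast_nonneg _) (fle nV nb3 dVb3 k) (fle nV nc2 dVc2 k) (by linarith [F1, F2, F3, F4, F5, F6, F7])
    · -- pool c1
      refine step (Nat.lcm_ne_zero (Nat.lcm_ne_zero nR nT) nA) nB (step (Nat.lcm_ne_zero nR nT) nA (step nR nT ?_ ?_) ?_) ?_
      · exact leaf hr hx2 hy1 (Nat.cast_nonneg _) (fle nR nb2 dRb2 k) (fle nR nc1 dRc1 k) (by linarith [F1, F2, F3, F4, F5, F6, F7])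
      · exact leaf ht hx3 hy1 (Nat.cast_nonneg _) (fle nT nb3 dTb3 k) (fle nT nc1 dTc1 k) (by linarith [F1, F2, F3, F4, F5, F6, F7])
      · exact leaf ha hy1 hy2 (Nat.cast_nonneg _) (fle nA nc1 dAc1 k) (fle nA nc2 dAc2 k) (by linarith [F1, F2, F3, F4, F5, F6, F7])
      · exact leaf hbb hy1 hy3 (Nat.cast_nonneg _) (fle nB nc1 dBc1 k) (fle nB nc3 dBc3 k) (by linarith [F1, F2, F3, F4, F5, F6, F7])
    · -- pool c2
      refine step (Nat.lcm_ne_zero (Nat.lcm_ne_zero nP nV) nA) nC (step (Nat.lcm_ne_zero nP nV) nA (step nP nV ?_ ?_) ?_) ?_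
      · exact leaf hp hx1 hy2 (Nat.cast_nonneg _) (fle nP nb1 dPb1 k) (fle nP nc2 dPc2 k) (by linarith [F1, F2, F3, F4, F5, F6, F7])
      · exact leaf hv hx3 hy2 (Nat.cast_nonneg _) (fle nV nb3 dVb3 k) (fle nV nc2 dVc2 k) (by linarith [F1, F2, F3, F4, F5, F6, F7])
      · exact leaf ha hy1 hy2 (Nat.cast_nonneg _) (fle nA nc1 dAc1 k) (fle nA nc2 dAc2 k) (by linarith [F1, F2, F3, F4, F5, F6, F7])
      · exact leaf hcc hy2 hy3 (Nat.cast_nonneg _) (fle nC nc2 dCc2 k) (fle nC nc3 dCc3 k) (by linarith [F1, F2, F3, F4, F5, F6, F7])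
    · -- pool c3
      refine step (Nat.lcm_ne_zero (Nat.lcm_ne_zero nQd nS) nB) nC (step (Nat.lcm_ne_zero nQd nS) nB (step nQd nS ?_ ?_) ?_) ?_
      · exact leaf hq hx1 hy3 (Nat.cast_nonneg _) (fle nQd nb1 dQdb1 k) (fle nQd nc3 dQdc3 k) (by linarith [F1, F2, F3, F4, F5, F6, F7])
      · exact leaf hss hx2 hy3 (Nat.cast_nonneg _) (fle nS nb2 dSb2 k) (fle nS nc3 dSc3 k) (by linarith [F1, F2, F3, F4, F5, F6, F7])
      · exact leaf hbb hy1 hy3 (Nat.cast_nonneg _) (fle nB nc1 dBc1 k) (fle nB nc3 dBc3 k) (by linarith [F1, F2, F3, F4, F5, F6, F7])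
      · exact leaf hcc hy2 hy3 (Nat.cast_nonneg _) (fle nC nc2 dCc2 k) (fle nC nc3 dCc3 k) (by linarith [F1, F2, F3, F4, F5, F6, F7])
    · -- pool c4
      refine step (Nat.lcm_ne_zero nE1 nE2) nE3 (step nE1 nE2 ?_ ?_) ?_
      · exact leaf he1 hx1 hy4 (Nat.cast_nonneg _) (fle nE1 nb1 dE1b1 k) (fle nE1 nc4 dE1c4 k) (by linarith [F1, F2, F3, F4, F5, F6, F7])
      · exact leaf he2 hx2 hy4 (Nat.cast_nonneg _) (fle nE2 nb2 dE2b2 k) (fle nE2 nc4 dE2c4 k) (by linarith [F1, F2, F3, F4, F5, F6, F7])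
      · exact leaf he3 hx3 hy4 (Nat.cast_nonneg _) (fle nE3 nb3 dE3b3 k) (fle nE3 nc4 dE3c4 k) (by linarith [F1, F2, F3, F4, F5, F6, F7])
  have hlogL : Real.log (LT : ℝ) = ∑ k ∈ LT.primeFactors, ((LT.factorization k : ℕ) : ℝ) * Real.log k := log_eq nLT nLT dvd_rfl
  have hlogb1 : Real.log (b1 : ℝ) = ∑ k ∈ LT.primeFactors, (((b1).factorization k : ℕ) : ℝ) * Real.log k := log_eq nb1 nLT db1
  have hlogb2 : Real.log (b2 : ℝ) = ∑ k ∈ LT.primeFactors, (((b2).factorization k : ℕ) : ℝ) * Real.log k := log_eq nb2 nLT db2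
  have hlogb3 : Real.log (b3 : ℝ) = ∑ k ∈ LT.primeFactors, (((b3).factorization k : ℕ) : ℝ) * Real.log k := log_eq nb3 nLT db3
  have hlogc1 : Real.log (c1 : ℝ) = ∑ k ∈ LT.primeFactors, (((c1).factorization k : ℕ) : ℝ) * Real.log k := log_eq nc1 nLT dc1
  have hlogc2 : Real.log (c2 : ℝ) = ∑ k ∈ LT.primeFactors, (((c2).factorization k : ℕ) : ℝ) * Real.log k := log_eq nc2 nLT dc2
  have hlogc3 : Real.log (c3 : ℝ) = ∑ k ∈ LT.primeFactors, (((c3).factorization k : ℕ) : ℝ) * Real.log k := log_eq nc3 nLT dc3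
  have hlogc4 : Real.log (c4 : ℝ) = ∑ k ∈ LT.primeFactors, (((c4).factorization k : ℕ) : ℝ) * Real.log k := log_eq nc4 nLT dc4
  have hsum : s * Real.log (LT : ℝ) ≤ x1 * Real.log (b1 : ℝ) + x2 * Real.log (b2 : ℝ) + x3 * Real.log (b3 : ℝ) + y1 * Real.log (c1 : ℝ) + y2 * Real.log (c2 : ℝ) + y3 * Real.log (c3 : ℝ) + y4 * Real.log (c4 : ℝ) := by
    rw [hlogL, hlogb1, hlogb2, hlogb3, hlogc1, hlogc2, hlogc3, hlogc4]
    simp only [Finset.mul_sum]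
    rw [← Finset.sum_add_distrib, ← Finset.sum_add_distrib, ← Finset.sum_add_distrib, ← Finset.sum_add_distrib, ← Finset.sum_add_distrib, ← Finset.sum_add_distrib]
    refine Finset.sum_le_sum fun k hk => ?_
    have hlk : (0:ℝ) ≤ Real.log k := Real.log_nonneg (by exact_mod_cast (Nat.prime_of_mem_primeFactors hk).one_lt.le)
    exact pt hlk (key k)
  have hLpos : (0:ℝ) < (LT : ℝ) := by exact_mod_cast Nat.pos_of_ne_zero nLT
  have hb1pos : (0:ℝ) < (b1 : ℝ) := by exact_mod_cast Nat.pos_of_ne_zero nb1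
  have hb2pos : (0:ℝ) < (b2 : ℝ) := by exact_mod_cast Nat.pos_of_ne_zero nb2
  have hb3pos : (0:ℝ) < (b3 : ℝ) := by exact_mod_cast Nat.pos_of_ne_zero nb3
  have hc1pos : (0:ℝ) < (c1 : ℝ) := by exact_mod_cast Nat.pos_of_ne_zero nc1
  have hc2pos : (0:ℝ) < (c2 : ℝ) := by exact_mod_cast Nat.pos_of_ne_zero nc2
  have hc3pos : (0:ℝ) < (c3 : ℝ) := by exact_mod_cast Nat.pos_of_ne_zero nc3
  have hc4pos : (0:ℝ) < (c4 : ℝ) := by exact_mod_cast Nat.pos_of_ne_zero nc4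
  rw [Real.rpow_def_of_pos hLpos, Real.rpow_def_of_pos hb1pos, Real.rpow_def_of_pos hb2pos, Real.rpow_def_of_pos hb3pos, Real.rpow_def_of_pos hc1pos, Real.rpow_def_of_pos hc2pos, Real.rpow_def_of_pos hc3pos, Real.rpow_def_of_pos hc4pos]
  rw [← Real.exp_add, ← Real.exp_add, ← Real.exp_add, ← Real.exp_add, ← Real.exp_add, ← Real.exp_add]
  rw [Real.exp_le_exp]
  nlinarith [hsum]

lemma term_le_general (ε u₁ u₂ u₃ w₁ w₂ w₃ w₄ κ : ℝ) (hκ : 0 ≤ κ)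
    {n1 n2 n3 m1 m2 m3 m4 NL : ℕ}
    (hn1 : n1 ≠ 0) (hn2 : n2 ≠ 0) (hn3 : n3 ≠ 0) (hm1 : m1 ≠ 0) (hm2 : m2 ≠ 0)
    (hm3 : m3 ≠ 0) (hm4 : m4 ≠ 0) (hNL : NL ≠ 0)
    (hcore1 : ((NL : ℕ) : ℝ) ^ (1 + ε) ≤
      (n1 : ℝ) ^ (u₁ - κ) * (n2 : ℝ) ^ u₂ * (n3 : ℝ) ^ u₃ * (m1 : ℝ) ^ (w₁ - κ) *
        (m2 : ℝ) ^ w₂ * (m3 : ℝ) ^ w₃ * (m4 : ℝ) ^ w₄)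
    (hcore2 : ((NL : ℕ) : ℝ) ^ (1 + ε) ≤
      (n1 : ℝ) ^ u₁ * (n2 : ℝ) ^ (u₂ - κ) * (n3 : ℝ) ^ u₃ * (m1 : ℝ) ^ w₁ *
        (m2 : ℝ) ^ (w₂ - κ) * (m3 : ℝ) ^ w₃ * (m4 : ℝ) ^ w₄)
    (hcore3 : ((NL : ℕ) : ℝ) ^ (1 + ε) ≤
      (n1 : ℝ) ^ u₁ * (n2 : ℝ) ^ u₂ * (n3 : ℝ) ^ (u₃ - κ) * (m1 : ℝ) ^ w₁ *
        (m2 : ℝ) ^ w₂ * (m3 : ℝ) ^ (w₃ - κ) * (m4 : ℝ) ^ w₄) :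
    ((max (n1 * m1) (max (n2 * m2) (n3 * m3)) : ℕ) : ℝ) ^ κ /
      ((n1 : ℝ) ^ u₁ * (n2 : ℝ) ^ u₂ * (n3 : ℝ) ^ u₃ * (m1 : ℝ) ^ w₁ *
        (m2 : ℝ) ^ w₂ * (m3 : ℝ) ^ w₃ * (m4 : ℝ) ^ w₄) ≤
      3 * ((NL : ℕ) : ℝ) ^ (-(1 + ε)) := by
  have pn1 : (0:ℝ) < (n1 : ℝ) := by exact_mod_cast Nat.pos_of_ne_zero hn1
  have pn2 : (0:ℝ) < (n2 : ℝ) := by exact_mod_cast Nat.pos_of_ne_zero hn2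
  have pn3 : (0:ℝ) < (n3 : ℝ) := by exact_mod_cast Nat.pos_of_ne_zero hn3
  have pm1 : (0:ℝ) < (m1 : ℝ) := by exact_mod_cast Nat.pos_of_ne_zero hm1
  have pm2 : (0:ℝ) < (m2 : ℝ) := by exact_mod_cast Nat.pos_of_ne_zero hm2
  have pm3 : (0:ℝ) < (m3 : ℝ) := by exact_mod_cast Nat.pos_of_ne_zero hm3
  have pm4 : (0:ℝ) < (m4 : ℝ) := by exact_mod_cast Nat.pos_of_ne_zero hm4
  have pNL : (0:ℝ) < (NL : ℝ) := by exact_mod_cast Nat.pos_of_ne_zero hNL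
  set D : ℝ := (n1 : ℝ) ^ u₁ * (n2 : ℝ) ^ u₂ * (n3 : ℝ) ^ u₃ * (m1 : ℝ) ^ w₁ *
      (m2 : ℝ) ^ w₂ * (m3 : ℝ) ^ w₃ * (m4 : ℝ) ^ w₄ with hD
  have hDpos : 0 < D := by
    rw [hD]; positivity
  have hNLs : (0:ℝ) < ((NL : ℕ) : ℝ) ^ (1 + ε) := Real.rpow_pos_of_pos pNL _
  -- the three pieces
  have key1 : ((n1 * m1 : ℕ) : ℝ) ^ κ / D ≤ ((NL : ℕ) : ℝ) ^ (-(1 + ε)) := by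
    have hPeq : ((n1 * m1 : ℕ) : ℝ) ^ κ *
        ((n1 : ℝ) ^ (u₁ - κ) * (n2 : ℝ) ^ u₂ * (n3 : ℝ) ^ u₃ * (m1 : ℝ) ^ (w₁ - κ) *
          (m2 : ℝ) ^ w₂ * (m3 : ℝ) ^ w₃ * (m4 : ℝ) ^ w₄) = D := by
      push_cast
      rw [Real.mul_rpow pn1.le pm1.le]
      rw [show (n1:ℝ) ^ κ * (m1:ℝ) ^ κ *
          ((n1 : ℝ) ^ (u₁ - κ) * (n2 : ℝ) ^ u₂ * (n3 : ℝ) ^ u₃ * (m1 : ℝ) ^ (w₁ - κ) *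
          (m2 : ℝ) ^ w₂ * (m3 : ℝ) ^ w₃ * (m4 : ℝ) ^ w₄) =
          ((n1:ℝ) ^ κ * (n1 : ℝ) ^ (u₁ - κ)) * ((m1:ℝ) ^ κ * (m1 : ℝ) ^ (w₁ - κ)) *
          ((n2 : ℝ) ^ u₂ * (n3 : ℝ) ^ u₃ * (m2 : ℝ) ^ w₂ * (m3 : ℝ) ^ w₃ * (m4 : ℝ) ^ w₄)
        from by ring]
      rw [← Real.rpow_add pn1, ← Real.rpow_add pm1,
        show κ + (u₁ - κ) = u₁ from by ring, show κ + (w₁ - κ) = w₁ from by ring, hD]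
      ring
    rw [Real.rpow_neg (Nat.cast_nonneg _), ← one_div, div_le_div_iff₀ hDpos hNLs]
    calc ((n1 * m1 : ℕ) : ℝ) ^ κ * ((NL : ℕ) : ℝ) ^ (1 + ε) ≤
        ((n1 * m1 : ℕ) : ℝ) ^ κ *
        ((n1 : ℝ) ^ (u₁ - κ) * (n2 : ℝ) ^ u₂ * (n3 : ℝ) ^ u₃ * (m1 : ℝ) ^ (w₁ - κ) *
          (m2 : ℝ) ^ w₂ * (m3 : ℝ) ^ w₃ * (m4 : ℝ) ^ w₄) :=
          mul_le_mul_of_nonneg_left hcore1 (Real.rpow_nonneg (Nat.cast_nonneg _) _)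
      _ = D := hPeq
      _ = 1 * D := (one_mul D).symm
  have key2 : ((n2 * m2 : ℕ) : ℝ) ^ κ / D ≤ ((NL : ℕ) : ℝ) ^ (-(1 + ε)) := by
    have hPeq : ((n2 * m2 : ℕ) : ℝ) ^ κ *
        ((n1 : ℝ) ^ u₁ * (n2 : ℝ) ^ (u₂ - κ) * (n3 : ℝ) ^ u₃ * (m1 : ℝ) ^ w₁ *
          (m2 : ℝ) ^ (w₂ - κ) * (m3 : ℝ) ^ w₃ * (m4 : ℝ) ^ w₄) = D := by
      push_cast
      rw [Real.mul_rpow pn2.le pm2.le]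
      rw [show (n2:ℝ) ^ κ * (m2:ℝ) ^ κ *
          ((n1 : ℝ) ^ u₁ * (n2 : ℝ) ^ (u₂ - κ) * (n3 : ℝ) ^ u₃ * (m1 : ℝ) ^ w₁ *
          (m2 : ℝ) ^ (w₂ - κ) * (m3 : ℝ) ^ w₃ * (m4 : ℝ) ^ w₄) =
          ((n2:ℝ) ^ κ * (n2 : ℝ) ^ (u₂ - κ)) * ((m2:ℝ) ^ κ * (m2 : ℝ) ^ (w₂ - κ)) *
          ((n1 : ℝ) ^ u₁ * (n3 : ℝ) ^ u₃ * (m1 : ℝ) ^ w₁ * (m3 : ℝ) ^ w₃ * (m4 : ℝ) ^ w₄)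
        from by ring]
      rw [← Real.rpow_add pn2, ← Real.rpow_add pm2,
        show κ + (u₂ - κ) = u₂ from by ring, show κ + (w₂ - κ) = w₂ from by ring, hD]
      ring
    rw [Real.rpow_neg (Nat.cast_nonneg _), ← one_div, div_le_div_iff₀ hDpos hNLs]
    calc ((n2 * m2 : ℕ) : ℝ) ^ κ * ((NL : ℕ) : ℝ) ^ (1 + ε) ≤
        ((n2 * m2 : ℕ) : ℝ) ^ κ *
        ((n1 : ℝ) ^ u₁ * (n2 : ℝ) ^ (u₂ - κ) * (n3 : ℝ) ^ u₃ * (m1 : ℝ) ^ w₁ *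
          (m2 : ℝ) ^ (w₂ - κ) * (m3 : ℝ) ^ w₃ * (m4 : ℝ) ^ w₄) :=
          mul_le_mul_of_nonneg_left hcore2 (Real.rpow_nonneg (Nat.cast_nonneg _) _)
      _ = D := hPeq
      _ = 1 * D := (one_mul D).symm
  have key3 : ((n3 * m3 : ℕ) : ℝ) ^ κ / D ≤ ((NL : ℕ) : ℝ) ^ (-(1 + ε)) := by
    have hPeq : ((n3 * m3 : ℕ) : ℝ) ^ κ *
        ((n1 : ℝ) ^ u₁ * (n2 : ℝ) ^ u₂ * (n3 : ℝ) ^ (u₃ - κ) * (m1 : ℝ) ^ w₁ *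
          (m2 : ℝ) ^ w₂ * (m3 : ℝ) ^ (w₃ - κ) * (m4 : ℝ) ^ w₄) = D := by
      push_cast
      rw [Real.mul_rpow pn3.le pm3.le]
      rw [show (n3:ℝ) ^ κ * (m3:ℝ) ^ κ *
          ((n1 : ℝ) ^ u₁ * (n2 : ℝ) ^ u₂ * (n3 : ℝ) ^ (u₃ - κ) * (m1 : ℝ) ^ w₁ *
          (m2 : ℝ) ^ w₂ * (m3 : ℝ) ^ (w₃ - κ) * (m4 : ℝ) ^ w₄) =
          ((n3:ℝ) ^ κ * (n3 : ℝ) ^ (u₃ - κ)) * ((m3:ℝ) ^ κ * (m3 : ℝ) ^ (w₃ - κ)) *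
          ((n1 : ℝ) ^ u₁ * (n2 : ℝ) ^ u₂ * (m1 : ℝ) ^ w₁ * (m2 : ℝ) ^ w₂ * (m4 : ℝ) ^ w₄)
        from by ring]
      rw [← Real.rpow_add pn3, ← Real.rpow_add pm3,
        show κ + (u₃ - κ) = u₃ from by ring, show κ + (w₃ - κ) = w₃ from by ring, hD]
      ring
    rw [Real.rpow_neg (Nat.cast_nonneg _), ← one_div, div_le_div_iff₀ hDpos hNLs]
    calc ((n3 * m3 : ℕ) : ℝ) ^ κ * ((NL : ℕ) : ℝ) ^ (1 + ε) ≤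
        ((n3 * m3 : ℕ) : ℝ) ^ κ *
        ((n1 : ℝ) ^ u₁ * (n2 : ℝ) ^ u₂ * (n3 : ℝ) ^ (u₃ - κ) * (m1 : ℝ) ^ w₁ *
          (m2 : ℝ) ^ w₂ * (m3 : ℝ) ^ (w₃ - κ) * (m4 : ℝ) ^ w₄) :=
          mul_le_mul_of_nonneg_left hcore3 (Real.rpow_nonneg (Nat.cast_nonneg _) _)
      _ = D := hPeq
      _ = 1 * D := (one_mul D).symm
  -- split the max
  have hsplit : ((max (n1 * m1) (max (n2 * m2) (n3 * m3)) : ℕ) : ℝ) ^ κ ≤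
      ((n1 * m1 : ℕ) : ℝ) ^ κ + ((n2 * m2 : ℕ) : ℝ) ^ κ + ((n3 * m3 : ℕ) : ℝ) ^ κ := by
    have g1 : (0:ℝ) ≤ ((n1 * m1 : ℕ) : ℝ) ^ κ := Real.rpow_nonneg (Nat.cast_nonneg _) _
    have g2 : (0:ℝ) ≤ ((n2 * m2 : ℕ) : ℝ) ^ κ := Real.rpow_nonneg (Nat.cast_nonneg _) _
    have g3 : (0:ℝ) ≤ ((n3 * m3 : ℕ) : ℝ) ^ κ := Real.rpow_nonneg (Nat.cast_nonneg _) _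
    rcases max_choice (n1 * m1) (max (n2 * m2) (n3 * m3)) with h | h
    · rw [h]; linarith
    · rw [h]
      rcases max_choice (n2 * m2) (n3 * m3) with h2 | h2 <;> rw [h2] <;> linarith
  calc ((max (n1 * m1) (max (n2 * m2) (n3 * m3)) : ℕ) : ℝ) ^ κ / D ≤
      (((n1 * m1 : ℕ) : ℝ) ^ κ + ((n2 * m2 : ℕ) : ℝ) ^ κ + ((n3 * m3 : ℕ) : ℝ) ^ κ) / D := by
        gcongr
    _ = ((n1 * m1 : ℕ) : ℝ) ^ κ / D + ((n2 * m2 : ℕ) : ℝ) ^ κ / D +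
        ((n3 * m3 : ℕ) : ℝ) ^ κ / D := by ring
    _ ≤ 3 * ((NL : ℕ) : ℝ) ^ (-(1 + ε)) := by linarith
/-- lcm of all the pools (= lcm of all twelve variables). -/
def LL : Idx → ℕ := fun w =>
  Nat.lcm (B1 w) (Nat.lcm (B2 w) (Nat.lcm (B3 w)
    (Nat.lcm (C1 w) (Nat.lcm (C2 w) (Nat.lcm (C3 w) (C4 w))))))

lemma B1_ne (w : Idx) : B1 w ≠ 0 := by
  obtain ⟨⟨e₁,e₂,e₃⟩,⟨a,b,c⟩,⟨p,q,r,s,t,v⟩⟩ := w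
  exact Nat.lcm_ne_zero (Nat.lcm_ne_zero e₁.ne_zero p.ne_zero) q.ne_zero

lemma B2_ne (w : Idx) : B2 w ≠ 0 := by
  obtain ⟨⟨e₁,e₂,e₃⟩,⟨a,b,c⟩,⟨p,q,r,s,t,v⟩⟩ := w
  exact Nat.lcm_ne_zero (Nat.lcm_ne_zero e₂.ne_zero r.ne_zero) s.ne_zero

lemma B3_ne (w : Idx) : B3 w ≠ 0 := by
  obtain ⟨⟨e₁,e₂,e₃⟩,⟨a,b,c⟩,⟨p,q,r,s,t,v⟩⟩ := w
  exact Nat.lcm_ne_zero (Nat.lcm_ne_zero e₃.ne_zero t.ne_zero) v.ne_zero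

lemma C1_ne (w : Idx) : C1 w ≠ 0 := by
  obtain ⟨⟨e₁,e₂,e₃⟩,⟨a,b,c⟩,⟨p,q,r,s,t,v⟩⟩ := w
  exact Nat.lcm_ne_zero (Nat.lcm_ne_zero (Nat.lcm_ne_zero r.ne_zero t.ne_zero) a.ne_zero) b.ne_zero

lemma C2_ne (w : Idx) : C2 w ≠ 0 := by
  obtain ⟨⟨e₁,e₂,e₃⟩,⟨a,b,c⟩,⟨p,q,r,s,t,v⟩⟩ := w
  exact Nat.lcm_ne_zero (Nat.lcm_ne_zero (Nat.lcm_ne_zero p.ne_zero v.ne_zero) a.ne_zero) c.ne_zero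

lemma C3_ne (w : Idx) : C3 w ≠ 0 := by
  obtain ⟨⟨e₁,e₂,e₃⟩,⟨a,b,c⟩,⟨p,q,r,s,t,v⟩⟩ := w
  exact Nat.lcm_ne_zero (Nat.lcm_ne_zero (Nat.lcm_ne_zero q.ne_zero s.ne_zero) b.ne_zero) c.ne_zero

lemma C4_ne (w : Idx) : C4 w ≠ 0 := by
  obtain ⟨⟨e₁,e₂,e₃⟩,⟨a,b,c⟩,⟨p,q,r,s,t,v⟩⟩ := w
  exact Nat.lcm_ne_zero (Nat.lcm_ne_zero e₁.ne_zero e₂.ne_zero) e₃.ne_zero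

lemma LL_ne (w : Idx) : LL w ≠ 0 :=
  Nat.lcm_ne_zero (B1_ne w) (Nat.lcm_ne_zero (B2_ne w) (Nat.lcm_ne_zero (B3_ne w)
    (Nat.lcm_ne_zero (C1_ne w) (Nat.lcm_ne_zero (C2_ne w)
      (Nat.lcm_ne_zero (C3_ne w) (C4_ne w))))))

lemma B1_dvd (w : Idx) : B1 w ∣ LL w := Nat.dvd_lcm_left _ _
lemma B2_dvd (w : Idx) : B2 w ∣ LL w :=
  dvd_trans (Nat.dvd_lcm_left _ _) (Nat.dvd_lcm_right _ _)
lemma B3_dvd (w : Idx) : B3 w ∣ LL w :=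
  dvd_trans (dvd_trans (Nat.dvd_lcm_left _ _) (Nat.dvd_lcm_right _ _)) (Nat.dvd_lcm_right _ _)
lemma C1_dvd (w : Idx) : C1 w ∣ LL w :=
  dvd_trans (dvd_trans (dvd_trans (Nat.dvd_lcm_left _ _) (Nat.dvd_lcm_right _ _))
    (Nat.dvd_lcm_right _ _)) (Nat.dvd_lcm_right _ _)
lemma C2_dvd (w : Idx) : C2 w ∣ LL w :=
  dvd_trans (dvd_trans (dvd_trans (dvd_trans (Nat.dvd_lcm_left _ _) (Nat.dvd_lcm_right _ _))
    (Nat.dvd_lcm_right _ _)) (Nat.dvd_lcm_right _ _)) (Nat.dvd_lcm_right _ _)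
lemma C3_dvd (w : Idx) : C3 w ∣ LL w :=
  dvd_trans (dvd_trans (dvd_trans (dvd_trans (dvd_trans (Nat.dvd_lcm_left _ _)
    (Nat.dvd_lcm_right _ _)) (Nat.dvd_lcm_right _ _)) (Nat.dvd_lcm_right _ _))
    (Nat.dvd_lcm_right _ _)) (Nat.dvd_lcm_right _ _)
lemma C4_dvd (w : Idx) : C4 w ∣ LL w :=
  dvd_trans (dvd_trans (dvd_trans (dvd_trans (dvd_trans (Nat.dvd_lcm_right _ _)
    (Nat.dvd_lcm_right _ _)) (Nat.dvd_lcm_right _ _)) (Nat.dvd_lcm_right _ _))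
    (Nat.dvd_lcm_right _ _)) (Nat.dvd_lcm_right _ _)


lemma dvd_all (w : Idx) : ((w.1.1 : ℕ) ∣ LL w) ∧ ((w.1.2.1 : ℕ) ∣ LL w) ∧ ((w.1.2.2 : ℕ) ∣ LL w)
    ∧ ((w.2.1.1 : ℕ) ∣ LL w) ∧ ((w.2.1.2.1 : ℕ) ∣ LL w) ∧ ((w.2.1.2.2 : ℕ) ∣ LL w)
    ∧ ((w.2.2.1 : ℕ) ∣ LL w) ∧ ((w.2.2.2.1 : ℕ) ∣ LL w) ∧ ((w.2.2.2.2.1 : ℕ) ∣ LL w)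
    ∧ ((w.2.2.2.2.2.1 : ℕ) ∣ LL w) ∧ ((w.2.2.2.2.2.2.1 : ℕ) ∣ LL w)
    ∧ ((w.2.2.2.2.2.2.2 : ℕ) ∣ LL w) := by
  refine ⟨?_, ?_, ?_, ?_, ?_, ?_, ?_, ?_, ?_, ?_, ?_, ?_⟩
  · exact dvd_trans ((Nat.dvd_lcm_left _ _).trans (Nat.dvd_lcm_left _ _)) (B1_dvd w)
  · exact dvd_trans ((Nat.dvd_lcm_left _ _).trans (Nat.dvd_lcm_left _ _)) (B2_dvd w)
  · exact dvd_trans ((Nat.dvd_lcm_left _ _).trans (Nat.dvd_lcm_left _ _)) (B3_dvd w)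
  · exact dvd_trans ((Nat.dvd_lcm_right _ _).trans (Nat.dvd_lcm_left _ _)) (C1_dvd w)
  · exact dvd_trans (Nat.dvd_lcm_right _ _) (C1_dvd w)
  · exact dvd_trans (Nat.dvd_lcm_right _ _) (C3_dvd w)
  · exact dvd_trans ((Nat.dvd_lcm_right _ _).trans (Nat.dvd_lcm_left _ _)) (B1_dvd w)
  · exact dvd_trans (Nat.dvd_lcm_right _ _) (B1_dvd w)
  · exact dvd_trans ((Nat.dvd_lcm_right _ _).trans (Nat.dvd_lcm_left _ _)) (B2_dvd w)
  · exact dvd_trans (Nat.dvd_lcm_right _ _) (B2_dvd w)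
  · exact dvd_trans ((Nat.dvd_lcm_right _ _).trans (Nat.dvd_lcm_left _ _)) (B3_dvd w)
  · exact dvd_trans (Nat.dvd_lcm_right _ _) (B3_dvd w)

open Finset in
/-- fiber counting -/
lemma fiber_card (n : ℕ) (Sf : Finset Idx) :
    (Sf.filter (fun w => LL w = n)).card ≤ n.divisors.card ^ 12 := by
  classical
  set D := n.divisors with hD
  set T : Finset ((ℕ×ℕ×ℕ)×(ℕ×ℕ×ℕ)×(ℕ×ℕ×ℕ×ℕ×ℕ×ℕ)) :=
    (D ×ˢ D ×ˢ D) ×ˢ (D ×ˢ D ×ˢ D) ×ˢ (D ×ˢ D ×ˢ D ×ˢ D ×ˢ D ×ˢ D) with hT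
  have hcard : T.card = D.card ^ 12 := by
    simp [hT, Finset.card_product]; ring
  rw [← hcard]
  apply Finset.card_le_card_of_injOn
    (fun u => (((u.1.1 : ℕ), (u.1.2.1 : ℕ), (u.1.2.2 : ℕ)),
      ((u.2.1.1 : ℕ), (u.2.1.2.1 : ℕ), (u.2.1.2.2 : ℕ)),
      ((u.2.2.1 : ℕ), (u.2.2.2.1 : ℕ), (u.2.2.2.2.1 : ℕ), (u.2.2.2.2.2.1 : ℕ),
        (u.2.2.2.2.2.2.1 : ℕ), (u.2.2.2.2.2.2.2 : ℕ))))
  · intro u hu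
    rw [Finset.mem_coe, Finset.mem_filter] at hu
    obtain ⟨-, hLL⟩ := hu
    have hne : n ≠ 0 := hLL ▸ LL_ne u
    obtain ⟨g1, g2, g3, g4, g5, g6, g7, g8, g9, g10, g11, g12⟩ := dvd_all u
    rw [hLL] at g1 g2 g3 g4 g5 g6 g7 g8 g9 g10 g11 g12
    simp only [hT, Finset.mem_coe, Finset.mem_product, Nat.mem_divisors, hD]
    exact ⟨⟨⟨g1, hne⟩, ⟨g2, hne⟩, ⟨g3, hne⟩⟩, ⟨⟨g4, hne⟩, ⟨g5, hne⟩, ⟨g6, hne⟩⟩,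
      ⟨g7, hne⟩, ⟨g8, hne⟩, ⟨g9, hne⟩, ⟨g10, hne⟩, ⟨g11, hne⟩, ⟨g12, hne⟩⟩
  · intro a ha b hb h
    obtain ⟨⟨a1,a2,a3⟩,⟨a4,a5,a6⟩,⟨a7,a8,a9,a10,a11,a12⟩⟩ := a
    obtain ⟨⟨b1,b2,b3⟩,⟨b4,b5,b6⟩,⟨b7,b8,b9,b10,b11,b12⟩⟩ := b
    simp only [Prod.mk.injEq] at h
    obtain ⟨⟨h1,h2,h3⟩,⟨h4,h5,h6⟩,h7,h8,h9,h10,h11,h12⟩ := h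
    simp only [Prod.mk.injEq]
    exact ⟨⟨PNat.coe_inj.mp h1, PNat.coe_inj.mp h2, PNat.coe_inj.mp h3⟩,
      ⟨PNat.coe_inj.mp h4, PNat.coe_inj.mp h5, PNat.coe_inj.mp h6⟩,
      PNat.coe_inj.mp h7, PNat.coe_inj.mp h8, PNat.coe_inj.mp h9,
      PNat.coe_inj.mp h10, PNat.coe_inj.mp h11, PNat.coe_inj.mp h12⟩

open Finset in
lemma tsum_LL (ε : ℝ) (hε : 0 < ε) :
    ∃ C₀ : ℝ, 0 < C₀ ∧ Summable (fun w : Idx => ((LL w : ℕ) : ℝ) ^ (-(1 + ε))) ∧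
      (∑' w : Idx, ((LL w : ℕ) : ℝ) ^ (-(1 + ε))) ≤ C₀ := by
  classical
  obtain ⟨K, hK, hKb⟩ := card_divisors_le_rpow (ε / 24) (by linarith)
  set g : ℕ → ℝ := fun n => 1 / (n : ℝ) ^ (1 + ε / 2) with hg
  have hgsum : Summable g := Real.summable_one_div_nat_rpow.mpr (by linarith)
  have hgnon : ∀ n, 0 ≤ g n := fun n => by rw [hg]; positivity
  have htg : 0 ≤ ∑' n, g n := tsum_nonneg hgnon
  have hnonneg : ∀ w : Idx, 0 ≤ ((LL w : ℕ) : ℝ) ^ (-(1 + ε)) :=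
    fun w => Real.rpow_nonneg (Nat.cast_nonneg _) _
  have hbound : ∀ Sf : Finset Idx,
      ∑ w ∈ Sf, ((LL w : ℕ) : ℝ) ^ (-(1 + ε)) ≤ K ^ 12 * ∑' n, g n := by
    intro Sf
    have h1 : ∑ w ∈ Sf, ((LL w : ℕ) : ℝ) ^ (-(1 + ε)) =
        ∑ n ∈ Sf.image LL, ∑ w ∈ Sf.filter (fun w => LL w = n), ((n : ℕ) : ℝ) ^ (-(1 + ε)) :=
      (Finset.sum_fiberwise_of_maps_to' (fun w hw => Finset.mem_image_of_mem LL hw)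
        (fun n => ((n : ℕ) : ℝ) ^ (-(1 + ε)))).symm
    rw [h1]
    have h2 : ∀ n ∈ Sf.image LL,
        ∑ w ∈ Sf.filter (fun w => LL w = n), ((n : ℕ) : ℝ) ^ (-(1 + ε)) ≤ K ^ 12 * g n := by
      intro n hn
      obtain ⟨w0, hw0, hw0e⟩ := Finset.mem_image.mp hn
      have hne : n ≠ 0 := hw0e ▸ LL_ne w0
      have hnpos : (0:ℝ) < (n : ℝ) := by exact_mod_cast Nat.pos_of_ne_zero hne
      rw [Finset.sum_const, nsmul_eq_mul]
      have hc1 : ((Sf.filter (fun w => LL w = n)).card : ℝ) ≤ (n.divisors.card : ℝ) ^ 12 := by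
        exact_mod_cast fiber_card n Sf
      have hc2 : ((n.divisors.card : ℝ)) ^ 12 ≤ (K * (n : ℝ) ^ (ε / 24)) ^ 12 :=
        pow_le_pow_left₀ (Nat.cast_nonneg _) (hKb n hne) 12
      have hc3 : (K * (n : ℝ) ^ (ε / 24)) ^ 12 = K ^ 12 * (n : ℝ) ^ (ε / 2) := by
        rw [mul_pow, ← Real.rpow_natCast ((n:ℝ) ^ (ε / 24)) 12, ← Real.rpow_mul hnpos.le,
          show ε / 24 * ((12:ℕ):ℝ) = ε / 2 from by push_cast; ring]
      have hrw : (n : ℝ) ^ (ε / 2) * (n : ℝ) ^ (-(1 + ε)) = g n := by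
        rw [← Real.rpow_add hnpos, hg]
        rw [show ε / 2 + -(1 + ε) = -(1 + ε / 2) from by ring, Real.rpow_neg hnpos.le]
        exact (one_div _).symm
      calc ((Sf.filter (fun w => LL w = n)).card : ℝ) * ((n : ℕ) : ℝ) ^ (-(1 + ε)) ≤
          (K ^ 12 * (n : ℝ) ^ (ε / 2)) * ((n : ℕ) : ℝ) ^ (-(1 + ε)) := by
            apply mul_le_mul_of_nonneg_right _ (hnonneg w0 |>.trans_eq ?_)
            · exact hc1.trans (hc2.trans_eq hc3)
            · rw [hw0e]
        _ = K ^ 12 * g n := by rw [mul_assoc, hrw]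
    calc ∑ n ∈ Sf.image LL, ∑ w ∈ Sf.filter (fun w => LL w = n), ((n : ℕ) : ℝ) ^ (-(1 + ε))
        ≤ ∑ n ∈ Sf.image LL, K ^ 12 * g n := Finset.sum_le_sum h2
      _ = K ^ 12 * ∑ n ∈ Sf.image LL, g n := by rw [Finset.mul_sum]
      _ ≤ K ^ 12 * ∑' n, g n := by
          apply mul_le_mul_of_nonneg_left _ (by positivity)
          exact Summable.sum_le_tsum _ (fun n _ => hgnon n) hgsum
  have hsummable : Summable (fun w : Idx => ((LL w : ℕ) : ℝ) ^ (-(1 + ε))) :=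
    summable_of_sum_le hnonneg hbound
  exact ⟨K ^ 12 * (∑' n, g n) + 1, by positivity,
    hsummable, by
      have := Summable.tsum_le_of_sum_le hsummable hbound
      linarith⟩


set_option maxHeartbeats 2000000 in
lemma term_le (ε u₁ u₂ u₃ w₁ w₂ w₃ w₄ κ : ℝ) (hε : 0 < ε)
    (h1 : κ ≤ u₁) (h2 : κ ≤ u₂) (h3 : κ ≤ u₃) (h4 : κ ≤ w₁) (h5 : κ ≤ w₂) (h6 : κ ≤ w₃)
    (h7 : κ ≤ u₁ + w₄ - 1 - ε) (h8 : κ ≤ u₂ + w₄ - 1 - ε) (h9 : κ ≤ u₃ + w₄ - 1 - ε)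
    (h10 : 0 ≤ w₄) (h11 : 0 ≤ κ)
    (h12 : 1 + ε < u₁ + w₂ - κ) (h13 : 1 + ε < u₁ + w₃ - κ) (h14 : 1 + ε < u₂ + w₁ - κ)
    (h15 : 1 + ε < u₂ + w₃ - κ) (h16 : 1 + ε < u₃ + w₁ - κ) (h17 : 1 + ε < u₃ + w₂ - κ)
    (h18 : 1 + ε < w₁ + w₂ - κ) (h19 : 1 + ε < w₁ + w₃ - κ) (h20 : 1 + ε < w₂ + w₃ - κ)
    (w : Idx) :
    term u₁ u₂ u₃ w₁ w₂ w₃ w₄ κ w ≤ 3 * ((LL w : ℕ) : ℝ) ^ (-(1 + ε)) := by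
  obtain ⟨⟨e₁, e₂, e₃⟩, ⟨a, b, c⟩, ⟨p, q, r, s, t, v⟩⟩ := w
  exact term_le_general ε u₁ u₂ u₃ w₁ w₂ w₃ w₄ κ h11
    (Nat.lcm_ne_zero (Nat.lcm_ne_zero e₁.ne_zero p.ne_zero) q.ne_zero)
    (Nat.lcm_ne_zero (Nat.lcm_ne_zero e₂.ne_zero r.ne_zero) s.ne_zero)
    (Nat.lcm_ne_zero (Nat.lcm_ne_zero e₃.ne_zero t.ne_zero) v.ne_zero)
    (Nat.lcm_ne_zero (Nat.lcm_ne_zero (Nat.lcm_ne_zero r.ne_zero t.ne_zero) a.ne_zero) b.ne_zero)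
    (Nat.lcm_ne_zero (Nat.lcm_ne_zero (Nat.lcm_ne_zero p.ne_zero v.ne_zero) a.ne_zero) c.ne_zero)
    (Nat.lcm_ne_zero (Nat.lcm_ne_zero (Nat.lcm_ne_zero q.ne_zero s.ne_zero) b.ne_zero) c.ne_zero)
    (Nat.lcm_ne_zero (Nat.lcm_ne_zero e₁.ne_zero e₂.ne_zero) e₃.ne_zero)
    (LL_ne _)
    (core (1 + ε) (u₁ - κ) u₂ u₃ (w₁ - κ) w₂ w₃ w₄ (by linarith) (by linarith) (by linarith)
      (by linarith) (by linarith) (by linarith) (by linarith) (by linarith) (by linarith)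
      (by linarith) (by linarith) (by linarith) (by linarith) (by linarith) (by linarith)
      (by linarith) (by linarith) (by linarith) (by linarith) (by linarith)
      e₁ e₂ e₃ a b c p q r s t v e₁.ne_zero e₂.ne_zero e₃.ne_zero a.ne_zero b.ne_zero
      c.ne_zero p.ne_zero q.ne_zero r.ne_zero s.ne_zero t.ne_zero v.ne_zero)
    (core (1 + ε) u₁ (u₂ - κ) u₃ w₁ (w₂ - κ) w₃ w₄ (by linarith) (by linarith) (by linarith)
      (by linarith) (by linarith) (by linarith) (by linarith) (by linarith) (by linarith)
      (by linarith) (by linarith) (by linarith) (by linarith) (by linarith) (by linarith)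
      (by linarith) (by linarith) (by linarith) (by linarith) (by linarith)
      e₁ e₂ e₃ a b c p q r s t v e₁.ne_zero e₂.ne_zero e₃.ne_zero a.ne_zero b.ne_zero
      c.ne_zero p.ne_zero q.ne_zero r.ne_zero s.ne_zero t.ne_zero v.ne_zero)
    (core (1 + ε) u₁ u₂ (u₃ - κ) w₁ w₂ (w₃ - κ) w₄ (by linarith) (by linarith) (by linarith)
      (by linarith) (by linarith) (by linarith) (by linarith) (by linarith) (by linarith)
      (by linarith) (by linarith) (by linarith) (by linarith) (by linarith) (by linarith)
      (by linarith) (by linarith) (by linarith) (by linarith) (by linarith)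
      e₁ e₂ e₃ a b c p q r s t v e₁.ne_zero e₂.ne_zero e₃.ne_zero a.ne_zero b.ne_zero
      c.ne_zero p.ne_zero q.ne_zero r.ne_zero s.ne_zero t.ne_zero v.ne_zero)

theorem statement11 (ε : ℝ) (hε : 0 < ε) :
    ∃ C : ℝ, 0 < C ∧ ∀ u₁ u₂ u₃ w₁ w₂ w₃ w₄ κ : ℝ,
      κ ≤ u₁ → κ ≤ u₂ → κ ≤ u₃ → κ ≤ w₁ → κ ≤ w₂ → κ ≤ w₃ →
      κ ≤ u₁ + w₄ - 1 - ε → κ ≤ u₂ + w₄ - 1 - ε → κ ≤ u₃ + w₄ - 1 - ε →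
      0 ≤ w₄ → 0 ≤ κ →
      1 + ε < u₁ + w₂ - κ → 1 + ε < u₁ + w₃ - κ → 1 + ε < u₂ + w₁ - κ →
      1 + ε < u₂ + w₃ - κ → 1 + ε < u₃ + w₁ - κ → 1 + ε < u₃ + w₂ - κ →
      1 + ε < w₁ + w₂ - κ → 1 + ε < w₁ + w₃ - κ → 1 + ε < w₂ + w₃ - κ →
      Summable (term u₁ u₂ u₃ w₁ w₂ w₃ w₄ κ) ∧
      ∑' w : Idx, term u₁ u₂ u₃ w₁ w₂ w₃ w₄ κ w ≤ C := by
  obtain ⟨C₀, hC₀, hF, hFt⟩ := tsum_LL ε hε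
  refine ⟨3 * C₀, by linarith, ?_⟩
  intro u₁ u₂ u₃ w₁ w₂ w₃ w₄ κ h1 h2 h3 h4 h5 h6 h7 h8 h9 h10 h11 h12 h13 h14 h15 h16 h17 h18
    h19 h20
  have hnn : ∀ w : Idx, 0 ≤ term u₁ u₂ u₃ w₁ w₂ w₃ w₄ κ w := by
    intro w
    unfold term
    positivity
  have hle : ∀ w : Idx, term u₁ u₂ u₃ w₁ w₂ w₃ w₄ κ w ≤ 3 * ((LL w : ℕ) : ℝ) ^ (-(1 + ε)) :=
    fun w => term_le ε u₁ u₂ u₃ w₁ w₂ w₃ w₄ κ hε h1 h2 h3 h4 h5 h6 h7 h8 h9 h10 h11 h12 h13 h14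
      h15 h16 h17 h18 h19 h20 w
  have hS3 : Summable (fun w : Idx => 3 * ((LL w : ℕ) : ℝ) ^ (-(1 + ε))) := hF.mul_left 3
  have hsum : Summable (term u₁ u₂ u₃ w₁ w₂ w₃ w₄ κ) :=
    Summable.of_nonneg_of_le hnn hle hS3
  refine ⟨hsum, ?_⟩
  calc ∑' w : Idx, term u₁ u₂ u₃ w₁ w₂ w₃ w₄ κ w
      ≤ ∑' w : Idx, 3 * ((LL w : ℕ) : ℝ) ^ (-(1 + ε)) := Summable.tsum_le_tsum hle hsum hS3
    _ = 3 * ∑' w : Idx, ((LL w : ℕ) : ℝ) ^ (-(1 + ε)) := tsum_mul_left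
    _ ≤ 3 * C₀ := by linarith

end Statement11
end

section
/- Let α₁, α₂, α₃ ∈ ℂ with α₁ + α₂ + α₃ = 2 and αᵢ ∉ ℤ for all i. Then √π · ∏_{i=1}^{3} Γ((1 − αᵢ)/2)/Γ(αᵢ/2) = Σ_{i=1}^{3} Γ(1−α₁)Γ(1−α₂)Γ(1−α₃)/(Γ(1−αᵢ)·Γ(αᵢ)). -/
open Complex



private lemma auxTrig (a b : ℂ) :
    Complex.sin (2 * a) + Complex.sin (2 * b) - Complex.sin (2 * (a + b)) =
      4 * Complex.sin a * Complex.sin b * Complex.sin (a + b) := by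
  rw [show (2 : ℂ) * (a + b) = 2 * a + 2 * b by ring, Complex.sin_add (2 * a),
    Complex.sin_add a, Complex.sin_two_mul a, Complex.sin_two_mul b,
    Complex.cos_two_mul a, Complex.cos_two_mul b]
  linear_combination (-4 * Complex.sin a * Complex.cos a) * (Complex.sin_sq_add_cos_sq b) +
    (-4 * Complex.sin b * Complex.cos b) * (Complex.sin_sq_add_cos_sq a)

private lemma keyTrig (a b c : ℂ) (h : a + b + c = (Real.pi : ℂ)) :
    Complex.sin (2 * a) + Complex.sin (2 * b) + Complex.sin (2 * c) =
      4 * Complex.sin a * Complex.sin b * Complex.sin c := by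
  have hc : c = (Real.pi : ℂ) - (a + b) := by linear_combination h
  have h1 : Complex.sin c = Complex.sin (a + b) := by rw [hc, Complex.sin_pi_sub]
  have h2 : Complex.sin (2 * c) = -Complex.sin (2 * (a + b)) := by
    rw [hc, show (2 : ℂ) * ((Real.pi : ℂ) - (a + b)) = -(2 * (a + b)) + 2 * (Real.pi : ℂ) by ring,
      Complex.sin_add_two_pi, Complex.sin_neg]
  rw [h1, h2]
  linear_combination auxTrig a b


private lemma GammaNeZero (α : ℂ) (h : ∀ n : ℤ, α ≠ (n : ℂ)) : Complex.Gamma α ≠ 0 :=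
  Complex.Gamma_ne_zero fun m hm => h (-m) (by rw [hm]; push_cast; ring)

private lemma cosNeZero (α : ℂ) (h : ∀ n : ℤ, α ≠ (n : ℂ)) :
    Complex.cos ((Real.pi : ℂ) * α / 2) ≠ 0 := by
  rw [Complex.cos_ne_zero_iff]
  intro k hk
  have hπ : (Real.pi : ℂ) ≠ 0 := Complex.ofReal_ne_zero.mpr Real.pi_ne_zero
  refine h (2 * k + 1) (mul_left_cancel₀ hπ ?_)
  push_cast
  linear_combination 2 * hk

private lemma sinNeZero (α : ℂ) (h : ∀ n : ℤ, α ≠ (n : ℂ)) :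
    Complex.sin ((Real.pi : ℂ) * α) ≠ 0 := by
  rw [Complex.sin_ne_zero_iff]
  intro k hk
  have hπ : (Real.pi : ℂ) ≠ 0 := Complex.ofReal_ne_zero.mpr Real.pi_ne_zero
  refine h k (mul_left_cancel₀ hπ ?_)
  linear_combination hk

private lemma ratioLem (α : ℂ) (h : ∀ n : ℤ, α ≠ (n : ℂ)) :
    Complex.Gamma ((1 - α) / 2) / Complex.Gamma (α / 2) =
      ((Real.pi : ℂ) / Complex.cos ((Real.pi : ℂ) * α / 2)) /
        (Complex.Gamma α * (2 : ℂ) ^ (1 - α) * (Real.sqrt Real.pi : ℂ)) := by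
  have hd := Complex.Gamma_mul_Gamma_add_half (α / 2)
  rw [show (2 : ℂ) * (α / 2) = α by ring] at hd
  have hr := Complex.Gamma_mul_Gamma_one_sub ((1 - α) / 2)
  rw [show (1 : ℂ) - (1 - α) / 2 = α / 2 + 1 / 2 by ring,
    show (Real.pi : ℂ) * ((1 - α) / 2) = (Real.pi : ℂ) / 2 - (Real.pi : ℂ) * α / 2 by ring,
    Complex.sin_pi_div_two_sub] at hr
  have hΓh : Complex.Gamma (α / 2 + 1 / 2) ≠ 0 := by
    refine Complex.Gamma_ne_zero fun m hm => h (-(2 * m) - 1) ?_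
    push_cast
    linear_combination 2 * hm
  have hΓ2 : Complex.Gamma (α / 2) ≠ 0 := by
    refine Complex.Gamma_ne_zero fun m hm => h (-(2 * m)) ?_
    push_cast
    linear_combination 2 * hm
  have hΓ : Complex.Gamma α ≠ 0 := GammaNeZero α h
  have h2 : (2 : ℂ) ^ (1 - α) ≠ 0 := by
    simp [Complex.cpow_eq_zero_iff]
  have hs : (Real.sqrt Real.pi : ℂ) ≠ 0 :=
    Complex.ofReal_ne_zero.mpr (Real.sqrt_ne_zero'.mpr Real.pi_pos)
  have hcos : Complex.cos ((Real.pi : ℂ) * α / 2) ≠ 0 := cosNeZero α h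
  field_simp [hcos] at hr
  rw [show ((α : ℂ) + 1) / 2 = α / 2 + 1 / 2 by ring] at hr
  field_simp
  linear_combination Complex.Gamma (α / 2) * hr -
    Complex.Gamma ((1 - α) / 2) * hd

private lemma sinHalfNeZero (α : ℂ) (h : ∀ n : ℤ, α ≠ (n : ℂ)) :
    Complex.sin ((Real.pi : ℂ) * α / 2) ≠ 0 := by
  rw [Complex.sin_ne_zero_iff]
  intro k hk
  have hπ : (Real.pi : ℂ) ≠ 0 := Complex.ofReal_ne_zero.mpr Real.pi_ne_zero
  refine h (2 * k) (mul_left_cancel₀ hπ ?_)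
  push_cast
  linear_combination 2 * hk

private lemma mainAux (P Q C₁ C₂ C₃ S₁ S₂ S₃ G₁ G₂ G₃ T₁ T₂ T₃ : ℂ)
    (hπ : P ≠ 0) (hsq : Q ≠ 0) (hc₁ : C₁ ≠ 0) (hc₂ : C₂ ≠ 0) (hc₃ : C₃ ≠ 0)
    (hs₁ : S₁ ≠ 0) (hs₂ : S₂ ≠ 0) (hs₃ : S₃ ≠ 0)
    (hΓ₁ : G₁ ≠ 0) (hΓ₂ : G₂ ≠ 0) (hΓ₃ : G₃ ≠ 0)
    (h2p₁ : T₁ ≠ 0) (h2p₂ : T₂ ≠ 0) (h2p₃ : T₃ ≠ 0)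
    (hsqsq : Q * Q = P) (h2pow : T₁ * T₂ * T₃ = 2)
    (hkey : 2 * S₁ * C₁ + 2 * S₂ * C₂ + 2 * S₃ * C₃ = 4 * S₁ * S₂ * S₃) :
    Q * (P / C₁ / (G₁ * T₁ * Q)) * (P / C₂ / (G₂ * T₂ * Q)) * (P / C₃ / (G₃ * T₃ * Q)) =
      P / (2 * S₂ * C₂ * G₂) * (P / (2 * S₃ * C₃ * G₃)) / G₁ +
        P / (2 * S₁ * C₁ * G₁) * (P / (2 * S₃ * C₃ * G₃)) / G₂ +
      P / (2 * S₁ * C₁ * G₁) * (P / (2 * S₂ * C₂ * G₂)) / G₃ := by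
  have hE : (8 : ℂ) * (S₁ * C₁ * S₂ * C₂ * S₃ * C₃) * (G₁ * G₂ * G₃) ≠ 0 := by
    apply_rules [mul_ne_zero]
    norm_num
  have hL : Q * (P / C₁ / (G₁ * T₁ * Q)) * (P / C₂ / (G₂ * T₂ * Q)) * (P / C₃ / (G₃ * T₃ * Q)) =
      P * P / (2 * (C₁ * C₂ * C₃ * (G₁ * G₂ * G₃))) := by
    rw [show Q * (P / C₁ / (G₁ * T₁ * Q)) * (P / C₂ / (G₂ * T₂ * Q)) * (P / C₃ / (G₃ * T₃ * Q)) =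
        Q * P * P * P / (C₁ * (G₁ * T₁ * Q) * (C₂ * (G₂ * T₂ * Q)) * (C₃ * (G₃ * T₃ * Q))) by
      rw [div_div, div_div, div_div]; ring]
    rw [div_eq_div_iff (by apply_rules [mul_ne_zero]) (by apply_rules [mul_ne_zero, two_ne_zero])]
    linear_combination (-(P * P * P * C₁ * C₂ * C₃ * G₁ * G₂ * G₃ * Q * Q * Q)) * h2pow +
      (-(2 * P * P * C₁ * C₂ * C₃ * G₁ * G₂ * G₃ * Q)) * hsqsq +
      (Q * Q * Q * P * P * C₁ * C₂ * C₃ * G₁ * G₂ * G₃ * (P - 1)) * h2pow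
  have ht₁ : P / (2 * S₂ * C₂ * G₂) * (P / (2 * S₃ * C₃ * G₃)) / G₁ =
      P * P * (2 * S₁ * C₁) / (8 * (S₁ * C₁ * S₂ * C₂ * S₃ * C₃) * (G₁ * G₂ * G₃)) := by
    rw [show P / (2 * S₂ * C₂ * G₂) * (P / (2 * S₃ * C₃ * G₃)) / G₁ =
        P * P / (2 * S₂ * C₂ * G₂ * (2 * S₃ * C₃ * G₃) * G₁) by rw [div_mul_div_comm, div_div]]
    rw [div_eq_div_iff (by apply_rules [mul_ne_zero, two_ne_zero]) hE]
    ring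
  have ht₂ : P / (2 * S₁ * C₁ * G₁) * (P / (2 * S₃ * C₃ * G₃)) / G₂ =
      P * P * (2 * S₂ * C₂) / (8 * (S₁ * C₁ * S₂ * C₂ * S₃ * C₃) * (G₁ * G₂ * G₃)) := by
    rw [show P / (2 * S₁ * C₁ * G₁) * (P / (2 * S₃ * C₃ * G₃)) / G₂ =
        P * P / (2 * S₁ * C₁ * G₁ * (2 * S₃ * C₃ * G₃) * G₂) by rw [div_mul_div_comm, div_div]]
    rw [div_eq_div_iff (by apply_rules [mul_ne_zero, two_ne_zero]) hE]
    ring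
  have ht₃ : P / (2 * S₁ * C₁ * G₁) * (P / (2 * S₂ * C₂ * G₂)) / G₃ =
      P * P * (2 * S₃ * C₃) / (8 * (S₁ * C₁ * S₂ * C₂ * S₃ * C₃) * (G₁ * G₂ * G₃)) := by
    rw [show P / (2 * S₁ * C₁ * G₁) * (P / (2 * S₂ * C₂ * G₂)) / G₃ =
        P * P / (2 * S₁ * C₁ * G₁ * (2 * S₂ * C₂ * G₂) * G₃) by rw [div_mul_div_comm, div_div]]
    rw [div_eq_div_iff (by apply_rules [mul_ne_zero, two_ne_zero]) hE]
    ring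
  rw [hL, ht₁, ht₂, ht₃, ← add_div, ← add_div,
    show P * P * (2 * S₁ * C₁) + P * P * (2 * S₂ * C₂) + P * P * (2 * S₃ * C₃) =
      P * P * (4 * S₁ * S₂ * S₃) from by linear_combination (P * P) * hkey,
    div_eq_div_iff (by apply_rules [mul_ne_zero, two_ne_zero]) hE]
  ring

set_option maxHeartbeats 1600000 in
theorem statement15 (α₁ α₂ α₃ : ℂ) (hsum : α₁ + α₂ + α₃ = 2)
    (h₁ : ∀ n : ℤ, α₁ ≠ (n : ℂ)) (h₂ : ∀ n : ℤ, α₂ ≠ (n : ℂ)) (h₃ : ∀ n : ℤ, α₃ ≠ (n : ℂ)) :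
    (Real.sqrt Real.pi : ℂ) *
        (Complex.Gamma ((1 - α₁) / 2) / Complex.Gamma (α₁ / 2)) *
        (Complex.Gamma ((1 - α₂) / 2) / Complex.Gamma (α₂ / 2)) *
        (Complex.Gamma ((1 - α₃) / 2) / Complex.Gamma (α₃ / 2)) =
      Complex.Gamma (1 - α₁) * Complex.Gamma (1 - α₂) * Complex.Gamma (1 - α₃) /
          (Complex.Gamma (1 - α₁) * Complex.Gamma α₁) +
        Complex.Gamma (1 - α₁) * Complex.Gamma (1 - α₂) * Complex.Gamma (1 - α₃) /
          (Complex.Gamma (1 - α₂) * Complex.Gamma α₂) +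
        Complex.Gamma (1 - α₁) * Complex.Gamma (1 - α₂) * Complex.Gamma (1 - α₃) /
          (Complex.Gamma (1 - α₃) * Complex.Gamma α₃) := by
  have hπ : (Real.pi : ℂ) ≠ 0 := Complex.ofReal_ne_zero.mpr Real.pi_ne_zero
  have hsq : (Real.sqrt Real.pi : ℂ) ≠ 0 :=
    Complex.ofReal_ne_zero.mpr (Real.sqrt_ne_zero'.mpr Real.pi_pos)
  have hsqsq : (Real.sqrt Real.pi : ℂ) * (Real.sqrt Real.pi : ℂ) = (Real.pi : ℂ) := by
    rw [← Complex.ofReal_mul, Real.mul_self_sqrt Real.pi_pos.le]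
  have hΓ₁ := GammaNeZero α₁ h₁
  have hΓ₂ := GammaNeZero α₂ h₂
  have hΓ₃ := GammaNeZero α₃ h₃
  have hc₁ := cosNeZero α₁ h₁
  have hc₂ := cosNeZero α₂ h₂
  have hc₃ := cosNeZero α₃ h₃
  have hs₁ := sinHalfNeZero α₁ h₁
  have hs₂ := sinHalfNeZero α₂ h₂
  have hs₃ := sinHalfNeZero α₃ h₃
  have h2p₁ : (2 : ℂ) ^ (1 - α₁) ≠ 0 := by simp [Complex.cpow_eq_zero_iff]
  have h2p₂ : (2 : ℂ) ^ (1 - α₂) ≠ 0 := by simp [Complex.cpow_eq_zero_iff]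
  have h2p₃ : (2 : ℂ) ^ (1 - α₃) ≠ 0 := by simp [Complex.cpow_eq_zero_iff]
  have h2pow : (2 : ℂ) ^ (1 - α₁) * (2 : ℂ) ^ (1 - α₂) * (2 : ℂ) ^ (1 - α₃) = 2 := by
    rw [← Complex.cpow_add _ _ two_ne_zero, ← Complex.cpow_add _ _ two_ne_zero,
      show 1 - α₁ + (1 - α₂) + (1 - α₃) = 1 by linear_combination -hsum, Complex.cpow_one]
  -- reflection for each αᵢ, with sin in half-angle form
  have hsin2 : ∀ α : ℂ, Complex.sin ((Real.pi : ℂ) * α) =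
      2 * Complex.sin ((Real.pi : ℂ) * α / 2) * Complex.cos ((Real.pi : ℂ) * α / 2) := by
    intro α
    rw [← Complex.sin_two_mul]
    congr 1
    ring
  have hrefl : ∀ α : ℂ, (∀ n : ℤ, α ≠ (n : ℂ)) → Complex.Gamma (1 - α) =
      (Real.pi : ℂ) / (2 * Complex.sin ((Real.pi : ℂ) * α / 2) *
        Complex.cos ((Real.pi : ℂ) * α / 2) * Complex.Gamma α) := by
    intro α h
    have hR := Complex.Gamma_mul_Gamma_one_sub α
    rw [hsin2 α] at hR
    have hs' := sinHalfNeZero α h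
    have hc' := cosNeZero α h
    have hΓ' := GammaNeZero α h
    field_simp [hs', hc'] at hR
    field_simp [hs', hc', hΓ']
    linear_combination hR
  have hkey := keyTrig ((Real.pi : ℂ) * α₁ / 2) ((Real.pi : ℂ) * α₂ / 2) ((Real.pi : ℂ) * α₃ / 2)
    (by linear_combination ((Real.pi : ℂ) / 2) * hsum)
  rw [show (2 : ℂ) * ((Real.pi : ℂ) * α₁ / 2) = (Real.pi : ℂ) * α₁ by ring,
    show (2 : ℂ) * ((Real.pi : ℂ) * α₂ / 2) = (Real.pi : ℂ) * α₂ by ring,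
    show (2 : ℂ) * ((Real.pi : ℂ) * α₃ / 2) = (Real.pi : ℂ) * α₃ by ring,
    hsin2 α₁, hsin2 α₂, hsin2 α₃] at hkey
  have hΓ₁' : Complex.Gamma (1 - α₁) ≠ 0 :=
    GammaNeZero (1 - α₁) fun n hn => h₁ (1 - n) (by push_cast; linear_combination -hn)
  have hΓ₂' : Complex.Gamma (1 - α₂) ≠ 0 :=
    GammaNeZero (1 - α₂) fun n hn => h₂ (1 - n) (by push_cast; linear_combination -hn)
  have hΓ₃' : Complex.Gamma (1 - α₃) ≠ 0 :=
    GammaNeZero (1 - α₃) fun n hn => h₃ (1 - n) (by push_cast; linear_combination -hn)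
  have hcan₁ : Complex.Gamma (1 - α₁) * Complex.Gamma (1 - α₂) * Complex.Gamma (1 - α₃) /
      (Complex.Gamma (1 - α₁) * Complex.Gamma α₁) =
      Complex.Gamma (1 - α₂) * Complex.Gamma (1 - α₃) / Complex.Gamma α₁ := by
    rw [mul_assoc, mul_div_mul_left _ _ hΓ₁']
  have hcan₂ : Complex.Gamma (1 - α₁) * Complex.Gamma (1 - α₂) * Complex.Gamma (1 - α₃) /
      (Complex.Gamma (1 - α₂) * Complex.Gamma α₂) =
      Complex.Gamma (1 - α₁) * Complex.Gamma (1 - α₃) / Complex.Gamma α₂ := by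
    rw [show Complex.Gamma (1 - α₁) * Complex.Gamma (1 - α₂) * Complex.Gamma (1 - α₃) =
      Complex.Gamma (1 - α₂) * (Complex.Gamma (1 - α₁) * Complex.Gamma (1 - α₃)) by ring,
      mul_div_mul_left _ _ hΓ₂']
  have hcan₃ : Complex.Gamma (1 - α₁) * Complex.Gamma (1 - α₂) * Complex.Gamma (1 - α₃) /
      (Complex.Gamma (1 - α₃) * Complex.Gamma α₃) =
      Complex.Gamma (1 - α₁) * Complex.Gamma (1 - α₂) / Complex.Gamma α₃ := by
    rw [show Complex.Gamma (1 - α₁) * Complex.Gamma (1 - α₂) * Complex.Gamma (1 - α₃) =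
      Complex.Gamma (1 - α₃) * (Complex.Gamma (1 - α₁) * Complex.Gamma (1 - α₂)) by ring,
      mul_div_mul_left _ _ hΓ₃']
  rw [hcan₁, hcan₂, hcan₃, ratioLem α₁ h₁, ratioLem α₂ h₂, ratioLem α₃ h₃,
    hrefl α₁ h₁, hrefl α₂ h₂, hrefl α₃ h₃]
  set P : ℂ := (Real.pi : ℂ) with hP
  set Q : ℂ := (Real.sqrt Real.pi : ℂ) with hQ
  set C₁ := Complex.cos ((Real.pi : ℂ) * α₁ / 2)
  set C₂ := Complex.cos ((Real.pi : ℂ) * α₂ / 2)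
  set C₃ := Complex.cos ((Real.pi : ℂ) * α₃ / 2)
  set S₁ := Complex.sin ((Real.pi : ℂ) * α₁ / 2)
  set S₂ := Complex.sin ((Real.pi : ℂ) * α₂ / 2)
  set S₃ := Complex.sin ((Real.pi : ℂ) * α₃ / 2)
  set G₁ := Complex.Gamma α₁
  set G₂ := Complex.Gamma α₂
  set G₃ := Complex.Gamma α₃
  set T₁ := (2 : ℂ) ^ (1 - α₁)
  set T₂ := (2 : ℂ) ^ (1 - α₂)
  set T₃ := (2 : ℂ) ^ (1 - α₃)
  clear_value P Q C₁ C₂ C₃ S₁ S₂ S₃ G₁ G₂ G₃ T₁ T₂ T₃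
  linear_combination mainAux P Q C₁ C₂ C₃ S₁ S₂ S₃ G₁ G₂ G₃ T₁ T₂ T₃ hπ hsq hc₁ hc₂ hc₃
    hs₁ hs₂ hs₃ hΓ₁ hΓ₂ hΓ₃ h2p₁ h2p₂ h2p₃ hsqsq h2pow hkey
end

section
/- Let p be a prime. The number of tuples (x₁,x₂,x₃,z₁,z₂,z₃,z₄) ∈ 𝔽_p⁷ satisfying x₁z₁ + x₂z₂ + x₃z₃ = 0 together with the conditions ¬(x₁ = 0 ∧ z₂z₃z₄ = 0), ¬(x₂ = 0 ∧ z₁z₃z₄ = 0), ¬(x₃ = 0 ∧ z₁z₂z₄ = 0), ¬(z₁ = 0 ∧ z₂ = 0), ¬(z₁ = 0 ∧ z₃ = 0), ¬(z₂ = 0 ∧ z₃ = 0) equals (p−1)⁴·(p² + 4p + 1), i.e. p⁶·(1 − 1/p)⁴·(1 + 4/p + 1/p²). -/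
namespace S16

variable (p : ℕ) [Fact p.Prime]

abbrev V := ZMod p × ZMod p × ZMod p × ZMod p × ZMod p × ZMod p × ZMod p
abbrev N := {a : ZMod p // a ≠ 0}
abbrev PP := {w : ZMod p × ZMod p // ¬(w.1 = 0 ∧ w.2 = 0)}
abbrev TT := {t : ZMod p // t ≠ 0 ∧ t ≠ 1}

abbrev x1 (v : V p) : ZMod p := v.1
abbrev x2 (v : V p) : ZMod p := v.2.1
abbrev x3 (v : V p) : ZMod p := v.2.2.1
abbrev z1 (v : V p) : ZMod p := v.2.2.2.1
abbrev z2 (v : V p) : ZMod p := v.2.2.2.2.1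
abbrev z3 (v : V p) : ZMod p := v.2.2.2.2.2.1
abbrev z4 (v : V p) : ZMod p := v.2.2.2.2.2.2

abbrev Full (v : V p) : Prop :=
  x1 p v * z1 p v + x2 p v * z2 p v + x3 p v * z3 p v = 0 ∧
  ¬(x1 p v = 0 ∧ z2 p v * z3 p v * z4 p v = 0) ∧
  ¬(x2 p v = 0 ∧ z1 p v * z3 p v * z4 p v = 0) ∧
  ¬(x3 p v = 0 ∧ z1 p v * z2 p v * z4 p v = 0) ∧
  ¬(z1 p v = 0 ∧ z2 p v = 0) ∧
  ¬(z1 p v = 0 ∧ z3 p v = 0) ∧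
  ¬(z2 p v = 0 ∧ z3 p v = 0)

lemma card_split {α : Type*} [Finite α] (Q R : α → Prop) :
    Nat.card {v : α // Q v} =
      Nat.card {v : α // Q v ∧ R v} + Nat.card {v : α // Q v ∧ ¬ R v} := by
  classical
  have := Fintype.ofFinite α
  simp only [Nat.card_eq_fintype_card, Fintype.card_subtype]
  rw [← Finset.filter_filter, ← Finset.filter_filter,
    Finset.card_filter_add_card_filter_not]

lemma cardN : Nat.card (N p) = p - 1 := by
  haveI : NeZero p := ⟨(Fact.out : p.Prime).ne_zero⟩
  rw [Nat.card_eq_fintype_card, Fintype.card_subtype_compl, Fintype.card_subtype_eq,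
    ZMod.card]

lemma cardPP : Nat.card (PP p) = p ^ 2 - 1 := by
  haveI : NeZero p := ⟨(Fact.out : p.Prime).ne_zero⟩
  have h : ∀ w : ZMod p × ZMod p, (¬(w.1 = 0 ∧ w.2 = 0)) ↔ ¬(w = ((0 : ZMod p), (0 : ZMod p))) := by
    intro w; rw [Prod.ext_iff]
  rw [Nat.card_congr (Equiv.subtypeEquivRight h), Nat.card_eq_fintype_card,
    Fintype.card_subtype_compl, Fintype.card_subtype_eq, Fintype.card_prod, ZMod.card, sq]

lemma cardTT : Nat.card (TT p) = p - 2 := by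
  haveI : NeZero p := ⟨(Fact.out : p.Prime).ne_zero⟩
  haveI : Fact (1 < p) := ⟨(Fact.out : p.Prime).one_lt⟩
  have h : ∀ t : ZMod p, (t ≠ 0 ∧ t ≠ 1) ↔ ¬(t ∈ ({0, 1} : Finset (ZMod p))) := by
    intro t; simp [not_or]
  rw [Nat.card_congr (Equiv.subtypeEquivRight h), Nat.card_eq_fintype_card,
    Fintype.card_subtype_compl, ZMod.card]
  congr 1
  rw [Fintype.card_coe, Finset.card_insert_of_notMem (by simp [zero_ne_one]),
    Finset.card_singleton]

lemma piece1 : Nat.card {v : V p // Full p v ∧ z1 p v = 0} = (p ^ 2 - 1) * (p - 1) ^ 3 := by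
  have e : {v : V p // Full p v ∧ z1 p v = 0} ≃ (PP p × N p × N p × N p) := by
    refine ⟨fun v => ⟨⟨(x1 p v.1, z4 p v.1), ?_⟩, ⟨x2 p v.1, ?_⟩, ⟨z2 p v.1, ?_⟩,
        ⟨z3 p v.1, ?_⟩⟩,
      fun w => ⟨(w.1.1.1, w.2.1.1, -(w.2.1.1 * w.2.2.1.1) * (w.2.2.2.1)⁻¹, 0,
        w.2.2.1.1, w.2.2.2.1, w.1.1.2), ?_, rfl⟩, ?_, ?_⟩
    · obtain ⟨⟨a, b, c, d, e, f, g⟩, ⟨heq, c1, c2, c3, d12, d13, d23⟩, hz⟩ := v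
      dsimp only at *
      rintro ⟨h1, h2⟩
      exact c1 ⟨h1, by rw [h2, mul_zero]⟩
    · obtain ⟨⟨a, b, c, d, e, f, g⟩, ⟨heq, c1, c2, c3, d12, d13, d23⟩, hz⟩ := v
      dsimp only at *
      intro hb
      exact c2 ⟨hb, by rw [hz, zero_mul, zero_mul]⟩
    · obtain ⟨⟨a, b, c, d, e, f, g⟩, ⟨heq, c1, c2, c3, d12, d13, d23⟩, hz⟩ := v
      dsimp only at *
      exact fun h => d12 ⟨hz, h⟩
    · obtain ⟨⟨a, b, c, d, e, f, g⟩, ⟨heq, c1, c2, c3, d12, d13, d23⟩, hz⟩ := v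
      dsimp only at *
      exact fun h => d13 ⟨hz, h⟩
    · obtain ⟨⟨⟨a, g⟩, hw⟩, ⟨b, hb⟩, ⟨e, he⟩, ⟨f, hf⟩⟩ := w
      dsimp only at *
      refine ⟨by simp only [x1, x2, x3, z1, z2, z3, z4]; field_simp; ring, ?_,
        fun h => hb h.1, ?_, fun h => he h.2, fun h => hf h.2, fun h => he h.1⟩
      · rintro ⟨h1, h2⟩
        exact hw ⟨h1, by simpa [mul_eq_zero, he, hf] using h2⟩
      · rintro ⟨h1, -⟩
        simp only [x1, x2, x3, z1, z2, z3, z4] at h1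
        simp [mul_eq_zero, neg_eq_zero, inv_eq_zero, hb, he, hf] at h1
    · intro v
      obtain ⟨⟨a, b, c, d, e, f, g⟩, hv⟩ := v
      apply Subtype.ext
      obtain ⟨⟨heq, c1, c2, c3, d12, d13, d23⟩, hz⟩ := hv
      dsimp only at *
      subst hz
      have hf : f ≠ 0 := fun h => d13 ⟨rfl, h⟩
      simp only [Prod.mk.injEq, true_and, and_true]
      simp only [x1, x2, x3, z1, z2, z3, z4] at heq
      field_simp
      linear_combination -heq
    · intro w
      obtain ⟨⟨⟨a, g⟩, hw⟩, ⟨b, hb⟩, ⟨e, he⟩, ⟨f, hf⟩⟩ := w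
      rfl
  rw [Nat.card_congr e, Nat.card_prod, Nat.card_prod, Nat.card_prod, cardPP, cardN]
  ring

lemma piece2 : Nat.card {v : V p // (Full p v ∧ ¬ z1 p v = 0) ∧ z2 p v = 0} =
    (p ^ 2 - 1) * (p - 1) ^ 3 := by
  have e : {v : V p // (Full p v ∧ ¬ z1 p v = 0) ∧ z2 p v = 0} ≃ (PP p × N p × N p × N p) := by
    refine ⟨fun v => ⟨⟨(x2 p v.1, z4 p v.1), ?_⟩, ⟨x1 p v.1, ?_⟩, ⟨z1 p v.1, ?_⟩,
        ⟨z3 p v.1, ?_⟩⟩,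
      fun w => ⟨(w.2.1.1, w.1.1.1, -(w.2.1.1 * w.2.2.1.1) * (w.2.2.2.1)⁻¹,
        w.2.2.1.1, 0, w.2.2.2.1, w.1.1.2), ?_, rfl⟩, ?_, ?_⟩
    · obtain ⟨⟨a, b, c, d, e, f, g⟩, ⟨⟨heq, c1, c2, c3, d12, d13, d23⟩, hz1⟩, hz2⟩ := v
      dsimp only at *
      rintro ⟨h1, h2⟩
      exact c2 ⟨h1, by rw [h2, mul_zero]⟩
    · obtain ⟨⟨a, b, c, d, e, f, g⟩, ⟨⟨heq, c1, c2, c3, d12, d13, d23⟩, hz1⟩, hz2⟩ := v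
      dsimp only at *
      intro ha
      exact c1 ⟨ha, by rw [hz2, zero_mul, zero_mul]⟩
    · obtain ⟨⟨a, b, c, d, e, f, g⟩, ⟨⟨heq, c1, c2, c3, d12, d13, d23⟩, hz1⟩, hz2⟩ := v
      exact hz1
    · obtain ⟨⟨a, b, c, d, e, f, g⟩, ⟨⟨heq, c1, c2, c3, d12, d13, d23⟩, hz1⟩, hz2⟩ := v
      dsimp only at *
      exact fun h => d23 ⟨hz2, h⟩
    · obtain ⟨⟨⟨b, g⟩, hw⟩, ⟨a, ha⟩, ⟨d, hd⟩, ⟨f, hf⟩⟩ := w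
      dsimp only at *
      refine ⟨⟨by simp only [x1, x2, x3, z1, z2, z3, z4]; field_simp; ring, ?_, ?_, ?_,
        fun h => hd h.1, fun h => hd h.1, fun h => hf h.2⟩, hd⟩
      · exact fun h => ha h.1
      · rintro ⟨h1, h2⟩
        exact hw ⟨h1, by simpa [mul_eq_zero, hd, hf] using h2⟩
      · rintro ⟨h1, -⟩
        simp only [x1, x2, x3, z1, z2, z3, z4] at h1
        simp [mul_eq_zero, neg_eq_zero, inv_eq_zero, ha, hd, hf] at h1
    · intro v
      obtain ⟨⟨a, b, c, d, e, f, g⟩, hv⟩ := v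
      apply Subtype.ext
      obtain ⟨⟨⟨heq, c1, c2, c3, d12, d13, d23⟩, hz1⟩, hz2⟩ := hv
      dsimp only at *
      subst hz2
      have hf : f ≠ 0 := fun h => d23 ⟨rfl, h⟩
      simp only [Prod.mk.injEq, true_and, and_true]
      simp only [x1, x2, x3, z1, z2, z3, z4] at heq
      field_simp
      linear_combination -heq
    · intro w
      obtain ⟨⟨⟨b, g⟩, hw⟩, ⟨a, ha⟩, ⟨d, hd⟩, ⟨f, hf⟩⟩ := w
      rfl
  rw [Nat.card_congr e, Nat.card_prod, Nat.card_prod, Nat.card_prod, cardPP, cardN]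
  ring

lemma piece3 : Nat.card {v : V p // ((Full p v ∧ ¬ z1 p v = 0) ∧ ¬ z2 p v = 0) ∧ z3 p v = 0} =
    (p ^ 2 - 1) * (p - 1) ^ 3 := by
  have e : {v : V p // ((Full p v ∧ ¬ z1 p v = 0) ∧ ¬ z2 p v = 0) ∧ z3 p v = 0} ≃
      (PP p × N p × N p × N p) := by
    refine ⟨fun v => ⟨⟨(x3 p v.1, z4 p v.1), ?_⟩, ⟨x1 p v.1, ?_⟩, ⟨z1 p v.1, ?_⟩,
        ⟨z2 p v.1, ?_⟩⟩,
      fun w => ⟨(w.2.1.1, -(w.2.1.1 * w.2.2.1.1) * (w.2.2.2.1)⁻¹, w.1.1.1,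
        w.2.2.1.1, w.2.2.2.1, 0, w.1.1.2), ?_, rfl⟩, ?_, ?_⟩
    · obtain ⟨⟨a, b, c, d, e, f, g⟩, ⟨⟨⟨heq, c1, c2, c3, d12, d13, d23⟩, hz1⟩, hz2⟩, hz3⟩ := v
      dsimp only at *
      rintro ⟨h1, h2⟩
      exact c3 ⟨h1, by rw [h2, mul_zero]⟩
    · obtain ⟨⟨a, b, c, d, e, f, g⟩, ⟨⟨⟨heq, c1, c2, c3, d12, d13, d23⟩, hz1⟩, hz2⟩, hz3⟩ := v
      dsimp only at *
      intro ha
      exact c1 ⟨ha, by rw [hz3, mul_zero, zero_mul]⟩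
    · obtain ⟨⟨a, b, c, d, e, f, g⟩, ⟨⟨⟨heq, c1, c2, c3, d12, d13, d23⟩, hz1⟩, hz2⟩, hz3⟩ := v
      exact hz1
    · obtain ⟨⟨a, b, c, d, e, f, g⟩, ⟨⟨⟨heq, c1, c2, c3, d12, d13, d23⟩, hz1⟩, hz2⟩, hz3⟩ := v
      exact hz2
    · obtain ⟨⟨⟨c, g⟩, hw⟩, ⟨a, ha⟩, ⟨d, hd⟩, ⟨e, he⟩⟩ := w
      dsimp only at *
      refine ⟨⟨⟨by simp only [x1, x2, x3, z1, z2, z3, z4]; field_simp; ring, ?_, ?_, ?_,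
        fun h => hd h.1, fun h => hd h.1, fun h => he h.1⟩, hd⟩, he⟩
      · exact fun h => ha h.1
      · rintro ⟨h1, -⟩
        simp only [x1, x2, x3, z1, z2, z3, z4] at h1
        simp [mul_eq_zero, neg_eq_zero, inv_eq_zero, ha, hd, he] at h1
      · rintro ⟨h1, h2⟩
        exact hw ⟨h1, by simpa [mul_eq_zero, hd, he] using h2⟩
    · intro v
      obtain ⟨⟨a, b, c, d, e, f, g⟩, hv⟩ := v
      apply Subtype.ext
      obtain ⟨⟨⟨⟨heq, c1, c2, c3, d12, d13, d23⟩, hz1⟩, hz2⟩, hz3⟩ := hv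
      dsimp only at *
      subst hz3
      simp only [Prod.mk.injEq, true_and, and_true]
      simp only [x1, x2, x3, z1, z2, z3, z4] at heq
      field_simp
      linear_combination -heq
    · intro w
      obtain ⟨⟨⟨c, g⟩, hw⟩, ⟨a, ha⟩, ⟨d, hd⟩, ⟨e, he⟩⟩ := w
      rfl
  rw [Nat.card_congr e, Nat.card_prod, Nat.card_prod, Nat.card_prod, cardPP, cardN]
  ring

lemma piece4 : Nat.card {v : V p //
    (((Full p v ∧ ¬ z1 p v = 0) ∧ ¬ z2 p v = 0) ∧ ¬ z3 p v = 0) ∧ z4 p v = 0} =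
    (p - 1) ^ 4 * (p - 2) := by
  have e : {v : V p //
      (((Full p v ∧ ¬ z1 p v = 0) ∧ ¬ z2 p v = 0) ∧ ¬ z3 p v = 0) ∧ z4 p v = 0} ≃
      (N p × TT p × N p × N p × N p) := by
    refine ⟨fun v => ⟨⟨x2 p v.1, ?_⟩,
        ⟨-(x3 p v.1 * z3 p v.1) * (x2 p v.1 * z2 p v.1)⁻¹, ?_⟩,
        ⟨z1 p v.1, v.2.1.1.1.2⟩, ⟨z2 p v.1, v.2.1.1.2⟩, ⟨z3 p v.1, v.2.1.2⟩⟩,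
      fun w => ⟨(-(w.1.1 * w.2.2.2.1.1 * (1 - w.2.1.1)) * (w.2.2.1.1)⁻¹, w.1.1,
        -(w.2.1.1 * w.1.1 * w.2.2.2.1.1) * (w.2.2.2.2.1)⁻¹,
        w.2.2.1.1, w.2.2.2.1.1, w.2.2.2.2.1, 0), ?_, rfl⟩, ?_, ?_⟩
    · obtain ⟨⟨a, b, c, d, e, f, g⟩, ⟨⟨⟨⟨heq, c1, c2, c3, d12, d13, d23⟩, hz1⟩, hz2⟩, hz3⟩,
        hz4⟩ := v
      dsimp only at *
      exact fun h => c2 ⟨h, by rw [hz4, mul_zero]⟩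
    · obtain ⟨⟨a, b, c, d, e, f, g⟩, ⟨⟨⟨⟨heq, c1, c2, c3, d12, d13, d23⟩, hz1⟩, hz2⟩, hz3⟩,
        hz4⟩ := v
      dsimp only at *
      have hb : b ≠ 0 := fun h => c2 ⟨h, by rw [hz4, mul_zero]⟩
      have hc : c ≠ 0 := fun h => c3 ⟨h, by rw [hz4, mul_zero]⟩
      have ha : a ≠ 0 := fun h => c1 ⟨h, by rw [hz4, mul_zero]⟩
      subst hz4
      simp only [x1, x2, x3, z1, z2, z3, z4] at heq ⊢
      constructor
      · simp [mul_eq_zero, neg_eq_zero, inv_eq_zero, hb, hc, hz2, hz3]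
      · intro ht
        have hbe : b * e ≠ 0 := mul_ne_zero hb hz2
        field_simp at ht
        have had : a * d = 0 := by linear_combination heq + ht
        rcases mul_eq_zero.mp had with h | h
        · exact ha h
        · exact hz1 h
    · obtain ⟨⟨b, hb⟩, ⟨t, ht0, ht1⟩, ⟨d, hd⟩, ⟨e, he⟩, ⟨f, hf⟩⟩ := w
      dsimp only at *
      refine ⟨⟨⟨⟨by simp only [x1, x2, x3, z1, z2, z3, z4]; field_simp; ring, ?_,
        fun h => hb h.1, ?_, fun h => hd h.1, fun h => hd h.1, fun h => he h.1⟩,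
        hd⟩, he⟩, hf⟩
      · rintro ⟨h1, -⟩
        simp only [x1, x2, x3, z1, z2, z3, z4] at h1
        simp [mul_eq_zero, neg_eq_zero, inv_eq_zero, sub_eq_zero, hb, he, hd,
          Ne.symm ht1] at h1
      · rintro ⟨h1, -⟩
        simp only [x1, x2, x3, z1, z2, z3, z4] at h1
        simp [mul_eq_zero, neg_eq_zero, inv_eq_zero, hb, he, hf, ht0] at h1
    · intro v
      obtain ⟨⟨a, b, c, d, e, f, g⟩, hv⟩ := v
      apply Subtype.ext
      obtain ⟨⟨⟨⟨⟨heq, c1, c2, c3, d12, d13, d23⟩, hz1⟩, hz2⟩, hz3⟩, hz4⟩ := hv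
      dsimp only at *
      have hb : b ≠ 0 := fun h => c2 ⟨h, by rw [hz4, mul_zero]⟩
      have hc : c ≠ 0 := fun h => c3 ⟨h, by rw [hz4, mul_zero]⟩
      subst hz4
      simp only [x1, x2, x3, z1, z2, z3, z4] at heq ⊢
      have hbe : b * e ≠ 0 := mul_ne_zero hb hz2
      simp only [Prod.mk.injEq, true_and, and_true]
      constructor
      · have h1 : (1 : ZMod p) - (-(c * f) * (b * e)⁻¹) = (b * e + c * f) * (b * e)⁻¹ := by
          field_simp
          ring
        rw [h1]
        have h2 : b * e * ((b * e + c * f) * (b * e)⁻¹) = b * e + c * f := by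
          field_simp
        rw [h2]
        field_simp
        linear_combination -heq
      · field_simp
    · intro w
      obtain ⟨⟨b, hb⟩, ⟨t, ht0, ht1⟩, ⟨d, hd⟩, ⟨e, he⟩, ⟨f, hf⟩⟩ := w
      simp only [Prod.mk.injEq, Subtype.mk.injEq, true_and, and_true]
      simp only [x1, x2, x3, z1, z2, z3, z4]
      field_simp
  rw [Nat.card_congr e, Nat.card_prod, Nat.card_prod, Nat.card_prod, Nat.card_prod,
    cardN, cardTT]
  ring

lemma piece5 : Nat.card {v : V p //
    (((Full p v ∧ ¬ z1 p v = 0) ∧ ¬ z2 p v = 0) ∧ ¬ z3 p v = 0) ∧ ¬ z4 p v = 0} =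
    p ^ 2 * (p - 1) ^ 4 := by
  have e : {v : V p //
      (((Full p v ∧ ¬ z1 p v = 0) ∧ ¬ z2 p v = 0) ∧ ¬ z3 p v = 0) ∧ ¬ z4 p v = 0} ≃
      (ZMod p × ZMod p × N p × N p × N p × N p) := by
    refine ⟨fun v => (x2 p v.1, x3 p v.1, ⟨z1 p v.1, v.2.1.1.1.2⟩, ⟨z2 p v.1, v.2.1.1.2⟩,
        ⟨z3 p v.1, v.2.1.2⟩, ⟨z4 p v.1, v.2.2⟩),
      fun w => ⟨(-(w.1 * w.2.2.2.1.1 + w.2.1 * w.2.2.2.2.1.1) * (w.2.2.1.1)⁻¹, w.1, w.2.1,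
        w.2.2.1.1, w.2.2.2.1.1, w.2.2.2.2.1.1, w.2.2.2.2.2.1), ?_⟩, ?_, ?_⟩
    · obtain ⟨b, c, ⟨d, hd⟩, ⟨e, he⟩, ⟨f, hf⟩, ⟨g, hg⟩⟩ := w
      dsimp only at *
      refine ⟨⟨⟨⟨⟨by simp only [x1, x2, x3, z1, z2, z3, z4]; field_simp; ring, ?_, ?_, ?_,
        fun h => hd h.1, fun h => hd h.1, fun h => he h.1⟩, hd⟩, he⟩, hf⟩, hg⟩
      · rintro ⟨-, h2⟩
        simp [mul_eq_zero, he, hf, hg] at h2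
      · rintro ⟨-, h2⟩
        simp [mul_eq_zero, hd, hf, hg] at h2
      · rintro ⟨-, h2⟩
        simp [mul_eq_zero, hd, he, hg] at h2
    · intro v
      obtain ⟨⟨a, b, c, d, e, f, g⟩, hv⟩ := v
      apply Subtype.ext
      obtain ⟨⟨⟨⟨⟨heq, c1, c2, c3, d12, d13, d23⟩, hz1⟩, hz2⟩, hz3⟩, hz4⟩ := hv
      dsimp only at *
      simp only [Prod.mk.injEq, true_and, and_true]
      simp only [x1, x2, x3, z1, z2, z3, z4] at heq
      field_simp
      linear_combination -heq
    · intro w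
      obtain ⟨b, c, ⟨d, hd⟩, ⟨e, he⟩, ⟨f, hf⟩, ⟨g, hg⟩⟩ := w
      rfl
  rw [Nat.card_congr e, Nat.card_prod, Nat.card_prod, Nat.card_prod, Nat.card_prod,
    Nat.card_prod, Nat.card_zmod, cardN]
  ring

lemma key : Nat.card {v : V p // Full p v} = (p - 1) ^ 4 * (p ^ 2 + 4 * p + 1) := by
  haveI : NeZero p := ⟨(Fact.out : p.Prime).ne_zero⟩
  have s1 : Nat.card {v : V p // Full p v} =
      Nat.card {v : V p // Full p v ∧ z1 p v = 0} +
      Nat.card {v : V p // Full p v ∧ ¬ z1 p v = 0} := card_split _ _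
  have s2 : Nat.card {v : V p // Full p v ∧ ¬ z1 p v = 0} =
      Nat.card {v : V p // (Full p v ∧ ¬ z1 p v = 0) ∧ z2 p v = 0} +
      Nat.card {v : V p // (Full p v ∧ ¬ z1 p v = 0) ∧ ¬ z2 p v = 0} := card_split _ _
  have s3 : Nat.card {v : V p // (Full p v ∧ ¬ z1 p v = 0) ∧ ¬ z2 p v = 0} =
      Nat.card {v : V p // ((Full p v ∧ ¬ z1 p v = 0) ∧ ¬ z2 p v = 0) ∧ z3 p v = 0} +
      Nat.card {v : V p // ((Full p v ∧ ¬ z1 p v = 0) ∧ ¬ z2 p v = 0) ∧ ¬ z3 p v = 0} :=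
    card_split _ _
  have s4 : Nat.card {v : V p // ((Full p v ∧ ¬ z1 p v = 0) ∧ ¬ z2 p v = 0) ∧ ¬ z3 p v = 0} =
      Nat.card {v : V p //
        (((Full p v ∧ ¬ z1 p v = 0) ∧ ¬ z2 p v = 0) ∧ ¬ z3 p v = 0) ∧ z4 p v = 0} +
      Nat.card {v : V p //
        (((Full p v ∧ ¬ z1 p v = 0) ∧ ¬ z2 p v = 0) ∧ ¬ z3 p v = 0) ∧ ¬ z4 p v = 0} :=
    card_split _ _
  rw [s1, s2, s3, s4, piece1, piece2, piece3, piece4, piece5]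
  have h2 : 2 ≤ p := (Fact.out : p.Prime).two_le
  obtain ⟨m, rfl⟩ : ∃ m, p = m + 2 := ⟨p - 2, by omega⟩
  have e1 : (m + 2) ^ 2 - 1 = m ^ 2 + 4 * m + 3 := by
    have : (m + 2) ^ 2 = m ^ 2 + 4 * m + 4 := by ring
    omega
  have e2 : m + 2 - 1 = m + 1 := by omega
  have e3 : m + 2 - 2 = m := by omega
  rw [e1, e2, e3]
  ring

end S16

/-- The number of points of the torsor equation `x₁z₁ + x₂z₂ + x₃z₃ = 0` over `𝔽_p`
with the (mod `p` reductions of the) coprimality conditions.  Here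
`v = (x₁, x₂, x₃, z₁, z₂, z₃, z₄)`. -/
theorem statement16 (p : ℕ) (hp : p.Prime) :
    Nat.card {v : ZMod p × ZMod p × ZMod p × ZMod p × ZMod p × ZMod p × ZMod p |
        v.1 * v.2.2.2.1 + v.2.1 * v.2.2.2.2.1 + v.2.2.1 * v.2.2.2.2.2.1 = 0 ∧
        ¬(v.1 = 0 ∧ v.2.2.2.2.1 * v.2.2.2.2.2.1 * v.2.2.2.2.2.2 = 0) ∧
        ¬(v.2.1 = 0 ∧ v.2.2.2.1 * v.2.2.2.2.2.1 * v.2.2.2.2.2.2 = 0) ∧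
        ¬(v.2.2.1 = 0 ∧ v.2.2.2.1 * v.2.2.2.2.1 * v.2.2.2.2.2.2 = 0) ∧
        ¬(v.2.2.2.1 = 0 ∧ v.2.2.2.2.1 = 0) ∧
        ¬(v.2.2.2.1 = 0 ∧ v.2.2.2.2.2.1 = 0) ∧
        ¬(v.2.2.2.2.1 = 0 ∧ v.2.2.2.2.2.1 = 0)} =
      (p - 1) ^ 4 * (p ^ 2 + 4 * p + 1) := by
  haveI : Fact p.Prime := ⟨hp⟩
  exact S16.key p
end
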